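/- arXiv:1501.00678 — 8 statements merged into one kernel-verified Lean document; each statement's English description precedes it below -/
import Mathlib

section
/- For an odd prime p, the automorphism group of the extraspecial group of order p^3 and exponent p has order (p^2-1)(p^2-p)p^2. -/
section ExtraspecialAux

variable {p : ℕ} [hp : Fact p.Prime] {G : Type*} [Group G]

lemma es_pow_mod (hexp : Monoid.exponent G = p) (x : G) (n : ℕ) :
    x ^ n = x ^ (n % p) := by
  conv_lhs => rw [← Nat.mod_add_div n p, pow_add, pow_mul]
  rw [← hexp, Monoid.pow_exponent_eq_one, one_pow, mul_one]

lemma es_subgroup_card (hcard : Nat.card G = p ^ 3) (H : Subgroup G) :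
    Nat.card H = 1 ∨ Nat.card H = p ∨ Nat.card H = p ^ 2 ∨ Nat.card H = p ^ 3 := by
  have hdvd : Nat.card H ∣ p ^ 3 := hcard ▸ Subgroup.card_subgroup_dvd_card H
  obtain ⟨m, hm, h⟩ := (Nat.dvd_prime_pow hp.out).mp hdvd
  interval_cases m
  · exact Or.inl (by simpa using h)
  · exact Or.inr (Or.inl (by simpa using h))
  · exact Or.inr (Or.inr (Or.inl h))
  · exact Or.inr (Or.inr (Or.inr h))

lemma es_finite (hcard : Nat.card G = p ^ 3) : Finite G :=
  Nat.finite_of_card_ne_zero (by rw [hcard]; exact pow_ne_zero _ hp.out.ne_zero)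

lemma es_comm_of_card {H : Subgroup G} (hcard : Nat.card G = p ^ 3)
    (h : Nat.card H ≠ p ^ 3) : ∀ a b : H, a * b = b * a := by
  have : Finite G := es_finite hcard
  rcases es_subgroup_card hcard H with h1 | h1 | h1 | h1
  · have : Subsingleton H := Nat.card_eq_one_iff_unique.mp h1 |>.1
    intro a b; exact Subsingleton.elim _ _
  · have : IsCyclic H := isCyclic_of_prime_card h1
    exact fun a b => (IsCyclic.commGroup (α := H)).mul_comm a b
  · exact IsPGroup.commutative_of_card_eq_prime_sq h1
  · exact absurd h1 h

lemma es_noncomm_top (hcard : Nat.card G = p ^ 3) {H : Subgroup G} {x y : G}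
    (hx : x ∈ H) (hy : y ∈ H) (hxy : x * y ≠ y * x) : H = ⊤ := by
  have : Finite G := es_finite hcard
  have hc : Nat.card H = p ^ 3 := by
    by_contra h
    exact hxy (congrArg Subtype.val (es_comm_of_card hcard h ⟨x, hx⟩ ⟨y, hy⟩))
  exact Subgroup.eq_top_of_card_eq H (hc.trans hcard.symm)

lemma es_closure_top (hcard : Nat.card G = p ^ 3) {x y : G}
    (hxy : x * y ≠ y * x) : Subgroup.closure {x, y} = ⊤ :=
  es_noncomm_top hcard (Subgroup.subset_closure (by simp))
    (Subgroup.subset_closure (by simp)) hxy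

lemma es_center_card (hcard : Nat.card G = p ^ 3)
    (hnab : ¬ ∀ a b : G, a * b = b * a) : Nat.card (Subgroup.center G) = p := by
  have : Finite G := es_finite hcard
  push_neg at hnab
  obtain ⟨a, b, hab⟩ := hnab
  have hpg : IsPGroup p G := IsPGroup.of_card hcard
  have hnt : Nontrivial G := by
    rw [← Finite.one_lt_card_iff_nontrivial, hcard]
    exact Nat.one_lt_pow (by norm_num) hp.out.one_lt
  have h1 : 1 < Nat.card (Subgroup.center G) :=
    Finite.one_lt_card_iff_nontrivial.mpr hpg.center_nontrivial
  have hanc : a ∉ Subgroup.center G := fun h =>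
    hab ((Subgroup.mem_center_iff.mp h b).symm)
  have hbnc : b ∉ Subgroup.centralizer {a} := fun h =>
    hab (Subgroup.mem_centralizer_singleton_iff.mp h).symm
  have hcent_ne : Subgroup.centralizer ({a} : Set G) ≠ ⊤ := fun h =>
    hbnc (h ▸ Subgroup.mem_top b)
  rcases es_subgroup_card hcard (Subgroup.center G) with h | h | h | h
  · omega
  · exact h
  · -- center has card p^2 : centralizer of a strictly between, contradiction
    exfalso
    have hle : Subgroup.center G ≤ Subgroup.centralizer {a} :=
      Subgroup.center_le_centralizer {a}
    rcases es_subgroup_card hcard (Subgroup.centralizer {a}) with h2 | h2 | h2 | h2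
    · have := Subgroup.card_le_of_le hle
      rw [h, h2] at this
      nlinarith [hp.out.one_lt]
    · have := Subgroup.card_le_of_le hle
      rw [h, h2] at this
      nlinarith [hp.out.one_lt]
    · have : Subgroup.center G = Subgroup.centralizer {a} :=
        Subgroup.eq_of_le_of_card_ge hle (by rw [h, h2])
      exact hanc (this ▸ Subgroup.mem_centralizer_singleton_iff.mpr rfl)
    · exact hcent_ne (Subgroup.eq_top_of_card_eq _ (h2.trans hcard.symm))
  · exfalso
    refine hab ?_
    have : Subgroup.center G = ⊤ := Subgroup.eq_top_of_card_eq _ (h.trans hcard.symm)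
    exact (Subgroup.mem_center_iff.mp (this ▸ Subgroup.mem_top a) b).symm

lemma es_centralizer_card (hcard : Nat.card G = p ^ 3)
    (hnab : ¬ ∀ a b : G, a * b = b * a) {x y : G} (hxy : x * y ≠ y * x) :
    Nat.card (Subgroup.centralizer ({x} : Set G)) = p ^ 2 := by
  have : Finite G := es_finite hcard
  have hZ := es_center_card hcard hnab
  have hle : Subgroup.center G ≤ Subgroup.centralizer {x} :=
    Subgroup.center_le_centralizer {x}
  have hxnc : x ∉ Subgroup.center G := fun h =>
    hxy ((Subgroup.mem_center_iff.mp h y).symm)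
  have hyn : y ∉ Subgroup.centralizer ({x} : Set G) := fun h =>
    hxy (Subgroup.mem_centralizer_singleton_iff.mp h).symm
  have hcent_ne : Subgroup.centralizer ({x} : Set G) ≠ ⊤ := fun h =>
    hyn (h ▸ Subgroup.mem_top y)
  rcases es_subgroup_card hcard (Subgroup.centralizer {x}) with h2 | h2 | h2 | h2
  · have := Subgroup.card_le_of_le hle
    rw [hZ, h2] at this
    exact absurd this (by have := hp.out.one_lt; omega)
  · have : Subgroup.center G = Subgroup.centralizer {x} :=
      Subgroup.eq_of_le_of_card_ge hle (by rw [hZ, h2])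
    exact absurd (this ▸ Subgroup.mem_centralizer_singleton_iff.mpr rfl) hxnc
  · exact h2
  · exact absurd (Subgroup.eq_top_of_card_eq _ (h2.trans hcard.symm)) hcent_ne

lemma es_commutator_center (hcard : Nat.card G = p ^ 3)
    (hnab : ¬ ∀ a b : G, a * b = b * a) (a b : G) :
    b⁻¹ * a⁻¹ * b * a ∈ Subgroup.center G := by
  have : Finite G := es_finite hcard
  have hZ := es_center_card hcard hnab
  have hq : Nat.card (G ⧸ Subgroup.center G) = p ^ 2 := by
    have := Subgroup.card_eq_card_quotient_mul_card_subgroup (Subgroup.center G)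
    rw [hcard, hZ] at this
    have hp1 : 0 < p := hp.out.pos
    nlinarith [this]
  have hcomm := IsPGroup.commutative_of_card_eq_prime_sq hq
  rw [← QuotientGroup.eq_one_iff]
  have h1 := hcomm ((a : G ⧸ Subgroup.center G)) ((b : G ⧸ Subgroup.center G))
  simp only [QuotientGroup.mk_mul, QuotientGroup.mk_inv]
  rw [mul_assoc, ← h1]
  group

end ExtraspecialAux

section Swap
variable {G : Type*} [Group G]

lemma es_swap {x y z : G} (hyx : y * x = x * y * z) (hzc : ∀ g : G, Commute z g)
    (i j : ℕ) : y ^ j * x ^ i = x ^ i * y ^ j * z ^ (i * j) := by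
  have base : ∀ i : ℕ, y * x ^ i = x ^ i * y * z ^ i := by
    intro i
    induction i with
    | zero => simp
    | succ n ih =>
      calc y * x ^ (n + 1) = (y * x ^ n) * x := by rw [pow_succ]; group
        _ = x ^ n * y * (z ^ n * x) := by rw [ih]; group
        _ = x ^ n * y * (x * z ^ n) := by rw [((hzc x).pow_left n).eq]
        _ = x ^ n * (y * x) * z ^ n := by group
        _ = x ^ n * (x * y * z) * z ^ n := by rw [hyx]
        _ = x ^ n * x * y * (z * z ^ n) := by group
        _ = x ^ n * x * y * (z ^ n * z) := by rw [(hzc (z ^ n)).eq]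
        _ = x ^ (n + 1) * y * z ^ (n + 1) := by simp only [pow_succ, mul_assoc]
  induction j with
  | zero => simp
  | succ n ih =>
    calc y ^ (n + 1) * x ^ i = y ^ n * (y * x ^ i) := by rw [pow_succ]; group
      _ = y ^ n * (x ^ i * y * z ^ i) := by rw [base]
      _ = (y ^ n * x ^ i) * y * z ^ i := by group
      _ = (x ^ i * y ^ n * z ^ (i * n)) * y * z ^ i := by rw [ih]
      _ = x ^ i * y ^ n * (z ^ (i * n) * y) * z ^ i := by group
      _ = x ^ i * y ^ n * (y * z ^ (i * n)) * z ^ i := by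
          rw [((hzc y).pow_left (i * n)).eq]
      _ = x ^ i * (y ^ n * y) * (z ^ (i * n) * z ^ i) := by group
      _ = x ^ i * y ^ (n + 1) * z ^ (i * (n + 1)) := by
          rw [← pow_succ, ← pow_add, Nat.mul_succ]

end Swap

section Fmap

variable {p : ℕ} [hp : Fact p.Prime] {G : Type*} [Group G]

/-- Twisted multiplication on triples, matching the Heisenberg group. -/
def es_tmul (p : ℕ) (u v : ZMod p × ZMod p × ZMod p) : ZMod p × ZMod p × ZMod p :=
  (u.1 + v.1, u.2.1 + v.2.1, u.2.2 + v.2.2 + v.1 * u.2.1)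

/-- Parametrization of G by triples, given a pair of generators. -/
def es_fmap (x y : G) (t : ZMod p × ZMod p × ZMod p) : G :=
  x ^ t.1.val * y ^ t.2.1.val * (y⁻¹ * x⁻¹ * y * x) ^ t.2.2.val

lemma es_pow_val_add (hexp : Monoid.exponent G = p) (x : G) (i i' : ZMod p) :
    x ^ (i + i').val = x ^ i.val * x ^ i'.val := by
  haveI : NeZero p := ⟨hp.out.ne_zero⟩
  rw [ZMod.val_add, ← es_pow_mod hexp, pow_add]

lemma es_pow_val_mul (hexp : Monoid.exponent G = p) (x : G) (i i' : ZMod p) :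
    x ^ (i * i').val = x ^ (i.val * i'.val) := by
  haveI : NeZero p := ⟨hp.out.ne_zero⟩
  rw [ZMod.val_mul, ← es_pow_mod hexp]

lemma es_fmap_mul (hcard : Nat.card G = p ^ 3) (hexp : Monoid.exponent G = p)
    (hnab : ¬ ∀ a b : G, a * b = b * a) (x y : G)
    (u v : ZMod p × ZMod p × ZMod p) :
    es_fmap x y (es_tmul p u v) = es_fmap x y u * es_fmap x y v := by
  haveI : NeZero p := ⟨hp.out.ne_zero⟩
  set z := y⁻¹ * x⁻¹ * y * x with hz
  have hzmem : z ∈ Subgroup.center G := es_commutator_center hcard hnab x y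
  have hzc : ∀ g : G, Commute z g := fun g =>
    (Subgroup.mem_center_iff.mp hzmem g).symm
  have hyx : y * x = x * y * z := by rw [hz]; group
  obtain ⟨a, b, c⟩ := u
  obtain ⟨a', b', c'⟩ := v
  show x ^ (a + a').val * y ^ (b + b').val * z ^ (c + c' + a' * b).val =
    (x ^ a.val * y ^ b.val * z ^ c.val) * (x ^ a'.val * y ^ b'.val * z ^ c'.val)
  rw [es_pow_val_add hexp, es_pow_val_add hexp, es_pow_val_add hexp,
    es_pow_val_add hexp, es_pow_val_mul hexp]
  calc x ^ a.val * x ^ a'.val * (y ^ b.val * y ^ b'.val) *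
        (z ^ c.val * z ^ c'.val * z ^ (a'.val * b.val))
      = x ^ a.val * (x ^ a'.val * y ^ b.val * z ^ (a'.val * b.val)) *
        y ^ b'.val * z ^ c.val * z ^ c'.val := by
        simp only [mul_assoc]
        rw [((hzc (y ^ b'.val)).pow_left (a'.val * b.val)).left_comm]
        simp only [← pow_add]
        rw [show c.val + (c'.val + a'.val * b.val) =
          a'.val * b.val + (c.val + c'.val) from by omega]
    _ = x ^ a.val * (y ^ b.val * x ^ a'.val) * y ^ b'.val * z ^ c.val * z ^ c'.val := by
        rw [es_swap hyx hzc]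
    _ = (x ^ a.val * y ^ b.val * z ^ c.val) * (x ^ a'.val * y ^ b'.val * z ^ c'.val) := by
        simp only [mul_assoc]
        rw [((hzc (x ^ a'.val)).pow_left c.val).left_comm,
          ((hzc (y ^ b'.val)).pow_left c.val).left_comm]

end Fmap

section Bij

variable {p : ℕ} [hp : Fact p.Prime] {G : Type*} [Group G]

lemma es_fmap_x (x y : G) : es_fmap x y ((1 : ZMod p), 0, 0) = x := by
  haveI : Fact (1 < p) := ⟨hp.out.one_lt⟩
  simp [es_fmap, ZMod.val_one, ZMod.val_zero]

lemma es_fmap_y (x y : G) : es_fmap x y ((0 : ZMod p), 1, 0) = y := by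
  haveI : Fact (1 < p) := ⟨hp.out.one_lt⟩
  simp [es_fmap, ZMod.val_one, ZMod.val_zero]

lemma es_fmap_bijective (hcard : Nat.card G = p ^ 3) (hexp : Monoid.exponent G = p)
    (hnab : ¬ ∀ a b : G, a * b = b * a) {x y : G} (hxy : x * y ≠ y * x) :
    Function.Bijective (es_fmap (p := p) x y) := by
  haveI : NeZero p := ⟨hp.out.ne_zero⟩
  have : Finite G := es_finite hcard
  set H : Subgroup G :=
    { carrier := Set.range (es_fmap (p := p) x y)
      one_mem' := ⟨(0, 0, 0), by simp [es_fmap]⟩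
      mul_mem' := by
        rintro _ _ ⟨u, rfl⟩ ⟨v, rfl⟩
        exact ⟨es_tmul p u v, es_fmap_mul hcard hexp hnab x y u v⟩
      inv_mem' := by
        rintro _ ⟨u, rfl⟩
        refine ⟨(-u.1, -u.2.1, u.1 * u.2.1 - u.2.2), ?_⟩
        have ht : es_tmul p u (-u.1, -u.2.1, u.1 * u.2.1 - u.2.2) =
            ((0 : ZMod p), (0 : ZMod p), (0 : ZMod p)) := by
          simp only [es_tmul, Prod.mk.injEq]
          refine ⟨by ring, by ring, by ring⟩
        have h1 : es_fmap x y u * es_fmap x y (-u.1, -u.2.1, u.1 * u.2.1 - u.2.2) = 1 := by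
          rw [← es_fmap_mul hcard hexp hnab, ht]
          simp [es_fmap]
        exact eq_inv_of_mul_eq_one_right h1 } with hH
  have hsurj : Function.Surjective (es_fmap (p := p) x y) := by
    intro g
    have hxH : x ∈ H := ⟨((1 : ZMod p), 0, 0), es_fmap_x x y⟩
    have hyH : y ∈ H := ⟨((0 : ZMod p), 1, 0), es_fmap_y x y⟩
    have htop : Subgroup.closure {x, y} ≤ H :=
      (Subgroup.closure_le H).mpr (by simp [Set.insert_subset_iff, hxH, hyH])
    rw [es_closure_top hcard hxy] at htop
    exact htop (Subgroup.mem_top g)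
  refine (Nat.bijective_iff_surjective_and_card _).mpr ⟨hsurj, ?_⟩
  rw [hcard, Nat.card_prod, Nat.card_prod, Nat.card_zmod]
  ring

end Bij

section Aut

variable {p : ℕ} [hp : Fact p.Prime] {G : Type*} [Group G]

lemma es_aut_card (hcard : Nat.card G = p ^ 3) (hexp : Monoid.exponent G = p)
    (hnab : ¬ ∀ a b : G, a * b = b * a) :
    Nat.card (MulAut G) = Nat.card {q : G × G // q.1 * q.2 ≠ q.2 * q.1} := by
  have hnab' := hnab
  push_neg at hnab'
  obtain ⟨a, b, hab⟩ := hnab'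
  let e1 : (ZMod p × ZMod p × ZMod p) ≃ G :=
    Equiv.ofBijective _ (es_fmap_bijective hcard hexp hnab hab)
  have he1 : ∀ t, e1 t = es_fmap a b t := fun t => rfl
  let Φ : MulAut G → {q : G × G // q.1 * q.2 ≠ q.2 * q.1} := fun φ =>
    ⟨(φ a, φ b), fun h => hab (φ.injective (by simpa [map_mul] using h))⟩
  have hΦinj : Function.Injective Φ := by
    intro φ ψ h
    have ha : φ a = ψ a := congrArg (fun q => q.1.1) h
    have hb : φ b = ψ b := congrArg (fun q => q.1.2) h
    have : ∀ g : G, φ g = ψ g := by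
      intro g
      set K : Subgroup G :=
        { carrier := {g | φ g = ψ g}
          one_mem' := by simp
          mul_mem' := by
            intro u v hu hv
            simp only [Set.mem_setOf_eq, map_mul] at *
            rw [hu, hv]
          inv_mem' := by
            intro u hu
            simp only [Set.mem_setOf_eq, map_inv] at *
            rw [hu] }
      have hle : Subgroup.closure {a, b} ≤ K :=
        (Subgroup.closure_le K).mpr (by
          intro t ht
          rcases ht with rfl | rfl
          · exact ha
          · exact hb)
      rw [es_closure_top hcard hab] at hle
      exact hle (Subgroup.mem_top g)
    exact MulEquiv.ext this
  have hΦsurj : Function.Surjective Φ := by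
    rintro ⟨⟨x, y⟩, hxy⟩
    let e2 : (ZMod p × ZMod p × ZMod p) ≃ G :=
      Equiv.ofBijective _ (es_fmap_bijective hcard hexp hnab hxy)
    have he2 : ∀ t, e2 t = es_fmap x y t := fun t => rfl
    have key : ∀ g h : G, e1.symm (g * h) = es_tmul p (e1.symm g) (e1.symm h) := by
      intro g h
      apply e1.injective
      rw [Equiv.apply_symm_apply, he1, es_fmap_mul hcard hexp hnab]
      show g * h = e1 (e1.symm g) * e1 (e1.symm h)
      rw [Equiv.apply_symm_apply, Equiv.apply_symm_apply]
    refine ⟨{ toEquiv := e1.symm.trans e2, map_mul' := ?_ }, ?_⟩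
    · intro g h
      show e2 (e1.symm (g * h)) = e2 (e1.symm g) * e2 (e1.symm h)
      rw [key, he2, es_fmap_mul hcard hexp hnab]
      rfl
    · apply Subtype.ext
      have h100 : e1.symm a = ((1 : ZMod p), 0, 0) := by
        apply e1.injective
        rw [Equiv.apply_symm_apply, he1, es_fmap_x]
      have h010 : e1.symm b = ((0 : ZMod p), 1, 0) := by
        apply e1.injective
        rw [Equiv.apply_symm_apply, he1, es_fmap_y]
      show (e2 (e1.symm a), e2 (e1.symm b)) = (x, y)
      rw [h100, h010, he2, he2, es_fmap_x, es_fmap_y]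
  exact Nat.card_eq_of_bijective Φ ⟨hΦinj, hΦsurj⟩

end Aut

section Count

variable {p : ℕ} [hp : Fact p.Prime] {G : Type*} [Group G]

lemma es_pair_count (hcard : Nat.card G = p ^ 3)
    (hnab : ¬ ∀ a b : G, a * b = b * a) :
    Nat.card {q : G × G // q.1 * q.2 ≠ q.2 * q.1} = (p ^ 3 - p) * (p ^ 3 - p ^ 2) := by
  have : Finite G := es_finite hcard
  classical
  cases nonempty_fintype G
  have h1 : Nat.card {q : G × G // q.1 * q.2 ≠ q.2 * q.1}
      = ∑ x : G, Nat.card {y : G // x * y ≠ y * x} := by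
    rw [Nat.card_congr (Equiv.subtypeProdEquivSigmaSubtype (fun x y : G => x * y ≠ y * x)),
      Nat.card_eq_fintype_card, Fintype.card_sigma]
    simp [Nat.card_eq_fintype_card]
  have h2 : ∀ x : G, Nat.card {y : G // x * y ≠ y * x} =
      if x ∈ Subgroup.center G then 0 else p ^ 3 - p ^ 2 := by
    intro x
    by_cases hx : x ∈ Subgroup.center G
    · simp only [hx, if_true]
      have : IsEmpty {y : G // x * y ≠ y * x} :=
        ⟨fun ⟨y, hy⟩ => hy (Subgroup.mem_center_iff.mp hx y).symm⟩
      exact Nat.card_of_isEmpty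
    · simp only [hx, if_false]
      rw [Subgroup.mem_center_iff] at hx
      push_neg at hx
      obtain ⟨y0, hy0⟩ := hx
      have hxy0 : x * y0 ≠ y0 * x := fun h => hy0 h.symm
      have hcent : Nat.card (Subgroup.centralizer ({x} : Set G)) = p ^ 2 :=
        es_centralizer_card hcard hnab hxy0
      have hcompl : Fintype.card {y : G // ¬ (x * y = y * x)} =
          Fintype.card G - Fintype.card {y : G // x * y = y * x} :=
        Fintype.card_subtype_compl _
      have hc1 : Fintype.card {y : G // x * y = y * x} = p ^ 2 := by
        rw [← Nat.card_eq_fintype_card, ← hcent]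
        exact Nat.card_congr (Equiv.subtypeEquivRight (fun y => by
          simp [Subgroup.mem_centralizer_singleton_iff, eq_comm]))
      rw [Nat.card_eq_fintype_card]
      calc Fintype.card {y : G // x * y ≠ y * x}
          = Fintype.card G - Fintype.card {y : G // x * y = y * x} := hcompl
        _ = p ^ 3 - p ^ 2 := by rw [hc1, ← Nat.card_eq_fintype_card, hcard]
  rw [h1]
  simp only [h2]
  rw [Finset.sum_ite, Finset.sum_const, Finset.sum_const]
  have hcf : (Finset.univ.filter (fun x : G => x ∈ Subgroup.center G)).card = p := by
    rw [← Fintype.card_subtype, ← Nat.card_eq_fintype_card]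
    exact es_center_card hcard hnab
  have hcnf : (Finset.univ.filter (fun x : G => ¬ x ∈ Subgroup.center G)).card
      = p ^ 3 - p := by
    have := Finset.card_filter_add_card_filter_not
      (s := (Finset.univ : Finset G)) (p := fun x : G => x ∈ Subgroup.center G)
    rw [hcf, Finset.card_univ, ← Nat.card_eq_fintype_card, hcard] at this
    omega
  rw [hcnf]
  simp [mul_comm]

end Count

/-- The automorphism group of the extraspecial group of order p^3 and exponent p
has order (p^2-1)(p^2-p)p^2. -/
theorem stmt_1 (p : ℕ) [Fact p.Prime] (hp : Odd p)
    (G : Type*) [Group G]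
    (hcard : Nat.card G = p ^ 3)
    (hexp : Monoid.exponent G = p)
    (hnab : ¬ ∀ a b : G, a * b = b * a) :
    (Nat.card (MulAut G) : ℤ) = (p ^ 2 - 1) * (p ^ 2 - p) * p ^ 2 := by
  rw [es_aut_card hcard hexp hnab, es_pair_count hcard hnab]
  have h1 : p ≤ p ^ 3 := Nat.le_self_pow (by norm_num) p
  have h2 : p ^ 2 ≤ p ^ 3 := Nat.pow_le_pow_right (Fact.out : p.Prime).pos (by norm_num)
  push_cast [Nat.cast_sub h1, Nat.cast_sub h2]
  ring
end

section
/- For an odd prime p, the direct product of the extraspecial group of order p^3 and exponent p with a cyclic group of order p has automorphism group of order (p-1)(p^2-1)(p^2-p)p^5. -/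
open Subgroup

section PRE
@[ext] structure G4 (p : ℕ) where
  a : ZMod p
  b : ZMod p
  c : ZMod p
  d : ZMod p

namespace G4
variable {p : ℕ}
instance : Mul (G4 p) := ⟨fun g h => ⟨g.a + h.a, g.b + h.b, g.c + h.c + g.a * h.b, g.d + h.d⟩⟩
instance : One (G4 p) := ⟨⟨0, 0, 0, 0⟩⟩
instance : Inv (G4 p) := ⟨fun g => ⟨-g.a, -g.b, g.a * g.b - g.c, -g.d⟩⟩
@[simp] lemma mul_a (g h : G4 p) : (g * h).a = g.a + h.a := rfl
@[simp] lemma mul_b (g h : G4 p) : (g * h).b = g.b + h.b := rfl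
@[simp] lemma mul_c (g h : G4 p) : (g * h).c = g.c + h.c + g.a * h.b := rfl
@[simp] lemma mul_d (g h : G4 p) : (g * h).d = g.d + h.d := rfl
@[simp] lemma one_a : (1 : G4 p).a = 0 := rfl
@[simp] lemma one_b : (1 : G4 p).b = 0 := rfl
@[simp] lemma one_c : (1 : G4 p).c = 0 := rfl
@[simp] lemma one_d : (1 : G4 p).d = 0 := rfl
@[simp] lemma inv_a (g : G4 p) : (g⁻¹).a = -g.a := rfl
@[simp] lemma inv_b (g : G4 p) : (g⁻¹).b = -g.b := rfl
@[simp] lemma inv_c (g : G4 p) : (g⁻¹).c = g.a * g.b - g.c := rfl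
@[simp] lemma inv_d (g : G4 p) : (g⁻¹).d = -g.d := rfl
instance : Group (G4 p) where
  mul_assoc g h k := by ext <;> simp <;> ring
  one_mul g := by ext <;> simp
  mul_one g := by ext <;> simp
  inv_mul_cancel g := by ext <;> simp
def prodEquiv : G4 p ≃ (ZMod p × ZMod p × ZMod p × ZMod p) where
  toFun g := (g.a, g.b, g.c, g.d)
  invFun x := ⟨x.1, x.2.1, x.2.2.1, x.2.2.2⟩
  left_inv _ := rfl
  right_inv _ := rfl
instance [NeZero p] : Finite (G4 p) := Finite.of_equiv _ prodEquiv.symm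
lemma card_g4 [NeZero p] : Nat.card (G4 p) = p ^ 4 := by
  rw [Nat.card_congr prodEquiv]; simp [Nat.card_prod, Nat.card_zmod]; ring
end G4

noncomputable def qf (p : ℕ) (t : ZMod p) : ZMod p := t * (t - 1) * (2 : ZMod p)⁻¹
variable {p : ℕ} [Fact p.Prime]
lemma qf_add (h2 : (2 : ZMod p) ≠ 0) (s t : ZMod p) :
    qf p (s + t) = qf p s + qf p t + s * t := by
  unfold qf; field_simp; ring
@[simp] lemma qf_zero : qf p 0 = 0 := by unfold qf; ring
@[simp] lemma qf_one : qf p 1 = 0 := by unfold qf; ring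
end PRE

namespace G4
variable {p : ℕ} [Fact p.Prime]

lemma pow_eq (h2 : (2 : ZMod p) ≠ 0) (g : G4 p) (n : ℕ) :
    g ^ n = ⟨n * g.a, n * g.b, n * g.c + qf p n * g.a * g.b, n * g.d⟩ := by
  induction n with
  | zero => ext <;> simp
  | succ n ih =>
      rw [pow_succ, ih]
      ext <;> push_cast [qf_add h2, qf_one] <;> simp <;> ring

/-- The explicit candidate automorphism determined by ten parameters. -/
noncomputable def rawMap (α β γ δ u1 u2 v1 v2 s1 s2 : ZMod p) (g : G4 p) : G4 p :=
  ⟨g.a * α + g.b * γ, g.a * β + g.b * δ,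
    g.a * u1 + g.b * v1 + qf p g.a * α * β + qf p g.b * γ * δ + g.a * g.b * β * γ
      + g.c * (α * δ - β * γ) + g.d * s1,
    g.a * u2 + g.b * v2 + g.d * s2⟩

noncomputable def rawHom (h2 : (2 : ZMod p) ≠ 0) (α β γ δ u1 u2 v1 v2 s1 s2 : ZMod p) :
    G4 p →* G4 p where
  toFun := rawMap α β γ δ u1 u2 v1 v2 s1 s2
  map_one' := by unfold rawMap; ext <;> simp
  map_mul' g h := by
    unfold rawMap
    ext <;> simp <;> try ring
    linear_combination (α * β) * qf_add h2 g.a h.a + (γ * δ) * qf_add h2 g.b h.b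

lemma rawHom_injective (h2 : (2 : ZMod p) ≠ 0) {α β γ δ u1 u2 v1 v2 s1 s2 : ZMod p}
    (hD : α * δ - β * γ ≠ 0) (hs : s2 ≠ 0) :
    Function.Injective (rawHom h2 α β γ δ u1 u2 v1 v2 s1 s2) := by
  rw [injective_iff_map_eq_one]
  intro g hg
  have h1 : g.a * α + g.b * γ = 0 := congrArg G4.a hg
  have h2' : g.a * β + g.b * δ = 0 := congrArg G4.b hg
  have ha : g.a = 0 := by
    have : g.a * (α * δ - β * γ) = 0 := by linear_combination δ * h1 - γ * h2'
    rcases mul_eq_zero.1 this with h | h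
    · exact h
    · exact absurd h hD
  have hb : g.b = 0 := by
    have : g.b * (α * δ - β * γ) = 0 := by linear_combination α * h2' - β * h1
    rcases mul_eq_zero.1 this with h | h
    · exact h
    · exact absurd h hD
  have hd : g.d = 0 := by
    have h4 : g.a * u2 + g.b * v2 + g.d * s2 = 0 := congrArg G4.d hg
    rw [ha, hb] at h4
    simpa [hs] using h4
  have hc : g.c = 0 := by
    have h3 := congrArg G4.c hg
    simp only [rawHom, rawMap, MonoidHom.coe_mk, OneHom.coe_mk, one_c, ha, hb, hd] at h3
    simp only [zero_mul, qf_zero, add_zero, zero_add, mul_zero] at h3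
    rcases mul_eq_zero.1 h3 with h | h
    · exact h
    · exact absurd h hD
  ext <;> simp [ha, hb, hc, hd]

end G4

namespace G4
variable {p : ℕ} [Fact p.Prime]

/-- Parameter space for automorphisms of `G4 p`. -/
abbrev Par (p : ℕ) :=
  GL (Fin 2) (ZMod p) × (ZMod p × ZMod p) × (ZMod p × ZMod p) × ZMod p × (ZMod p)ˣ

noncomputable def F (h2 : (2 : ZMod p) ≠ 0) (P : Par p) : MulAut (G4 p) := by
  refine MulEquiv.ofBijective
    (rawHom h2 (P.1 0 0) (P.1 0 1) (P.1 1 0) (P.1 1 1)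
      P.2.1.1 P.2.1.2 P.2.2.1.1 P.2.2.1.2 P.2.2.2.1 (P.2.2.2.2 : (ZMod p)ˣ)) ?_
  rw [← Finite.injective_iff_bijective]
  apply rawHom_injective
  · have hu : IsUnit ((P.1 : Matrix (Fin 2) (Fin 2) (ZMod p)).det) :=
      IsUnit.of_mul_eq_one ((P.1⁻¹ : GL (Fin 2) (ZMod p)) : Matrix (Fin 2) (Fin 2) (ZMod p)).det
        (by rw [← Matrix.det_mul, Units.mul_inv, Matrix.det_one])
    rw [Matrix.det_fin_two] at hu
    exact isUnit_iff_ne_zero.mp hu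
  · exact (P.2.2.2.2 : (ZMod p)ˣ).ne_zero

lemma F_apply (h2 : (2 : ZMod p) ≠ 0) (P : Par p) (g : G4 p) :
    F h2 P g = rawMap (P.1 0 0) (P.1 0 1) (P.1 1 0) (P.1 1 1)
      P.2.1.1 P.2.1.2 P.2.2.1.1 P.2.2.1.2 P.2.2.2.1 (P.2.2.2.2 : (ZMod p)ˣ) g := rfl

end G4

namespace G4
variable {p : ℕ} [Fact p.Prime]

def Xg : G4 p := ⟨1, 0, 0, 0⟩
def Yg : G4 p := ⟨0, 1, 0, 0⟩
def Wg : G4 p := ⟨0, 0, 1, 0⟩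
def Tg : G4 p := ⟨0, 0, 0, 1⟩

lemma decomp (h2 : (2 : ZMod p) ≠ 0) (g : G4 p) :
    g = Yg ^ g.b.val * Xg ^ g.a.val * Wg ^ g.c.val * Tg ^ g.d.val := by
  ext <;>
    simp [pow_eq h2, Xg, Yg, Wg, Tg, ZMod.natCast_val, ZMod.cast_id]

lemma F_injective (h2 : (2 : ZMod p) ≠ 0) : Function.Injective (F (p := p) h2) := by
  intro P P' h
  obtain ⟨M, ⟨u1, u2⟩, ⟨v1, v2⟩, s1, s2⟩ := P
  obtain ⟨M', ⟨u1', u2'⟩, ⟨v1', v2'⟩, s1', s2'⟩ := P'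
  have hX := congrArg (fun ψ : MulAut (G4 p) => ψ Xg) h
  have hY := congrArg (fun ψ : MulAut (G4 p) => ψ Yg) h
  have hT := congrArg (fun ψ : MulAut (G4 p) => ψ Tg) h
  simp only [F_apply, rawMap, Xg, Yg, Tg, qf_one, qf_zero] at hX hY hT
  rw [G4.mk.injEq] at hX hY hT
  obtain ⟨e1, e2, e3, e4⟩ := hX
  obtain ⟨f1, f2, f3, f4⟩ := hY
  obtain ⟨t1, t2, t3, t4⟩ := hT
  simp only [one_mul, zero_mul, mul_one, mul_zero, add_zero, zero_add] at e1 e2 e3 e4 f1 f2 f3 f4 t1 t2 t3 t4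
  refine Prod.ext ?_ (Prod.ext ?_ (Prod.ext ?_ (Prod.ext ?_ ?_)))
  · exact Units.ext (Matrix.ext fun i j => by fin_cases i <;> fin_cases j <;> assumption)
  · exact Prod.ext e3 e4
  · exact Prod.ext f3 f4
  · exact t3
  · exact Units.ext t4

end G4

namespace G4
variable {p : ℕ} [Fact p.Prime]

@[simp] lemma coe_mkOfDetNeZero {K : Type*} [Field K] (M : Matrix (Fin 2) (Fin 2) K)
    (h : M.det ≠ 0) :
    ((Matrix.GeneralLinearGroup.mkOfDetNeZero M h) : Matrix (Fin 2) (Fin 2) K) = M := rfl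

@[simp] lemma coe_glmk' {K : Type*} [Field K] (M : Matrix (Fin 2) (Fin 2) K)
    (h : Invertible M.det) :
    ((Matrix.GeneralLinearGroup.mk' M h) : Matrix (Fin 2) (Fin 2) K) = M := rfl

lemma F_surjective (h2 : (2 : ZMod p) ≠ 0) : Function.Surjective (F (p := p) h2) := by
  haveI : Fact (1 < p) := ⟨(Fact.out : p.Prime).one_lt⟩
  intro ψ
  -- the images of the generators
  set A := ψ Xg with hA
  set B := ψ Yg with hB
  set C := ψ Tg with hC
  -- value of ψ on Wg
  have hXY : (Xg : G4 p) * Yg = Yg * Xg * Wg := by ext <;> simp [Xg, Yg, Wg]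
  have e1 : A * B = B * A * ψ Wg := by rw [hA, hB, ← map_mul, ← map_mul, ← map_mul, hXY]
  have hW : ψ Wg = ⟨0, 0, A.a * B.b - A.b * B.a, 0⟩ := by
    have h3 : ψ Wg = (B * A)⁻¹ * (A * B) := by rw [e1]; group
    rw [h3]; ext <;> simp <;> ring
  have hWne : (Wg : G4 p) ≠ 1 := by
    intro h
    have hc := congrArg G4.c h
    simp [Wg] at hc
  have hD : A.a * B.b - A.b * B.a ≠ 0 := by
    intro h0
    apply hWne
    apply ψ.injective
    rw [hW, map_one, h0]; rfl
  -- ψ Tg is central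
  have hTg : ∀ g : G4 p, (Tg : G4 p) * g = g * Tg := by
    intro g; ext <;> simp [Tg, add_comm]
  have hcomm : ∀ h : G4 p, C * h = h * C := by
    intro h
    have := congrArg ψ (hTg (ψ.symm h))
    simpa [map_mul, hC] using this
  have hCb : C.b = 0 := by
    have := congrArg G4.c (hcomm Xg)
    simpa [Xg] using this
  have hCa : C.a = 0 := by
    have := congrArg G4.c (hcomm Yg)
    simpa [Yg] using this
  have hCd : C.d ≠ 0 := by
    intro h0
    have key : ψ (Wg ^ ((C.c * (A.a * B.b - A.b * B.a)⁻¹).val)) = ψ Tg := by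
      rw [map_pow, hW, pow_eq h2, ← hC]
      ext <;> simp [hCa, hCb, h0, ZMod.natCast_val, ZMod.cast_id] <;> field_simp
    have := ψ.injective key
    have hd := congrArg G4.d this
    rw [pow_eq h2] at hd
    simp [Wg, Tg] at hd
  -- assemble the parameter
  refine ⟨⟨Matrix.GeneralLinearGroup.mkOfDetNeZero !![A.a, A.b; B.a, B.b] ?_,
    (A.c, A.d), (B.c, B.d), C.c, Units.mk0 C.d hCd⟩, ?_⟩
  · rw [Matrix.det_fin_two_of]; exact hD
  · apply MulEquiv.ext
    intro g
    conv_rhs => rw [decomp h2 g]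
    rw [map_mul, map_mul, map_mul, map_pow, map_pow, map_pow, map_pow, ← hA, ← hB, ← hC, hW]
    rw [pow_eq h2, pow_eq h2, pow_eq h2, pow_eq h2]
    rw [F_apply]
    unfold rawMap
    ext <;>
      simp [Xg, Yg, Wg, Tg, hCa, hCb,
        ZMod.natCast_val, ZMod.cast_id] <;>
      ring

end G4

namespace G4
variable {p : ℕ} [Fact p.Prime]

lemma card_mulAut (h2 : (2 : ZMod p) ≠ 0) :
    Nat.card (MulAut (G4 p)) = (p ^ 2 - 1) * (p ^ 2 - p) * (p * p) * (p * p) * (p * (p - 1)) := by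
  rw [← Nat.card_congr (Equiv.ofBijective (F (p := p) h2) ⟨F_injective h2, F_surjective h2⟩)]
  have hGL : Nat.card (GL (Fin 2) (ZMod p)) = (p ^ 2 - 1) * (p ^ 2 - p) := by
    rw [Matrix.card_GL_field, Fin.prod_univ_two]
    simp [ZMod.card]
  have hu : Nat.card (ZMod p)ˣ = p - 1 := by
    rw [Nat.card_eq_fintype_card, ZMod.card_units]
  simp only [Nat.card_prod, Nat.card_zmod]
  rw [hGL, hu]
  ring

end G4

lemma pow_congr_mod {G : Type*} [Group G] {g : G} {p : ℕ} (hg : g ^ p = 1) {s t : ℕ}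
    (h : s ≡ t [MOD p]) : g ^ s = g ^ t := by
  rw [pow_eq_pow_mod s hg, pow_eq_pow_mod t hg, h]

section PartA

variable {p : ℕ} [Fact p.Prime] {E : Type*} [Group E]

lemma val_add_modeq (a b : ZMod p) : (a + b).val ≡ a.val + b.val [MOD p] := by
  rw [ZMod.val_add]
  exact Nat.mod_modEq _ _

lemma val_c_modeq (c c' a b' : ZMod p) :
    (c + c' + a * b').val ≡ c.val + c'.val + a.val * b'.val [MOD p] := by
  calc (c + c' + a * b').val ≡ (c + c').val + (a * b').val [MOD p] := val_add_modeq _ _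
    _ ≡ c.val + c'.val + a.val * b'.val [MOD p] := by
        refine Nat.ModEq.add (val_add_modeq _ _) ?_
        rw [ZMod.val_mul]
        exact Nat.mod_modEq _ _

lemma exists_iso (hp : Odd p) (hcard : Nat.card E = p ^ 3) (hexp : Monoid.exponent E = p)
    (hnab : ¬ ∀ a b : E, a * b = b * a) :
    Nonempty (G4 p ≃* E × Multiplicative (ZMod p)) := by
  have hprime : p.Prime := Fact.out
  haveI : Finite E := Nat.finite_of_card_ne_zero (by rw [hcard]; exact (pow_pos hprime.pos 3).ne')
  push_neg at hnab
  obtain ⟨x, y, hxy⟩ := hnab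
  haveI : Nontrivial E := ⟨x * y, y * x, hxy⟩
  have pord : ∀ g : E, g ^ p = 1 := fun g => hexp ▸ Monoid.pow_exponent_eq_one g
  set Z := Subgroup.center E with hZ
  have hpE : IsPGroup p E := IsPGroup.of_card hcard
  -- the center has order p
  have hZcard : Nat.card Z = p := by
    have hdvd : Nat.card Z ∣ p ^ 3 := hcard ▸ Subgroup.card_subgroup_dvd_card Z
    obtain ⟨k, hk, hck⟩ := (Nat.dvd_prime_pow hprime).mp hdvd
    haveI := hpE.center_nontrivial
    have hk0 : k ≠ 0 := by
      rintro rfl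
      rw [pow_zero] at hck
      have h1 : (1 : ℕ) < Nat.card Z := Finite.one_lt_card
      omega
    have hquot : Nat.card (E ⧸ Z) * Nat.card Z = p ^ 3 := by
      rw [← hcard, ← Subgroup.card_eq_card_quotient_mul_card_subgroup Z]
    interval_cases k
    · exact absurd rfl hk0
    · simpa using hck
    · -- k = 2 : quotient has order p, cyclic, so E abelian; contradiction
      exfalso
      rw [hck] at hquot
      have hq : Nat.card (E ⧸ Z) = p := by
        have hp3 : p ^ 3 = p * p ^ 2 := by ring
        have hp2 : p ^ 2 = p ^ 2 := rfl
        rw [hp3] at hquot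
        exact Nat.eq_of_mul_eq_mul_right (pow_pos hprime.pos 2) hquot
      haveI : IsCyclic (E ⧸ Z) := isCyclic_of_prime_card hq
      exact hxy (commutative_of_cyclic_center_quotient (QuotientGroup.mk' Z)
        (by rw [QuotientGroup.ker_mk']) x y)
    · -- k = 3 : E is abelian; contradiction
      exfalso
      have : Z = ⊤ := by
        apply Subgroup.eq_top_of_card_eq
        rw [hck, hcard]
      exact hxy ((Subgroup.mem_center_iff.mp (this ▸ Subgroup.mem_top x : x ∈ Z)) y).symm
  -- the quotient by the center has order p^2 and is commutative
  have hQcard : Nat.card (E ⧸ Z) = p ^ 2 := by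
    have hquot : Nat.card (E ⧸ Z) * Nat.card Z = p ^ 3 := by
      rw [← hcard, ← Subgroup.card_eq_card_quotient_mul_card_subgroup Z]
    rw [hZcard] at hquot
    have hp3 : p ^ 3 = p ^ 2 * p := by ring
    rw [hp3] at hquot
    exact Nat.eq_of_mul_eq_mul_right hprime.pos hquot
  have hQcomm : ∀ a b : E ⧸ Z, a * b = b * a :=
    IsPGroup.commutative_of_card_eq_prime_sq hQcard
  -- the commutator w
  set w : E := x * y * x⁻¹ * y⁻¹ with hw
  have hw1 : w ≠ 1 := by
    intro h
    apply hxy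
    have : x * y * x⁻¹ * y⁻¹ * (y * x) = 1 * (y * x) := by rw [← hw, h]
    simpa [mul_assoc] using this
  have hwZ : w ∈ Z := by
    have h := hQcomm (QuotientGroup.mk' Z x) (QuotientGroup.mk' Z y)
    rw [← QuotientGroup.ker_mk' Z, MonoidHom.mem_ker, hw]
    simp only [map_mul, map_inv]
    rw [h]
    group
  have hcom : ∀ (k : ℕ) (g : E), Commute (w ^ k) g := fun k g =>
    ((Subgroup.mem_center_iff.mp (Subgroup.pow_mem Z hwZ k)) g).symm
  -- basic commutation relation
  have hxyw : x * y = w * (y * x) := by rw [hw]; group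
  have F1a : ∀ a : ℕ, x ^ a * y = w ^ a * (y * x ^ a) := by
    intro a
    induction a with
    | zero => simp
    | succ a ih =>
        calc x ^ (a + 1) * y = x * (x ^ a * y) := by rw [pow_succ']; group
          _ = x * (w ^ a * (y * x ^ a)) := by rw [ih]
          _ = w ^ a * (x * y * x ^ a) := by
              rw [← mul_assoc, ← ((hcom a x).eq), mul_assoc]
              group
          _ = w ^ a * ((w * (y * x)) * x ^ a) := by rw [hxyw]
          _ = w ^ (a + 1) * (y * x ^ (a + 1)) := by
              rw [pow_succ, pow_succ']
              group
  have F1 : ∀ a b : ℕ, x ^ a * y ^ b = w ^ (a * b) * (y ^ b * x ^ a) := by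
    intro a b
    induction b with
    | zero => simp
    | succ b ih =>
        calc x ^ a * y ^ (b + 1) = (x ^ a * y ^ b) * y := by rw [pow_succ]; group
          _ = w ^ (a * b) * (y ^ b * (x ^ a * y)) := by rw [ih]; group
          _ = w ^ (a * b) * (y ^ b * (w ^ a * (y * x ^ a))) := by rw [F1a]
          _ = w ^ (a * b) * (w ^ a * (y ^ b * (y * x ^ a))) := by
              rw [show y ^ b * (w ^ a * (y * x ^ a)) = w ^ a * (y ^ b * (y * x ^ a)) from
                ((hcom a (y ^ b)).symm.left_comm _)]
          _ = w ^ (a * (b + 1)) * (y ^ (b + 1) * x ^ a) := by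
              rw [show a * (b + 1) = a * b + a by ring, pow_add, pow_succ']
              group
  -- normal form multiplication
  have key : ∀ b1 a1 c1 b2 a2 c2 : ℕ,
      (y ^ b1 * x ^ a1 * w ^ c1) * (y ^ b2 * x ^ a2 * w ^ c2) =
        y ^ (b1 + b2) * x ^ (a1 + a2) * w ^ (c1 + c2 + a1 * b2) := by
    intro b1 a1 c1 b2 a2 c2
    have t1 : y ^ b1 * x ^ a1 * w ^ c1 = w ^ c1 * (y ^ b1 * x ^ a1) :=
      ((hcom c1 (y ^ b1 * x ^ a1)).eq).symm
    have t2 : y ^ b2 * x ^ a2 * w ^ c2 = w ^ c2 * (y ^ b2 * x ^ a2) :=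
      ((hcom c2 (y ^ b2 * x ^ a2)).eq).symm
    rw [t1, t2, Commute.mul_mul_mul_comm ((hcom c2 (y ^ b1 * x ^ a1)).symm)]
    have inner : (y ^ b1 * x ^ a1) * (y ^ b2 * x ^ a2) =
        w ^ (a1 * b2) * (y ^ (b1 + b2) * x ^ (a1 + a2)) := by
      calc (y ^ b1 * x ^ a1) * (y ^ b2 * x ^ a2)
          = y ^ b1 * ((x ^ a1 * y ^ b2) * x ^ a2) := by group
        _ = y ^ b1 * ((w ^ (a1 * b2) * (y ^ b2 * x ^ a1)) * x ^ a2) := by rw [F1]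
        _ = w ^ (a1 * b2) * (y ^ (b1 + b2) * x ^ (a1 + a2)) := by
            rw [show y ^ b1 * ((w ^ (a1 * b2) * (y ^ b2 * x ^ a1)) * x ^ a2) =
              w ^ (a1 * b2) * (y ^ b1 * ((y ^ b2 * x ^ a1) * x ^ a2)) from by
                rw [mul_assoc (w ^ (a1 * b2)), ((hcom (a1 * b2) (y ^ b1)).symm.left_comm _)]]
            rw [pow_add, pow_add]
            group
    rw [inner, ← pow_add, ← mul_assoc, ← pow_add,
      ((hcom (c1 + c2 + a1 * b2) (y ^ (b1 + b2) * x ^ (a1 + a2))).eq)]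
  -- the homomorphism from the model group
  set Φ : G4 p →* E × Multiplicative (ZMod p) :=
  { toFun := fun g => (y ^ g.b.val * x ^ g.a.val * w ^ g.c.val, Multiplicative.ofAdd g.d)
    map_one' := by
      refine Prod.ext ?_ rfl
      show y ^ (0 : ZMod p).val * x ^ (0 : ZMod p).val * w ^ (0 : ZMod p).val = 1
      simp [ZMod.val_zero]
    map_mul' := fun g h => by
      have e1 : (y : E) ^ ((g.b + h.b).val) = y ^ (g.b.val + h.b.val) :=
        pow_congr_mod (pord y) (val_add_modeq _ _)
      have e2 : (x : E) ^ ((g.a + h.a).val) = x ^ (g.a.val + h.a.val) :=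
        pow_congr_mod (pord x) (val_add_modeq _ _)
      have e3 : (w : E) ^ ((g.c + h.c + g.a * h.b).val)
          = w ^ (g.c.val + h.c.val + g.a.val * h.b.val) :=
        pow_congr_mod (pord w) (val_c_modeq _ _ _ _)
      refine Prod.ext ?_ rfl
      show y ^ ((g.b + h.b).val) * x ^ ((g.a + h.a).val) * w ^ ((g.c + h.c + g.a * h.b).val) =
        (y ^ g.b.val * x ^ g.a.val * w ^ g.c.val) * (y ^ h.b.val * x ^ h.a.val * w ^ h.c.val)
      rw [e1, e2, e3, key] } with hPhi
  -- order facts in the quotient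
  have hone : ∀ g : E, QuotientGroup.mk' Z g = 1 ↔ g ∈ Z := fun g => QuotientGroup.eq_one_iff g
  set X := QuotientGroup.mk' Z x with hX
  set Y := QuotientGroup.mk' Z y with hY
  have hmkx : X ≠ 1 := by
    intro h
    rw [hX, hone] at h
    exact hxy ((Subgroup.mem_center_iff.mp h) y).symm
  have hmky : Y ≠ 1 := by
    intro h
    rw [hY, hone] at h
    exact hxy (Subgroup.mem_center_iff.mp h x)
  have hXp : X ^ p = 1 := by rw [hX, ← map_pow, pord, map_one]
  have hYp : Y ^ p = 1 := by rw [hY, ← map_pow, pord, map_one]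
  have hordY : orderOf Y = p := by
    rcases (Nat.dvd_prime hprime).mp (orderOf_dvd_of_pow_eq_one hYp) with h | h
    · exact absurd (orderOf_eq_one_iff.mp h) hmky
    · exact h
  have hordw : orderOf w = p := by
    rcases (Nat.dvd_prime hprime).mp (orderOf_dvd_of_pow_eq_one (pord w)) with h | h
    · exact absurd (orderOf_eq_one_iff.mp h) hw1
    · exact h
  -- injectivity
  have hinj : Function.Injective Φ := by
    rw [injective_iff_map_eq_one]
    intro g hg
    have h1 : y ^ g.b.val * x ^ g.a.val * w ^ g.c.val = 1 := congrArg Prod.fst hg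
    have hd : g.d = 0 := by
      have h2 := congrArg Prod.snd hg
      exact h2
    have hq1 : Y ^ g.b.val * X ^ g.a.val = 1 := by
      have h2 := congrArg (QuotientGroup.mk' Z) h1
      rw [map_mul, map_mul, map_pow, map_pow, map_pow, map_one,
        (hone w).mpr hwZ, one_pow, mul_one] at h2
      exact h2
    have ha : g.a = 0 := by
      by_contra hane
      have hav0 : g.a.val ≠ 0 := fun h => hane ((ZMod.val_eq_zero _).mp h)
      have hcop : Nat.Coprime (g.a.val) p := by
        apply Nat.Coprime.symm
        refine (Nat.Prime.coprime_iff_not_dvd hprime).mpr ?_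
        intro hdvd
        exact hav0 (Nat.eq_zero_of_dvd_of_lt hdvd (ZMod.val_lt g.a))
      obtain ⟨k, -, hk⟩ := Nat.exists_mul_mod_eq_one_of_coprime hcop hprime.one_lt
      have hx1 : X = (X ^ g.a.val) ^ k := by
        rw [← pow_mul]
        have : X ^ 1 = X ^ (g.a.val * k) :=
          pow_congr_mod hXp (by
            unfold Nat.ModEq
            rw [hk, Nat.mod_eq_of_lt hprime.one_lt])
        simpa using this
      have hxa : X ^ g.a.val = (Y ^ g.b.val)⁻¹ := (inv_eq_iff_mul_eq_one.mpr hq1).symm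
      have hxy2 : X = (Y ^ (g.b.val * k))⁻¹ := by
        rw [hx1, hxa, inv_pow, ← pow_mul]
      have hz : y ^ (g.b.val * k) * x ∈ Z := by
        rw [← hone, map_mul, map_pow, ← hY, ← hX, hxy2]
        group
      have hcen := Subgroup.mem_center_iff.mp hz
      apply hxy
      have hxe : x = (y ^ (g.b.val * k))⁻¹ * (y ^ (g.b.val * k) * x) := by group
      rw [hxe]
      calc (y ^ (g.b.val * k))⁻¹ * (y ^ (g.b.val * k) * x) * y
          = (y ^ (g.b.val * k))⁻¹ * ((y ^ (g.b.val * k) * x) * y) := by group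
        _ = (y ^ (g.b.val * k))⁻¹ * (y * (y ^ (g.b.val * k) * x)) := by rw [← hcen y]
        _ = y * ((y ^ (g.b.val * k))⁻¹ * (y ^ (g.b.val * k) * x)) := by group
    have hb : g.b = 0 := by
      have h2 : Y ^ g.b.val = 1 := by
        have hav : g.a.val = 0 := by rw [ha, ZMod.val_zero]
        rw [hav, pow_zero, mul_one] at hq1
        exact hq1
      have hdvd : orderOf Y ∣ g.b.val := orderOf_dvd_of_pow_eq_one h2
      rw [hordY] at hdvd
      have := Nat.eq_zero_of_dvd_of_lt hdvd (ZMod.val_lt g.b)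
      exact (ZMod.val_eq_zero _).mp this
    have hc : g.c = 0 := by
      have h2 : w ^ g.c.val = 1 := by
        have hav : g.a.val = 0 := by rw [ha, ZMod.val_zero]
        have hbv : g.b.val = 0 := by rw [hb, ZMod.val_zero]
        rw [hav, hbv, pow_zero, pow_zero, one_mul, one_mul] at h1
        exact h1
      have hdvd : orderOf w ∣ g.c.val := orderOf_dvd_of_pow_eq_one h2
      rw [hordw] at hdvd
      have := Nat.eq_zero_of_dvd_of_lt hdvd (ZMod.val_lt g.c)
      exact (ZMod.val_eq_zero _).mp this
    ext
    · exact ha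
    · exact hb
    · exact hc
    · exact hd
  have hbij : Function.Bijective Φ := by
    refine (Nat.bijective_iff_injective_and_card Φ).mpr ⟨hinj, ?_⟩
    rw [G4.card_g4, Nat.card_prod, hcard]
    rw [show Nat.card (Multiplicative (ZMod p)) = p from by
      rw [Nat.card_congr Multiplicative.toAdd, Nat.card_zmod]]
    ring
  exact ⟨MulEquiv.ofBijective Φ hbij⟩

end PartA

/-- The direct product of the extraspecial group of order p^3 and exponent p with a
cyclic group of order p has automorphism group of order (p-1)(p^2-1)(p^2-p)p^5. -/
theorem stmt_3 (p : ℕ) [Fact p.Prime] (hp : Odd p)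
    (E : Type*) [Group E]
    (hcard : Nat.card E = p ^ 3)
    (hexp : Monoid.exponent E = p)
    (hnab : ¬ ∀ a b : E, a * b = b * a) :
    (Nat.card (MulAut (E × Multiplicative (ZMod p))) : ℤ) =
      (p - 1) * (p ^ 2 - 1) * (p ^ 2 - p) * p ^ 5 := by
  have hprime : p.Prime := Fact.out
  have h2 : (2 : ZMod p) ≠ 0 := by
    intro h
    have hdvd : p ∣ 2 := by
      have := (CharP.cast_eq_zero_iff (ZMod p) p 2).mp (by exact_mod_cast h)
      exact this
    have hp2 : p = 2 := (Nat.prime_dvd_prime_iff_eq hprime Nat.prime_two).mp hdvd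
    rw [hp2] at hp
    exact (by decide : ¬ Odd 2) hp
  obtain ⟨e⟩ := exists_iso hp hcard hexp hnab
  have hcongr : Nat.card (MulAut (E × Multiplicative (ZMod p))) = Nat.card (MulAut (G4 p)) :=
    Nat.card_congr ((MulAut.congr e).symm.toEquiv)
  rw [hcongr, G4.card_mulAut h2]
  have h1 : 1 ≤ p := hprime.one_lt.le
  have h2' : 1 ≤ p ^ 2 := Nat.one_le_pow _ _ hprime.pos
  have h3 : p ≤ p ^ 2 := by nlinarith
  push_cast [Nat.cast_sub h1, Nat.cast_sub h2', Nat.cast_sub h3]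
  ring
end

section
/- For an odd prime p, the extraspecial group of order p^5 and exponent p has automorphism group of order (p^5-p)(p^5-p^4)(p^3-p)p^2. -/
namespace Ess

open scoped commutatorElement

/-- The model extraspecial group of order p^5 and exponent p. -/
@[ext] structure Hei (p : ℕ) where
  a : ZMod p
  b : ZMod p
  c : ZMod p
  d : ZMod p
  e : ZMod p
  deriving DecidableEq

namespace Hei

variable {p : ℕ}

instance : Mul (Hei p) :=
  ⟨fun u v => ⟨u.a + v.a, u.b + v.b, u.c + v.c, u.d + v.d,
    u.e + v.e - (v.a * u.b + v.c * u.d)⟩⟩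

instance : One (Hei p) := ⟨⟨0,0,0,0,0⟩⟩

instance : Inv (Hei p) := ⟨fun u => ⟨-u.a, -u.b, -u.c, -u.d, -u.e - (u.a * u.b + u.c * u.d)⟩⟩

@[simp] lemma mul_a (u v : Hei p) : (u * v).a = u.a + v.a := rfl
@[simp] lemma mul_b (u v : Hei p) : (u * v).b = u.b + v.b := rfl
@[simp] lemma mul_c (u v : Hei p) : (u * v).c = u.c + v.c := rfl
@[simp] lemma mul_d (u v : Hei p) : (u * v).d = u.d + v.d := rfl
@[simp] lemma mul_e (u v : Hei p) : (u * v).e = u.e + v.e - (v.a * u.b + v.c * u.d) := rfl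
@[simp] lemma one_a : (1 : Hei p).a = 0 := rfl
@[simp] lemma one_b : (1 : Hei p).b = 0 := rfl
@[simp] lemma one_c : (1 : Hei p).c = 0 := rfl
@[simp] lemma one_d : (1 : Hei p).d = 0 := rfl
@[simp] lemma one_e : (1 : Hei p).e = 0 := rfl
@[simp] lemma inv_a (u : Hei p) : (u⁻¹).a = -u.a := rfl
@[simp] lemma inv_b (u : Hei p) : (u⁻¹).b = -u.b := rfl
@[simp] lemma inv_c (u : Hei p) : (u⁻¹).c = -u.c := rfl
@[simp] lemma inv_d (u : Hei p) : (u⁻¹).d = -u.d := rfl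
@[simp] lemma inv_e (u : Hei p) : (u⁻¹).e = -u.e - (u.a * u.b + u.c * u.d) := rfl

instance : Group (Hei p) where
  mul_assoc u v w := by ext <;> simp <;> ring
  one_mul u := by ext <;> simp
  mul_one u := by ext <;> simp
  inv_mul_cancel u := by ext <;> simp <;> ring

/-- the symplectic form -/
def om (u v : Hei p) : ZMod p := u.a * v.b - v.a * u.b + u.c * v.d - v.c * u.d

lemma comm_eq (u v : Hei p) : ⁅u, v⁆ = ⟨0, 0, 0, 0, om u v⟩ := by
  show u * v * u⁻¹ * v⁻¹ = _
  ext <;> simp [om] <;> ring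

def equivProd : Hei p ≃ (ZMod p × ZMod p × ZMod p × ZMod p × ZMod p) where
  toFun u := (u.a, u.b, u.c, u.d, u.e)
  invFun x := ⟨x.1, x.2.1, x.2.2.1, x.2.2.2.1, x.2.2.2.2⟩
  left_inv u := rfl
  right_inv x := rfl

instance [NeZero p] : Fintype (Hei p) := Fintype.ofEquiv _ equivProd.symm

lemma card_hei [NeZero p] : Nat.card (Hei p) = p ^ 5 := by
  rw [Nat.card_congr equivProd]
  simp [Nat.card_prod, Nat.card_zmod]; ring

lemma pow_eq (u : Hei p) (n : ℕ) :
    u ^ n = ⟨n * u.a, n * u.b, n * u.c, n * u.d,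
      n * u.e - (n.choose 2 : ℕ) * (u.a * u.b + u.c * u.d)⟩ := by
  induction n with
  | zero => ext <;> simp
  | succ n ih =>
      rw [pow_succ, ih]
      ext <;> simp [Nat.choose_succ_succ, Nat.add_comm] <;> push_cast <;> ring

lemma pow_p [hP : Fact p.Prime] (hodd : Odd p) (u : Hei p) : u ^ p = 1 := by
  have h2 : (2 : ℕ) < p :=
    lt_of_le_of_ne hP.out.two_le (by rintro rfl; exact (by decide : ¬ Odd 2) hodd)
  have hch : ((p.choose 2 : ℕ) : ZMod p) = 0 := by
    have := hP.out.dvd_choose_self (k := 2) (by norm_num) h2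
    exact_mod_cast (ZMod.natCast_eq_zero_iff _ _).2 this
  rw [pow_eq]
  ext <;> simp [hch, ZMod.natCast_self]

end Hei

/-! ### Word homomorphisms -/

section Word

variable {p : ℕ} [Fact p.Prime] {K : Type*} [Group K]

lemma pow_val_eq {t : K} (ht : t ^ p = 1) {m : ℕ} {x : ZMod p} (h : (m : ZMod p) = x) :
    t ^ m = t ^ x.val := by
  have hd : orderOf t ∣ p := orderOf_dvd_of_pow_eq_one ht
  have h2 : (m : ZMod p) = ((x.val : ℕ) : ZMod p) := by
    rw [h, ZMod.natCast_val, ZMod.cast_id]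
  exact pow_eq_pow_iff_modEq.mpr (Nat.ModEq.of_dvd hd ((ZMod.natCast_eq_natCast_iff _ _ _).mp h2))

lemma mm {X Y : K} (h : Commute X Y) (x : K) : x * X * Y = x * Y * X := by
  rw [mul_assoc, h.eq, ← mul_assoc]

/-- A symplectic tuple: the data needed to build a homomorphism from `Hei p`. -/
structure SympTuple (p : ℕ) (K : Type*) [Group K] where
  A : K
  B : K
  C : K
  D : K
  Z : K
  hZ : ∀ g : K, Commute Z g
  hZp : Z ^ p = 1
  hAp : A ^ p = 1
  hBp : B ^ p = 1
  hCp : C ^ p = 1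
  hDp : D ^ p = 1
  hAB : ⁅A, B⁆ = Z
  hCD : ⁅C, D⁆ = Z
  hAC : Commute A C
  hAD : Commute A D
  hBC : Commute B C
  hBD : Commute B D

namespace SympTuple

variable (T : SympTuple p K)

/-- `Zi` is the inverse of `Z`, as a positive power. -/
def Zi : K := T.Z ^ (p - 1)

lemma Zi_eq : T.Zi = T.Z⁻¹ := by
  have hp1 : 1 ≤ p := (Fact.out : p.Prime).one_lt.le
  have : T.Z ^ (p - 1) * T.Z = 1 := by
    rw [← pow_succ, Nat.sub_add_cancel hp1, T.hZp]
  exact eq_inv_of_mul_eq_one_left this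

lemma hZi : ∀ g : K, Commute T.Zi g := fun g => (T.hZ g).pow_left _

lemma hBA : T.B * T.A = T.A * T.B * T.Zi := by
  have h := T.hAB
  rw [commutatorElement_def] at h
  rw [T.Zi_eq]
  have : T.A * T.B = T.Z * (T.B * T.A) := by
    rw [← h]; group
  rw [this, (T.hZ _).eq, mul_inv_cancel_right]

lemma hDC : T.D * T.C = T.C * T.D * T.Zi := by
  have h := T.hCD
  rw [commutatorElement_def] at h
  rw [T.Zi_eq]
  have : T.C * T.D = T.Z * (T.D * T.C) := by
    rw [← h]; group
  rw [this, (T.hZ _).eq, mul_inv_cancel_right]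

lemma swapBA (m : ℕ) : T.B ^ m * T.A = T.A * T.B ^ m * T.Zi ^ m := by
  induction m with
  | zero => simp
  | succ m ih =>
      rw [pow_succ T.B, mul_assoc, T.hBA, ← mul_assoc, ← mul_assoc, ih,
        mm ((T.hZi T.B).pow_left m) (T.A * T.B ^ m)]
      simp [pow_succ, mul_assoc]

lemma swapDC (m : ℕ) : T.D ^ m * T.C = T.C * T.D ^ m * T.Zi ^ m := by
  induction m with
  | zero => simp
  | succ m ih =>
      rw [pow_succ T.D, mul_assoc, T.hDC, ← mul_assoc, ← mul_assoc, ih,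
        mm ((T.hZi T.D).pow_left m) (T.C * T.D ^ m)]
      simp [pow_succ, mul_assoc]

/-- Normal form with natural number exponents. -/
def nf (a b c d e : ℕ) : K := T.A ^ a * T.B ^ b * T.C ^ c * T.D ^ d * T.Z ^ e

lemma nf_mul_Z (a b c d e : ℕ) : T.nf a b c d e * T.Z = T.nf a b c d (e + 1) := by
  unfold nf; rw [mul_assoc, ← pow_succ]

lemma nf_mul_D (a b c d e : ℕ) : T.nf a b c d e * T.D = T.nf a b c (d + 1) e := by
  unfold nf
  rw [mm ((T.hZ T.D).pow_left e) _, mul_assoc (T.A ^ a * T.B ^ b * T.C ^ c) _ T.D, ← pow_succ]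

lemma nf_mul_C (a b c d e : ℕ) :
    T.nf a b c d e * T.C = T.nf a b (c + 1) d (e + (p - 1) * d) := by
  unfold nf
  rw [mm ((T.hZ T.C).pow_left e) _, mul_assoc (T.A ^ a * T.B ^ b * T.C ^ c) _ T.C,
    T.swapDC d]
  simp only [← mul_assoc]
  rw [mul_assoc (T.A ^ a * T.B ^ b) _ T.C, ← pow_succ,
    mm ((T.hZi (T.Z ^ e)).pow_left d) (T.A ^ a * T.B ^ b * T.C ^ (c+1) * T.D ^ d), Zi,
    mul_assoc (T.A ^ a * T.B ^ b * T.C ^ (c+1) * T.D ^ d) (T.Z ^ e) _, ← pow_mul, ← pow_add]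

lemma nf_mul_B (a b c d e : ℕ) : T.nf a b c d e * T.B = T.nf a (b + 1) c d e := by
  unfold nf
  rw [mm ((T.hZ T.B).pow_left e) _, mm (T.hBD.symm.pow_left d) _,
    mm (T.hBC.symm.pow_left c) _, mul_assoc (T.A ^ a) _ T.B, ← pow_succ]

lemma nf_mul_A (a b c d e : ℕ) :
    T.nf a b c d e * T.A = T.nf (a + 1) b c d (e + (p - 1) * b) := by
  unfold nf
  rw [mm ((T.hZ T.A).pow_left e) _, mm (T.hAD.symm.pow_left d) _,
    mm (T.hAC.symm.pow_left c) _, mul_assoc (T.A ^ a) _ T.A, T.swapBA b]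
  simp only [← mul_assoc]
  rw [mul_assoc _ T.A (T.B ^ b), ← mul_assoc (T.A ^ a) T.A (T.B ^ b), ← pow_succ,
    mm ((T.hZi (T.C ^ c)).pow_left b) (T.A ^ (a+1) * T.B ^ b),
    mm ((T.hZi (T.D ^ d)).pow_left b) (T.A ^ (a+1) * T.B ^ b * T.C ^ c),
    mm ((T.hZi (T.Z ^ e)).pow_left b) (T.A ^ (a+1) * T.B ^ b * T.C ^ c * T.D ^ d), Zi,
    mul_assoc (T.A ^ (a+1) * T.B ^ b * T.C ^ c * T.D ^ d) (T.Z ^ e) _, ← pow_mul, ← pow_add]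

lemma nf_mul_powZ (a b c d e n : ℕ) : T.nf a b c d e * T.Z ^ n = T.nf a b c d (e + n) := by
  induction n with
  | zero => simp
  | succ n ih => rw [pow_succ, ← mul_assoc, ih, nf_mul_Z, Nat.add_assoc]

lemma nf_mul_powD (a b c d e n : ℕ) : T.nf a b c d e * T.D ^ n = T.nf a b c (d + n) e := by
  induction n with
  | zero => simp
  | succ n ih => rw [pow_succ, ← mul_assoc, ih, nf_mul_D, Nat.add_assoc]

lemma nf_mul_powC (a b c d e n : ℕ) :
    T.nf a b c d e * T.C ^ n = T.nf a b (c + n) d (e + (p - 1) * (d * n)) := by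
  induction n with
  | zero => simp
  | succ n ih =>
      rw [pow_succ, ← mul_assoc, ih, nf_mul_C]
      congr 1 <;> ring

lemma nf_mul_powB (a b c d e n : ℕ) : T.nf a b c d e * T.B ^ n = T.nf a (b + n) c d e := by
  induction n with
  | zero => simp
  | succ n ih => rw [pow_succ, ← mul_assoc, ih, nf_mul_B, Nat.add_assoc]

lemma nf_mul_powA (a b c d e n : ℕ) :
    T.nf a b c d e * T.A ^ n = T.nf (a + n) b c d (e + (p - 1) * (b * n)) := by
  induction n with
  | zero => simp
  | succ n ih =>
      rw [pow_succ, ← mul_assoc, ih, nf_mul_A]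
      congr 1 <;> ring

/-- The word `A^a B^b C^c D^d Z^e`. -/
def wrd (u : Hei p) : K :=
  T.A ^ u.a.val * T.B ^ u.b.val * T.C ^ u.c.val * T.D ^ u.d.val * T.Z ^ u.e.val

lemma wrd_def (u : Hei p) : T.wrd u = T.nf u.a.val u.b.val u.c.val u.d.val u.e.val := rfl

lemma nf_cast (m1 m2 m3 m4 m5 : ℕ) :
    T.nf m1 m2 m3 m4 m5
      = T.wrd ⟨(m1 : ZMod p), (m2 : ℕ), (m3 : ℕ), (m4 : ℕ), (m5 : ℕ)⟩ := by
  unfold nf wrd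
  rw [pow_val_eq T.hAp rfl, pow_val_eq T.hBp rfl, pow_val_eq T.hCp rfl,
    pow_val_eq T.hDp rfl, pow_val_eq T.hZp rfl]

lemma wrd_mul (u v : Hei p) : T.wrd u * T.wrd v = T.wrd (u * v) := by
  have hp1 : ((p - 1 : ℕ) : ZMod p) = -1 := by
    have h1 : 1 ≤ p := (Fact.out : p.Prime).one_lt.le
    rw [Nat.cast_sub h1]
    simp
  rw [wrd_def, T.wrd_def v,
    show T.nf v.a.val v.b.val v.c.val v.d.val v.e.val
      = T.A ^ v.a.val * T.B ^ v.b.val * T.C ^ v.c.val * T.D ^ v.d.val * T.Z ^ v.e.val from rfl]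
  simp only [← mul_assoc]
  rw [nf_mul_powA, nf_mul_powB, nf_mul_powC, nf_mul_powD, nf_mul_powZ, nf_cast]
  congr 1
  ext
  all_goals push_cast [ZMod.natCast_val, ZMod.cast_id, hp1]
  all_goals simp only [Hei.mul_a, Hei.mul_b, Hei.mul_c, Hei.mul_d, Hei.mul_e]
  all_goals ring

/-- The homomorphism `Hei p →* K` determined by a symplectic tuple. -/
def hom : Hei p →* K := MonoidHom.mk' T.wrd (fun u v => (T.wrd_mul u v).symm)

lemma hom_apply (u : Hei p) : T.hom u = T.wrd u := rfl

lemma orderZ (hZ1 : T.Z ≠ 1) : orderOf T.Z = p := by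
  have hd : orderOf T.Z ∣ p := orderOf_dvd_of_pow_eq_one T.hZp
  rcases ((Fact.out : p.Prime).eq_one_or_self_of_dvd _ hd) with h | h
  · exact absurd (orderOf_eq_one_iff.mp h) hZ1
  · exact h

lemma hom_injective (hZ1 : T.Z ≠ 1) : Function.Injective T.hom := by
  haveI : NeZero p := ⟨(Fact.out : p.Prime).ne_zero⟩
  have horder : orderOf T.Z = p := T.orderZ hZ1
  have hpow : ∀ x : ZMod p, T.Z ^ x.val = 1 → x = 0 := by
    intro x hx
    have hdvd : orderOf T.Z ∣ x.val := orderOf_dvd_of_pow_eq_one hx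
    rw [horder] at hdvd
    rcases Nat.eq_zero_or_pos x.val with h0 | hposv
    · exact (ZMod.val_eq_zero x).mp h0
    · exact absurd (ZMod.val_lt x) (not_lt.mpr (Nat.le_of_dvd hposv hdvd))
  rw [injective_iff_map_eq_one]
  intro u hu
  have probe : ∀ v : Hei p, Hei.om u v = 0 := by
    intro v
    have h1 : T.hom ⁅u, v⁆ = 1 := by
      rw [map_commutatorElement, hu]
      simp [commutatorElement_def]
    rw [Hei.comm_eq] at h1
    have h2 : T.hom (⟨0, 0, 0, 0, Hei.om u v⟩ : Hei p) = T.Z ^ (Hei.om u v).val := by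
      rw [hom_apply]; unfold wrd; simp
    exact hpow _ (h2 ▸ h1)
  have ha : u.a = 0 := by simpa [Hei.om] using probe ⟨0,1,0,0,0⟩
  have hb : u.b = 0 := by
    have := probe ⟨1,0,0,0,0⟩
    simp [Hei.om] at this
    simpa using this
  have hc : u.c = 0 := by simpa [Hei.om] using probe ⟨0,0,0,1,0⟩
  have hd : u.d = 0 := by
    have := probe ⟨0,0,1,0,0⟩
    simp [Hei.om] at this
    simpa using this
  have he : u.e = 0 := by
    apply hpow
    rw [hom_apply] at hu
    unfold wrd at hu
    rw [ha, hb, hc, hd] at hu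
    simpa using hu
  ext <;> simp [ha, hb, hc, hd, he]

end SympTuple

end Word

/-! ### Commutator bilinearity under centrality -/

section Bilin

variable {K : Type*} [Group K]

lemma comm_mul_right (hc : ∀ a b w : K, Commute ⁅a, b⁆ w) (g x y : K) :
    ⁅g, x * y⁆ = ⁅g, x⁆ * ⁅g, y⁆ := by
  have h1 : ⁅g, x * y⁆ = ⁅g, x⁆ * (x * ⁅g, y⁆ * x⁻¹) := by
    simp only [commutatorElement_def]
    group
  rw [h1, (hc g y x).symm.eq]
  simp

lemma comm_pow_right (hc : ∀ a b w : K, Commute ⁅a, b⁆ w) (g x : K) (n : ℕ) :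
    ⁅g, x ^ n⁆ = ⁅g, x⁆ ^ n := by
  induction n with
  | zero => simp [commutatorElement_def]
  | succ n ih => rw [pow_succ, comm_mul_right hc, ih, pow_succ]

end Bilin

/-! ### Building a symplectic tuple in an abstract extraspecial group -/

section Build

variable {p : ℕ} [Fact p.Prime] {G : Type*} [Group G]

lemma exists_tuple (hcard : Nat.card G = p ^ 5)
    (hexp : Monoid.exponent G = p)
    (hextra : commutator G = Subgroup.center G)
    (hcenter : Nat.card (Subgroup.center G) = p) :
    ∃ T : SympTuple p G, T.Z ≠ 1 := by
  have hp : p.Prime := Fact.out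
  have hp2 : 2 ≤ p := hp.two_le
  haveI : Finite G := Nat.finite_of_card_ne_zero (by rw [hcard]; positivity)
  have hpow : ∀ g : G, g ^ p = 1 := fun g => by
    rw [← hexp]; exact Monoid.pow_exponent_eq_one g
  have hmemC : ∀ a b : G, ⁅a, b⁆ ∈ Subgroup.center G := by
    intro a b
    have h := Subgroup.commutator_mem_commutator (Subgroup.mem_top a) (Subgroup.mem_top b)
    rwa [← commutator_def, hextra] at h
  have hc : ∀ a b w : G, Commute ⁅a, b⁆ w := fun a b w =>
    ((Subgroup.mem_center_iff.mp (hmemC a b)) w).symm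
  -- a non-commuting pair
  have hAB : ∃ A B : G, ⁅A, B⁆ ≠ 1 := by
    by_contra h
    push_neg at h
    have hcent : Subgroup.center G = ⊤ := by
      rw [eq_top_iff]
      intro x _
      rw [Subgroup.mem_center_iff]
      intro g
      have := h g x
      rw [commutatorElement_eq_one_iff_commute] at this
      exact this.eq
    have hpp : p ^ 5 = p := by
      rw [← hcard, ← hcenter, hcent, Subgroup.card_top]
    have h5 : p ^ 1 < p ^ 5 := Nat.pow_lt_pow_right hp.one_lt (by norm_num)
    simp at h5
    omega
  obtain ⟨A, B, hz1⟩ := hAB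
  set z := ⁅A, B⁆ with hzdef
  have hzc : z ∈ Subgroup.center G := hmemC A B
  have hzcom : ∀ g : G, Commute z g := fun g => (Subgroup.mem_center_iff.mp hzc g).symm
  have horder : orderOf z = p := by
    have hd : orderOf z ∣ p := orderOf_dvd_of_pow_eq_one (hpow z)
    rcases hp.eq_one_or_self_of_dvd _ hd with h | h
    · exact absurd (orderOf_eq_one_iff.mp h) hz1
    · exact h
  have hzpow_eq : Subgroup.zpowers z = Subgroup.center G := by
    apply Subgroup.eq_of_le_of_card_ge (Subgroup.zpowers_le.mpr hzc)
    rw [hcenter, Nat.card_zpowers, horder]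
  have hmemz : ∀ w : Subgroup.center G, ∃ n : ℕ, z ^ n = (w : G) := by
    intro w
    have hw : (w : G) ∈ Subgroup.zpowers z := by rw [hzpow_eq]; exact w.2
    exact (Submonoid.mem_powers_iff _ _).mp (mem_powers_iff_mem_zpowers.mpr hw)
  -- the probing homomorphism
  let Φ : G →* (Subgroup.center G × Subgroup.center G) :=
  { toFun := fun x => (⟨⁅A, x⁆, hmemC A x⟩, ⟨⁅B, x⁆, hmemC B x⟩)
    map_one' := by
      refine Prod.ext (Subtype.ext ?_) (Subtype.ext ?_) <;>
        simp [commutatorElement_def]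
    map_mul' := fun x y => by
      refine Prod.ext (Subtype.ext ?_) (Subtype.ext ?_) <;>
        simp [comm_mul_right hc] }
  have hΦ_apply : ∀ x : G, Φ x = (⟨⁅A, x⁆, hmemC A x⟩, ⟨⁅B, x⁆, hmemC B x⟩) := fun x => rfl
  have hzp1 : ∀ j : ℕ, (z⁻¹) ^ ((p - 1) * j) = z ^ j := by
    intro j
    have h1 : z ^ ((p - 1) * j) * z ^ j = 1 := by
      rw [← pow_add]
      have h2 : (p - 1) * j + j = p * j := by
        obtain ⟨q, rfl⟩ := Nat.exists_eq_add_of_le hp.one_lt.le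
        simp [Nat.add_sub_cancel_left]
        ring
      rw [h2, pow_mul, hpow z, one_pow]
    rw [inv_pow]
    exact inv_eq_of_mul_eq_one_right h1
  have hcompA : ∀ m : ℕ, ⁅A, A ^ m⁆ = 1 := by
    intro m; rw [comm_pow_right hc]; simp [commutatorElement_def]
  have hcompB : ∀ m : ℕ, ⁅B, B ^ m⁆ = 1 := by
    intro m; rw [comm_pow_right hc]; simp [commutatorElement_def]
  have hcomp : ∀ i j : ℕ, Φ (B ^ i * A ^ ((p - 1) * j))
      = (⟨z ^ i, pow_mem hzc i⟩, ⟨z ^ j, pow_mem hzc j⟩) := by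
    intro i j
    rw [map_mul]
    refine Prod.ext (Subtype.ext ?_) (Subtype.ext ?_)
    · show ⁅A, B ^ i⁆ * ⁅A, A ^ ((p - 1) * j)⁆ = z ^ i
      rw [hcompA, comm_pow_right hc, mul_one]
    · show ⁅B, B ^ i⁆ * ⁅B, A ^ ((p - 1) * j)⁆ = z ^ j
      rw [hcompB, comm_pow_right hc, one_mul, ← commutatorElement_inv, ← hzdef, hzp1]
  have hsurj : Function.Surjective Φ := by
    intro w
    obtain ⟨i, hi⟩ := hmemz w.1
    obtain ⟨j, hj⟩ := hmemz w.2
    exact ⟨B ^ i * A ^ ((p - 1) * j), by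
      rw [hcomp i j]
      refine Prod.ext (Subtype.ext ?_) (Subtype.ext ?_) <;> simp [hi, hj]⟩
  have hker_mem : ∀ x : G, x ∈ Φ.ker ↔ (⁅A, x⁆ = 1 ∧ ⁅B, x⁆ = 1) := by
    intro x
    rw [MonoidHom.mem_ker, hΦ_apply, Prod.ext_iff, Subtype.ext_iff, Subtype.ext_iff]
    rfl
  have hker_card : Nat.card Φ.ker = p ^ 3 := by
    have h1 := Subgroup.card_eq_card_quotient_mul_card_subgroup Φ.ker
    rw [hcard, Nat.card_congr (QuotientGroup.quotientKerEquivOfSurjective Φ hsurj).toEquiv,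
      Nat.card_prod, hcenter] at h1
    have hppos : 0 < p * p := by positivity
    apply Nat.eq_of_mul_eq_mul_left hppos
    rw [← h1]; ring
  -- a non-commuting pair inside the kernel
  have hCD : ∃ C0 D0 : G, C0 ∈ Φ.ker ∧ D0 ∈ Φ.ker ∧ ⁅C0, D0⁆ ≠ 1 := by
    by_contra h
    push_neg at h
    have hsub : Φ.ker ≤ Subgroup.center G := by
      intro x hx
      rw [Subgroup.mem_center_iff]
      intro y
      -- decompose y = B^i * A^m * k with k ∈ ker
      obtain ⟨i, hi⟩ := hmemz (Φ y).1
      obtain ⟨j, hj⟩ := hmemz (Φ y).2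
      set w := B ^ i * A ^ ((p - 1) * j) with hwdef
      have hΦw : Φ w = Φ y := by
        rw [hcomp i j]
        refine Prod.ext (Subtype.ext ?_) (Subtype.ext ?_) <;> simp [hi, hj]
      have hkmem : w⁻¹ * y ∈ Φ.ker := by
        rw [MonoidHom.mem_ker, map_mul, map_inv, hΦw]
        simp
      have hxA : Commute A x := commutatorElement_eq_one_iff_commute.mp ((hker_mem x).mp hx).1
      have hxB : Commute B x := commutatorElement_eq_one_iff_commute.mp ((hker_mem x).mp hx).2
      have hxk : Commute x (w⁻¹ * y) :=
        commutatorElement_eq_one_iff_commute.mp (h x (w⁻¹ * y) hx hkmem)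
      have hxw : Commute x w := ((hxB.symm.pow_right i).mul_right (hxA.symm.pow_right _))
      have hxy : Commute x y := by
        have := hxw.mul_right hxk
        rwa [mul_inv_cancel_left] at this
      exact hxy.symm.eq
    have hle := Subgroup.card_le_of_le hsub
    rw [hker_card, hcenter] at hle
    have h3 : p ^ 1 < p ^ 3 := Nat.pow_lt_pow_right hp.one_lt (by norm_num)
    simp at h3
    omega
  obtain ⟨C0, D0, hC0, hD0, hCD0⟩ := hCD
  -- rescale D0
  have hCDmem : ⁅C0, D0⁆ ∈ Subgroup.center G := hmemC C0 D0
  obtain ⟨t, ht0⟩ := hmemz ⟨⁅C0, D0⁆, hCDmem⟩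
  have ht : z ^ t = ⁅C0, D0⁆ := ht0
  have htne : (t : ZMod p) ≠ 0 := by
    intro h0
    have hdvd : p ∣ t := (ZMod.natCast_eq_zero_iff t p).mp h0
    obtain ⟨q, hq⟩ := hdvd
    apply hCD0
    rw [← ht, hq, pow_mul, hpow z, one_pow]
  haveI : NeZero p := ⟨hp.ne_zero⟩
  set s := ((t : ZMod p)⁻¹).val with hsdef
  have hts : ((t * s : ℕ) : ZMod p) = ((1 : ℕ) : ZMod p) := by
    push_cast [hsdef, ZMod.natCast_val, ZMod.cast_id]
    rw [mul_inv_cancel₀ htne]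
  have hclean : ⁅C0, D0 ^ s⁆ = z := by
    have hdvd : orderOf z ∣ p := by rw [horder]
    have hmod : t * s ≡ 1 [MOD orderOf z] :=
      Nat.ModEq.of_dvd hdvd ((ZMod.natCast_eq_natCast_iff _ _ _).mp hts)
    have heq : z ^ (t * s) = z ^ 1 := pow_eq_pow_iff_modEq.mpr hmod
    rw [comm_pow_right hc, ← ht, ← pow_mul, heq, pow_one]
  have hAC0 : Commute A C0 := commutatorElement_eq_one_iff_commute.mp ((hker_mem C0).mp hC0).1
  have hBC0 : Commute B C0 := commutatorElement_eq_one_iff_commute.mp ((hker_mem C0).mp hC0).2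
  have hAD0 : Commute A D0 := commutatorElement_eq_one_iff_commute.mp ((hker_mem D0).mp hD0).1
  have hBD0 : Commute B D0 := commutatorElement_eq_one_iff_commute.mp ((hker_mem D0).mp hD0).2
  exact ⟨⟨A, B, C0, D0 ^ s, z, hzcom, hpow z, hpow A, hpow B, hpow C0,
    hpow (D0 ^ s), rfl, hclean, hAC0, hAD0.pow_right s, hBC0, hBD0.pow_right s⟩, hz1⟩

end Build

/-! ### Transfer: Nat.card (MulAut G) = Nat.card (MulAut (Hei p)) -/

section Transfer

variable {p : ℕ} [Fact p.Prime] {G : Type*} [Group G]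

lemma card_mulAut_eq_hei (hcard : Nat.card G = p ^ 5)
    (hexp : Monoid.exponent G = p)
    (hextra : commutator G = Subgroup.center G)
    (hcenter : Nat.card (Subgroup.center G) = p) :
    Nat.card (MulAut G) = Nat.card (MulAut (Hei p)) := by
  haveI : NeZero p := ⟨(Fact.out : p.Prime).ne_zero⟩
  haveI : Finite G := Nat.finite_of_card_ne_zero (by rw [hcard]; exact pow_ne_zero 5 (Fact.out : p.Prime).ne_zero)
  obtain ⟨T, hZ1⟩ := exists_tuple hcard hexp hextra hcenter
  have hbij : Function.Bijective T.hom := by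
    rw [Nat.bijective_iff_injective_and_card]
    exact ⟨T.hom_injective hZ1, by rw [Hei.card_hei, hcard]⟩
  exact (Nat.card_congr (MulAut.congr (MulEquiv.ofBijective T.hom hbij)).toEquiv).symm

end Transfer

/-! ### Generators of Hei -/

namespace Hei

variable {p : ℕ} [Fact p.Prime]

def gA : Hei p := ⟨1, 0, 0, 0, 0⟩
def gB : Hei p := ⟨0, 1, 0, 0, 0⟩
def gC : Hei p := ⟨0, 0, 1, 0, 0⟩
def gD : Hei p := ⟨0, 0, 0, 1, 0⟩
def gZ : Hei p := ⟨0, 0, 0, 0, 1⟩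

lemma comm_gA_gB : ⁅(gA : Hei p), (gB : Hei p)⁆ = gZ := by
  rw [comm_eq]; ext <;> simp [om, gA, gB, gZ]

lemma comm_gC_gD : ⁅(gC : Hei p), (gD : Hei p)⁆ = gZ := by
  rw [comm_eq]; ext <;> simp [om, gC, gD, gZ]

lemma comm_gA_gC : ⁅(gA : Hei p), (gC : Hei p)⁆ = 1 := by
  rw [comm_eq]; ext <;> simp [om, gA, gC]

lemma comm_gA_gD : ⁅(gA : Hei p), (gD : Hei p)⁆ = 1 := by
  rw [comm_eq]; ext <;> simp [om, gA, gD]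

lemma comm_gB_gC : ⁅(gB : Hei p), (gC : Hei p)⁆ = 1 := by
  rw [comm_eq]; ext <;> simp [om, gB, gC]

lemma comm_gB_gD : ⁅(gB : Hei p), (gD : Hei p)⁆ = 1 := by
  rw [comm_eq]; ext <;> simp [om, gB, gD]

lemma gZ_ne_one : (gZ : Hei p) ≠ 1 := by
  haveI : Fact (1 < p) := ⟨(Fact.out : p.Prime).one_lt⟩
  intro h
  have := congrArg Hei.e h
  simp [gZ] at this

lemma comm_central : ∀ u v w : Hei p, Commute ⁅u, v⁆ w := by
  intro u v w
  rw [comm_eq]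
  show _ * _ = _ * _
  ext <;> simp <;> ring

lemma decomp (u : Hei p) :
    u = gA ^ u.a.val * gB ^ u.b.val * gC ^ u.c.val * gD ^ u.d.val * gZ ^ u.e.val := by
  haveI : NeZero p := ⟨(Fact.out : p.Prime).ne_zero⟩
  simp only [pow_eq, gA, gB, gC, gD, gZ]
  ext <;> simp [ZMod.natCast_val, ZMod.cast_id]

lemma closure_eq_top :
    Subgroup.closure ({gA, gB, gC, gD} : Set (Hei p)) = ⊤ := by
  rw [eq_top_iff]
  intro u _
  have hA : (gA : Hei p) ∈ Subgroup.closure ({gA, gB, gC, gD} : Set (Hei p)) :=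
    Subgroup.subset_closure (by simp)
  have hB : (gB : Hei p) ∈ Subgroup.closure ({gA, gB, gC, gD} : Set (Hei p)) :=
    Subgroup.subset_closure (by simp)
  have hC : (gC : Hei p) ∈ Subgroup.closure ({gA, gB, gC, gD} : Set (Hei p)) :=
    Subgroup.subset_closure (by simp)
  have hD : (gD : Hei p) ∈ Subgroup.closure ({gA, gB, gC, gD} : Set (Hei p)) :=
    Subgroup.subset_closure (by simp)
  have hZm : (gZ : Hei p) ∈ Subgroup.closure ({gA, gB, gC, gD} : Set (Hei p)) := by
    rw [← @comm_gA_gB p _, commutatorElement_def]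
    exact mul_mem (mul_mem (mul_mem hA hB) (inv_mem hA)) (inv_mem hB)
  rw [decomp u]
  exact mul_mem (mul_mem (mul_mem (mul_mem (pow_mem hA _) (pow_mem hB _)) (pow_mem hC _))
    (pow_mem hD _)) (pow_mem hZm _)

end Hei

/-! ### Automorphisms of Hei and symplectic tuples -/

section AutCount

variable {p : ℕ} [Fact p.Prime]

open Hei

lemma hom_gA (T : SympTuple p (Hei p)) : T.hom gA = T.A := by
  haveI : Fact (1 < p) := ⟨(Fact.out : p.Prime).one_lt⟩
  rw [SympTuple.hom_apply]
  show T.A ^ (gA : Hei p).a.val * T.B ^ (gA : Hei p).b.val * T.C ^ (gA : Hei p).c.val *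
    T.D ^ (gA : Hei p).d.val * T.Z ^ (gA : Hei p).e.val = T.A
  simp [gA, ZMod.val_one]

lemma hom_gB (T : SympTuple p (Hei p)) : T.hom gB = T.B := by
  haveI : Fact (1 < p) := ⟨(Fact.out : p.Prime).one_lt⟩
  rw [SympTuple.hom_apply]
  show T.A ^ (gB : Hei p).a.val * T.B ^ (gB : Hei p).b.val * T.C ^ (gB : Hei p).c.val *
    T.D ^ (gB : Hei p).d.val * T.Z ^ (gB : Hei p).e.val = T.B
  simp [gB, ZMod.val_one]

lemma hom_gC (T : SympTuple p (Hei p)) : T.hom gC = T.C := by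
  haveI : Fact (1 < p) := ⟨(Fact.out : p.Prime).one_lt⟩
  rw [SympTuple.hom_apply]
  show T.A ^ (gC : Hei p).a.val * T.B ^ (gC : Hei p).b.val * T.C ^ (gC : Hei p).c.val *
    T.D ^ (gC : Hei p).d.val * T.Z ^ (gC : Hei p).e.val = T.C
  simp [gC, ZMod.val_one]

lemma hom_gD (T : SympTuple p (Hei p)) : T.hom gD = T.D := by
  haveI : Fact (1 < p) := ⟨(Fact.out : p.Prime).one_lt⟩
  rw [SympTuple.hom_apply]
  show T.A ^ (gD : Hei p).a.val * T.B ^ (gD : Hei p).b.val * T.C ^ (gD : Hei p).c.val *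
    T.D ^ (gD : Hei p).d.val * T.Z ^ (gD : Hei p).e.val = T.D
  simp [gD, ZMod.val_one]

/-- The condition on a 4-tuple to define an automorphism. -/
def TupCond (t : Hei p × Hei p × Hei p × Hei p) : Prop :=
  ⁅t.1, t.2.1⁆ ≠ 1 ∧ ⁅t.1, t.2.2.1⁆ = 1 ∧ ⁅t.1, t.2.2.2⁆ = 1 ∧
  ⁅t.2.1, t.2.2.1⁆ = 1 ∧ ⁅t.2.1, t.2.2.2⁆ = 1 ∧ ⁅t.2.2.1, t.2.2.2⁆ = ⁅t.1, t.2.1⁆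

/-- The symplectic tuple associated to a valid 4-tuple. -/
def tupTuple (hp : Odd p) (t : {t : Hei p × Hei p × Hei p × Hei p // TupCond t}) :
    SympTuple p (Hei p) :=
  ⟨t.1.1, t.1.2.1, t.1.2.2.1, t.1.2.2.2, ⁅t.1.1, t.1.2.1⁆,
    comm_central _ _, pow_p hp _, pow_p hp _, pow_p hp _, pow_p hp _, pow_p hp _,
    rfl, t.2.2.2.2.2.2,
    commutatorElement_eq_one_iff_commute.mp t.2.2.1,
    commutatorElement_eq_one_iff_commute.mp t.2.2.2.1,
    commutatorElement_eq_one_iff_commute.mp t.2.2.2.2.1,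
    commutatorElement_eq_one_iff_commute.mp t.2.2.2.2.2.1⟩

/-- The automorphism associated to a valid 4-tuple. -/
noncomputable def tupAut (hp : Odd p) (t : {t : Hei p × Hei p × Hei p × Hei p // TupCond t}) :
    MulAut (Hei p) :=
  MulEquiv.ofBijective (tupTuple hp t).hom (by
    haveI : NeZero p := ⟨(Fact.out : p.Prime).ne_zero⟩
    haveI : Finite (Hei p) := Finite.of_fintype _
    rw [Nat.bijective_iff_injective_and_card]
    exact ⟨(tupTuple hp t).hom_injective t.2.1, rfl⟩)

lemma tupAut_apply (hp : Odd p) (t : {t : Hei p × Hei p × Hei p × Hei p // TupCond t})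
    (u : Hei p) : tupAut hp t u = (tupTuple hp t).hom u := rfl

lemma aut_eq_of_eq_on_gens (φ ψ : MulAut (Hei p)) (h1 : φ gA = ψ gA) (h2 : φ gB = ψ gB)
    (h3 : φ gC = ψ gC) (h4 : φ gD = ψ gD) : φ = ψ := by
  have heq : Set.EqOn (φ : MulAut (Hei p)).toMonoidHom (ψ : MulAut (Hei p)).toMonoidHom
      ({gA, gB, gC, gD} : Set (Hei p)) := by
    intro x hx
    simp only [Set.mem_insert_iff, Set.mem_singleton_iff] at hx
    rcases hx with rfl | rfl | rfl | rfl <;> simpa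
  have h2' := MonoidHom.eqOn_closure heq
  rw [closure_eq_top] at h2'
  exact MulEquiv.ext fun x => h2' (Subgroup.mem_top x)

noncomputable def autEquivTup (hp : Odd p) :
    MulAut (Hei p) ≃ {t : Hei p × Hei p × Hei p × Hei p // TupCond t} where
  toFun φ := ⟨(φ gA, φ gB, φ gC, φ gD), by
    refine ⟨?_, ?_, ?_, ?_, ?_, ?_⟩
    · show ⁅φ gA, φ gB⁆ ≠ 1
      rw [← map_commutatorElement, comm_gA_gB]
      intro h
      exact gZ_ne_one (φ.injective (by rw [h, map_one]))
    · show ⁅φ gA, φ gC⁆ = 1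
      rw [← map_commutatorElement, comm_gA_gC, map_one]
    · show ⁅φ gA, φ gD⁆ = 1
      rw [← map_commutatorElement, comm_gA_gD, map_one]
    · show ⁅φ gB, φ gC⁆ = 1
      rw [← map_commutatorElement, comm_gB_gC, map_one]
    · show ⁅φ gB, φ gD⁆ = 1
      rw [← map_commutatorElement, comm_gB_gD, map_one]
    · show ⁅φ gC, φ gD⁆ = ⁅φ gA, φ gB⁆
      rw [← map_commutatorElement, ← map_commutatorElement, comm_gA_gB, comm_gC_gD]⟩
  invFun := tupAut hp
  left_inv φ := by
    apply aut_eq_of_eq_on_gens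
    · exact hom_gA _
    · exact hom_gB _
    · exact hom_gC _
    · exact hom_gD _
  right_inv t := by
    refine Subtype.ext ?_
    refine Prod.ext ?_ (Prod.ext ?_ (Prod.ext ?_ ?_))
    · exact hom_gA _
    · exact hom_gB _
    · exact hom_gC _
    · exact hom_gD _

lemma card_mulAut_hei (hp : Odd p) :
    Nat.card (MulAut (Hei p))
      = Nat.card {t : Hei p × Hei p × Hei p × Hei p // TupCond t} :=
  Nat.card_congr (autEquivTup hp)

end AutCount

/-! ### Counting infrastructure -/

section CountInfra

open scoped Classical

lemma card_fiber_eq_ker {M N : Type*} [AddCommGroup M] [AddCommGroup N]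
    (f : M →+ N) (y : N) (x0 : M) (hx0 : f x0 = y) :
    Nat.card {x : M // f x = y} = Nat.card {x : M // f x = 0} := by
  refine Nat.card_congr ⟨fun x => ⟨x.1 - x0, by simp [map_sub, x.2, hx0]⟩,
    fun x => ⟨x.1 + x0, by simp [map_add, x.2, hx0]⟩, fun x => ?_, fun x => ?_⟩ <;>
    (apply Subtype.ext; simp)

lemma card_ker_mul {M N : Type*} [AddCommGroup M] [AddCommGroup N] [Finite M]
    (f : M →+ N) (hs : Function.Surjective f) :
    Nat.card {x : M // f x = 0} * Nat.card N = Nat.card M := by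
  have h1 := AddSubgroup.card_eq_card_quotient_mul_card_addSubgroup f.ker
  have h2 : Nat.card (M ⧸ f.ker) = Nat.card N :=
    Nat.card_congr (QuotientAddGroup.quotientKerEquivOfSurjective f hs).toEquiv
  have h3 : Nat.card {x : M // f x = 0} = Nat.card f.ker :=
    Nat.card_congr (Equiv.subtypeEquivRight (fun x => AddMonoidHom.mem_ker.symm))
  rw [h3, h1, ← h2]
  ring

lemma card_fiber_surj {M N : Type*} [AddCommGroup M] [AddCommGroup N] [Finite M]
    (f : M →+ N) (hs : Function.Surjective f) (y : N) :
    Nat.card {x : M // f x = y} * Nat.card N = Nat.card M := by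
  obtain ⟨x0, hx0⟩ := hs y
  rw [card_fiber_eq_ker f y x0 hx0]
  exact card_ker_mul f hs

lemma card_subtype_prod {α β : Type*} [Fintype α] [Fintype β]
    (P : α → β → Prop) (Q : α → Prop) (m : ℕ)
    (h1 : ∀ a, Q a → Nat.card {b // P a b} = m)
    (h0 : ∀ a, ¬ Q a → Nat.card {b // P a b} = 0) :
    Nat.card {x : α × β // P x.1 x.2} = Nat.card {a // Q a} * m := by
  rw [Nat.card_congr (Equiv.subtypeProdEquivSigmaSubtype P), Nat.card_eq_fintype_card,
    Fintype.card_sigma]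
  have hpt : ∀ a : α, Fintype.card {b // P a b} = if Q a then m else 0 := by
    intro a
    by_cases h : Q a
    · rw [if_pos h, ← Nat.card_eq_fintype_card, h1 a h]
    · rw [if_neg h, ← Nat.card_eq_fintype_card, h0 a h]
  rw [Finset.sum_congr rfl (fun a _ => hpt a), Finset.sum_ite, Finset.sum_const,
    Finset.sum_const_zero, add_zero, ← Fintype.card_subtype, Nat.card_eq_fintype_card,
    smul_eq_mul]

lemma card_subtype_ne {α : Type*} [Fintype α] (a0 : α) :
    Nat.card {a : α // a ≠ a0} = Fintype.card α - 1 := by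
  rw [Nat.card_eq_fintype_card]
  have h1 : Fintype.card {a : α // ¬ (a = a0)} = Fintype.card α - Fintype.card {a : α // a = a0} :=
    Fintype.card_subtype_compl _
  rw [h1, Fintype.card_subtype_eq]

lemma card_subtype_and_ne {α : Type*} [Fintype α] (R : α → Prop) (a0 : α) (ha0 : R a0)
    (m : ℕ) (hm : Nat.card {a // R a} = m) :
    Nat.card {a : α // R a ∧ a ≠ a0} = m - 1 := by
  have e1 : {a : α // R a ∧ a ≠ a0} ≃ {x : {a // R a} // x ≠ ⟨a0, ha0⟩} := by
    refine (Equiv.subtypeSubtypeEquivSubtypeInter R (· ≠ a0)).symm.trans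
      (Equiv.subtypeEquivRight ?_)
    intro x
    simp [Subtype.ext_iff]
  rw [Nat.card_congr e1, card_subtype_ne, ← Nat.card_eq_fintype_card, hm]

end CountInfra

/-! ### The symplectic form on (ZMod p)^4 -/

abbrev Vec (p : ℕ) := ZMod p × ZMod p × ZMod p × ZMod p

section VecSec

variable {p : ℕ} [Fact p.Prime]

instance : NeZero p := ⟨(Fact.out : p.Prime).ne_zero⟩

def ww (x y : Vec p) : ZMod p :=
  x.1 * y.2.1 - y.1 * x.2.1 + x.2.2.1 * y.2.2.2 - y.2.2.1 * x.2.2.2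

lemma ww_add (A x y : Vec p) : ww A (x + y) = ww A x + ww A y := by
  simp [ww]; ring

lemma ww_smul (A : Vec p) (s : ZMod p) (x : Vec p) : ww A (s • x) = s * ww A x := by
  simp [ww, smul_eq_mul]; ring

lemma ww_self (A : Vec p) : ww A A = 0 := by unfold ww; ring

lemma ww_anti (A B : Vec p) : ww A B = - ww B A := by unfold ww; ring

lemma ww_zero_left (B : Vec p) : ww 0 B = 0 := by simp [ww]

lemma ww_zero_right (A : Vec p) : ww A 0 = 0 := by simp [ww]

def wwHom (A : Vec p) : Vec p →+ ZMod p where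
  toFun := ww A
  map_zero' := ww_zero_right A
  map_add' := ww_add A

lemma ww_nondeg (C : Vec p) (h : ∀ x, ww C x = 0) : C = 0 := by
  have h1 := h (0, 1, 0, 0)
  have h2 := h (1, 0, 0, 0)
  have h3 := h (0, 0, 0, 1)
  have h4 := h (0, 0, 1, 0)
  simp [ww] at h1 h2 h3 h4
  refine Prod.ext ?_ (Prod.ext ?_ (Prod.ext ?_ ?_)) <;> simp [h1, h2, h3, h4]

lemma exists_ww_one {A : Vec p} (hA : A ≠ 0) : ∃ B, ww A B = 1 := by
  have h : ¬ ∀ x, ww A x = 0 := fun hh => hA (ww_nondeg A hh)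
  push_neg at h
  obtain ⟨x, hx⟩ := h
  exact ⟨(ww A x)⁻¹ • x, by rw [ww_smul, inv_mul_cancel₀ hx]⟩

lemma surj_wwHom {A : Vec p} (hA : A ≠ 0) : Function.Surjective (wwHom A) := by
  obtain ⟨B0, hB0⟩ := exists_ww_one hA
  intro y
  exact ⟨y • B0, by show ww A (y • B0) = y; rw [ww_smul, hB0, mul_one]⟩

lemma card_vec : Nat.card (Vec p) = p ^ 4 := by
  simp [Nat.card_prod, Nat.card_zmod]; ring

lemma ppos : 0 < p := (Fact.out : p.Prime).pos

lemma card_perp {A : Vec p} (hA : A ≠ 0) :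
    Nat.card {B : Vec p // ww A B = 0} = p ^ 3 := by
  have h := card_ker_mul (wwHom A) (surj_wwHom hA)
  rw [card_vec, Nat.card_zmod] at h
  have : Nat.card {B : Vec p // ww A B = 0} = Nat.card {B : Vec p // wwHom A B = 0} := rfl
  rw [this]
  apply Nat.eq_of_mul_eq_mul_right (ppos (p := p))
  rw [h]; ring

open scoped Classical in
lemma card_nonperp {A : Vec p} (hA : A ≠ 0) :
    Nat.card {B : Vec p // ww A B ≠ 0} = p ^ 4 - p ^ 3 := by
  rw [Nat.card_eq_fintype_card]
  have h1 : Fintype.card {B : Vec p // ¬ (ww A B = 0)}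
      = Fintype.card (Vec p) - Fintype.card {B : Vec p // ww A B = 0} :=
    Fintype.card_subtype_compl _
  rw [h1, ← Nat.card_eq_fintype_card, ← Nat.card_eq_fintype_card, card_vec, card_perp hA]

def wwPair (A B : Vec p) : Vec p →+ ZMod p × ZMod p := (wwHom A).prod (wwHom B)

lemma surj_wwPair {A B : Vec p} (hs : ww A B ≠ 0) : Function.Surjective (wwPair A B) := by
  intro ⟨u, v⟩
  refine ⟨(-v * (ww A B)⁻¹) • A + (u * (ww A B)⁻¹) • B, ?_⟩
  show (ww A _, ww B _) = (u, v)
  rw [ww_add, ww_add, ww_smul, ww_smul, ww_smul, ww_smul, ww_self,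
    ww_anti B A, ww_self]
  field_simp
  refine Prod.ext ?_ ?_ <;> dsimp only <;> rw [div_eq_iff hs] <;> ring

lemma card_pair_perp {A B : Vec p} (hs : ww A B ≠ 0) :
    Nat.card {x : Vec p // ww A x = 0 ∧ ww B x = 0} = p ^ 2 := by
  have he : Nat.card {x : Vec p // ww A x = 0 ∧ ww B x = 0}
      = Nat.card {x : Vec p // wwPair A B x = 0} := by
    apply Nat.card_congr
    apply Equiv.subtypeEquivRight
    intro x
    show _ ↔ (ww A x, ww B x) = 0
    rw [Prod.ext_iff]
    rfl
  have h := card_ker_mul (wwPair A B) (surj_wwPair hs)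
  rw [card_vec, Nat.card_prod, Nat.card_zmod] at h
  rw [he]
  have hp2 : 0 < p * p := by have := ppos (p := p); positivity
  apply Nat.eq_of_mul_eq_mul_right hp2
  rw [h]; ring

def wwTriple (A B C : Vec p) : Vec p →+ (ZMod p × ZMod p) × ZMod p :=
  (wwPair A B).prod (wwHom C)

lemma exists_D0 {A B C : Vec p} (hs : ww A B ≠ 0) (hC1 : ww A C = 0) (hC2 : ww B C = 0)
    (hC0 : C ≠ 0) : ∃ D0, ww A D0 = 0 ∧ ww B D0 = 0 ∧ ww C D0 = 1 := by
  have hW : ∃ x, (ww A x = 0 ∧ ww B x = 0) ∧ ww C x ≠ 0 := by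
    by_contra h
    push_neg at h
    apply hC0
    apply ww_nondeg
    intro y
    set s := ww A B with hsdef
    set α := -(ww B y) * s⁻¹ with hα
    set β := (ww A y) * s⁻¹ with hβ
    set w := y + (-α) • A + (-β) • B with hw
    have hwA : ww A w = 0 := by
      rw [hw, ww_add, ww_add, ww_smul, ww_smul, ww_self, hβ]
      field_simp
      rw [hsdef]; ring
    have hwB : ww B w = 0 := by
      rw [hw, ww_add, ww_add, ww_smul, ww_smul, ww_anti B A, ww_self, hα]
      field_simp
      rw [hsdef]; ring
    have hwC : ww C w = 0 := h w ⟨hwA, hwB⟩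
    have hy : y = w + α • A + β • B := by
      rw [hw]; simp only [neg_smul]; abel
    rw [hy, ww_add, ww_add, ww_smul, ww_smul, hwC]
    have hca : ww C A = 0 := by rw [ww_anti]; simp [hC1]
    have hcb : ww C B = 0 := by rw [ww_anti]; simp [hC2]
    rw [hca, hcb]
    ring
  obtain ⟨x, ⟨hx1, hx2⟩, hx3⟩ := hW
  refine ⟨(ww C x)⁻¹ • x, ?_, ?_, ?_⟩
  · rw [ww_smul, hx1, mul_zero]
  · rw [ww_smul, hx2, mul_zero]
  · rw [ww_smul, inv_mul_cancel₀ hx3]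

lemma surj_wwTriple {A B C : Vec p} (hs : ww A B ≠ 0) (hC1 : ww A C = 0) (hC2 : ww B C = 0)
    (hC0 : C ≠ 0) : Function.Surjective (wwTriple A B C) := by
  obtain ⟨D0, hD1, hD2, hD3⟩ := exists_D0 hs hC1 hC2 hC0
  intro ⟨⟨u, v⟩, t⟩
  set s := ww A B with hsdef
  refine ⟨(-v * s⁻¹) • A + (u * s⁻¹) • B + t • D0, ?_⟩
  have hca : ww C A = 0 := by rw [ww_anti]; simp [hC1]
  have hcb : ww C B = 0 := by rw [ww_anti]; simp [hC2]
  show ((ww A _, ww B _), ww C _) = ((u, v), t)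
  rw [show ∀ x y z : Vec p, x + y + z = x + (y + z) from fun x y z => by ring]
  simp only [ww_add, ww_smul, ww_self, ww_anti B A, hD1, hD2, hD3, hca, hcb]
  field_simp
  refine Prod.ext (Prod.ext ?_ ?_) ?_ <;> dsimp only <;> rw [div_eq_iff hs] <;> rw [hsdef] <;> ring

lemma card_fiber_D {A B C : Vec p} (hs : ww A B ≠ 0) (hC1 : ww A C = 0) (hC2 : ww B C = 0)
    (hC0 : C ≠ 0) (t : ZMod p) :
    Nat.card {x : Vec p // ww A x = 0 ∧ ww B x = 0 ∧ ww C x = t} = p := by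
  have he : Nat.card {x : Vec p // ww A x = 0 ∧ ww B x = 0 ∧ ww C x = t}
      = Nat.card {x : Vec p // wwTriple A B C x = ((0, 0), t)} := by
    apply Nat.card_congr
    apply Equiv.subtypeEquivRight
    intro x
    show _ ↔ ((ww A x, ww B x), ww C x) = ((0, 0), t)
    simp [Prod.ext_iff, and_assoc]
  have h := card_fiber_surj (wwTriple A B C) (surj_wwTriple hs hC1 hC2 hC0) ((0, 0), t)
  rw [card_vec, Nat.card_prod, Nat.card_prod, Nat.card_zmod] at h
  rw [he]
  have hp3 : 0 < p * p * p := by have := ppos (p := p); positivity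
  apply Nat.eq_of_mul_eq_mul_right hp3
  rw [h]
  ring

end VecSec

/-! ### Counting the tuple set -/

section VCount

variable {p : ℕ} [Fact p.Prime]

lemma card_ab :
    Nat.card {x : Vec p × Vec p // ww x.1 x.2 ≠ 0} = (p ^ 4 - 1) * (p ^ 4 - p ^ 3) := by
  classical
  rw [card_subtype_prod (fun a b => ww a b ≠ 0) (fun a => a ≠ 0) (p ^ 4 - p ^ 3)
    (fun a ha => card_nonperp ha)
    (fun a ha => by
      have h0 : a = 0 := not_not.mp ha
      subst h0
      haveI : IsEmpty {b : Vec p // ww 0 b ≠ 0} := ⟨fun x => x.2 (ww_zero_left x.1)⟩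
      exact Nat.card_of_isEmpty)]
  congr 1
  rw [card_subtype_ne (0 : Vec p), ← Nat.card_eq_fintype_card, card_vec]

lemma card_cd {A B : Vec p} (hs : ww A B ≠ 0) :
    Nat.card {x : Vec p × Vec p // ww A x.1 = 0 ∧ ww A x.2 = 0 ∧ ww B x.1 = 0 ∧
      ww B x.2 = 0 ∧ ww x.1 x.2 = ww A B} = (p ^ 2 - 1) * p := by
  classical
  rw [card_subtype_prod
    (fun c d => ww A c = 0 ∧ ww A d = 0 ∧ ww B c = 0 ∧ ww B d = 0 ∧ ww c d = ww A B)
    (fun c => (ww A c = 0 ∧ ww B c = 0) ∧ c ≠ 0) p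
    (fun c hc => by
      have he : {d : Vec p // ww A c = 0 ∧ ww A d = 0 ∧ ww B c = 0 ∧ ww B d = 0 ∧
          ww c d = ww A B} ≃ {d : Vec p // ww A d = 0 ∧ ww B d = 0 ∧ ww c d = ww A B} :=
        Equiv.subtypeEquivRight (fun d => by
          constructor
          · rintro ⟨_, h2, _, h4, h5⟩; exact ⟨h2, h4, h5⟩
          · rintro ⟨h2, h4, h5⟩; exact ⟨hc.1.1, h2, hc.1.2, h4, h5⟩)
      rw [Nat.card_congr he]
      exact card_fiber_D hs hc.1.1 hc.1.2 hc.2 (ww A B))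
    (fun c hc => by
      haveI : IsEmpty {d : Vec p // ww A c = 0 ∧ ww A d = 0 ∧ ww B c = 0 ∧ ww B d = 0 ∧
          ww c d = ww A B} := ⟨fun x => by
        obtain ⟨d, h1, h2, h3, h4, h5⟩ := x
        exact hc ⟨⟨h1, h3⟩, fun h0 => hs (by rw [h0, ww_zero_left] at h5; exact h5.symm)⟩⟩
      exact Nat.card_of_isEmpty)]
  congr 1
  exact card_subtype_and_ne _ 0 ⟨ww_zero_right A, ww_zero_right B⟩ (p ^ 2) (card_pair_perp hs)

/-- The vector-level condition. -/
def VCond (q : (Vec p × Vec p) × (Vec p × Vec p)) : Prop :=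
  ww q.1.1 q.1.2 ≠ 0 ∧ (ww q.1.1 q.2.1 = 0 ∧ ww q.1.1 q.2.2 = 0 ∧ ww q.1.2 q.2.1 = 0 ∧
    ww q.1.2 q.2.2 = 0 ∧ ww q.2.1 q.2.2 = ww q.1.1 q.1.2)

lemma card_vtup :
    Nat.card {q : (Vec p × Vec p) × (Vec p × Vec p) // VCond q}
      = ((p ^ 4 - 1) * (p ^ 4 - p ^ 3)) * ((p ^ 2 - 1) * p) := by
  classical
  show Nat.card {q : (Vec p × Vec p) × (Vec p × Vec p) // ww q.1.1 q.1.2 ≠ 0 ∧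
    (ww q.1.1 q.2.1 = 0 ∧ ww q.1.1 q.2.2 = 0 ∧ ww q.1.2 q.2.1 = 0 ∧
      ww q.1.2 q.2.2 = 0 ∧ ww q.2.1 q.2.2 = ww q.1.1 q.1.2)} = _
  rw [card_subtype_prod
    (fun (ab : Vec p × Vec p) (cd : Vec p × Vec p) => ww ab.1 ab.2 ≠ 0 ∧
      (ww ab.1 cd.1 = 0 ∧ ww ab.1 cd.2 = 0 ∧ ww ab.2 cd.1 = 0 ∧
        ww ab.2 cd.2 = 0 ∧ ww cd.1 cd.2 = ww ab.1 ab.2))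
    (fun ab : Vec p × Vec p => ww ab.1 ab.2 ≠ 0)
    ((p ^ 2 - 1) * p)
    (fun ab hab => by
      have he : {cd : Vec p × Vec p // ww ab.1 ab.2 ≠ 0 ∧
          (ww ab.1 cd.1 = 0 ∧ ww ab.1 cd.2 = 0 ∧ ww ab.2 cd.1 = 0 ∧
            ww ab.2 cd.2 = 0 ∧ ww cd.1 cd.2 = ww ab.1 ab.2)}
          ≃ {cd : Vec p × Vec p // ww ab.1 cd.1 = 0 ∧ ww ab.1 cd.2 = 0 ∧
            ww ab.2 cd.1 = 0 ∧ ww ab.2 cd.2 = 0 ∧ ww cd.1 cd.2 = ww ab.1 ab.2} :=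
        Equiv.subtypeEquivRight (fun cd => by
          constructor
          · rintro ⟨_, h⟩; exact h
          · intro h; exact ⟨hab, h⟩)
      rw [Nat.card_congr he]
      exact card_cd hab)
    (fun ab hab => by
      haveI : IsEmpty {cd : Vec p × Vec p // ww ab.1 ab.2 ≠ 0 ∧
          (ww ab.1 cd.1 = 0 ∧ ww ab.1 cd.2 = 0 ∧ ww ab.2 cd.1 = 0 ∧
            ww ab.2 cd.2 = 0 ∧ ww cd.1 cd.2 = ww ab.1 ab.2)} :=
        ⟨fun x => hab x.2.1⟩
      exact Nat.card_of_isEmpty),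
    card_ab]

end VCount

/-! ### From Hei tuples to vector tuples -/

section HeiToVec

variable {p : ℕ} [Fact p.Prime]

def vec (u : Hei p) : Vec p := (u.a, u.b, u.c, u.d)

def mkH (x : Vec p) (e : ZMod p) : Hei p := ⟨x.1, x.2.1, x.2.2.1, x.2.2.2, e⟩

lemma om_eq (u v : Hei p) : Hei.om u v = ww (vec u) (vec v) := rfl

lemma comm_one_iff (u v : Hei p) : ⁅u, v⁆ = 1 ↔ ww (vec u) (vec v) = 0 := by
  rw [Hei.comm_eq]
  constructor
  · intro h
    have := congrArg Hei.e h
    simpa [← om_eq] using this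
  · intro h
    ext <;> simp [om_eq, h]

lemma comm_comm_iff (u v u' v' : Hei p) :
    ⁅u, v⁆ = ⁅u', v'⁆ ↔ ww (vec u) (vec v) = ww (vec u') (vec v') := by
  rw [Hei.comm_eq, Hei.comm_eq]
  constructor
  · intro h
    have := congrArg Hei.e h
    simpa [← om_eq] using this
  · intro h
    ext <;> simp [om_eq, h]

open Hei in
def tupEquiv : {t : Hei p × Hei p × Hei p × Hei p // TupCond t}
    ≃ {q : (Vec p × Vec p) × (Vec p × Vec p) // VCond q}
        × (ZMod p × ZMod p × ZMod p × ZMod p) where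
  toFun t := ⟨⟨((vec t.1.1, vec t.1.2.1), (vec t.1.2.2.1, vec t.1.2.2.2)),
    ⟨fun h => t.2.1 ((comm_one_iff _ _).mpr h),
      (comm_one_iff _ _).mp t.2.2.1, (comm_one_iff _ _).mp t.2.2.2.1,
      (comm_one_iff _ _).mp t.2.2.2.2.1, (comm_one_iff _ _).mp t.2.2.2.2.2.1,
      (comm_comm_iff _ _ _ _).mp t.2.2.2.2.2.2⟩⟩,
    (t.1.1.e, t.1.2.1.e, t.1.2.2.1.e, t.1.2.2.2.e)⟩
  invFun qe := ⟨(mkH qe.1.1.1.1 qe.2.1, mkH qe.1.1.1.2 qe.2.2.1,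
      mkH qe.1.1.2.1 qe.2.2.2.1, mkH qe.1.1.2.2 qe.2.2.2.2),
    ⟨fun h => qe.1.2.1 ((comm_one_iff _ _).mp h),
      (comm_one_iff _ _).mpr qe.1.2.2.1, (comm_one_iff _ _).mpr qe.1.2.2.2.1,
      (comm_one_iff _ _).mpr qe.1.2.2.2.2.1, (comm_one_iff _ _).mpr qe.1.2.2.2.2.2.1,
      (comm_comm_iff _ _ _ _).mpr qe.1.2.2.2.2.2.2⟩⟩
  left_inv t := rfl
  right_inv qe := rfl

lemma card_tup :
    Nat.card {t : Hei p × Hei p × Hei p × Hei p // TupCond t}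
      = (((p ^ 4 - 1) * (p ^ 4 - p ^ 3)) * ((p ^ 2 - 1) * p)) * p ^ 4 := by
  rw [Nat.card_congr tupEquiv, Nat.card_prod, card_vtup]
  congr 1
  simp [Nat.card_prod, Nat.card_zmod]
  ring

end HeiToVec

end Ess

/-- The extraspecial group of order p^5 and exponent p has automorphism group of
order (p^5-p)(p^5-p^4)(p^3-p)p^2. -/
theorem stmt_5 (p : ℕ) [Fact p.Prime] (hp : Odd p)
    (G : Type*) [Group G]
    (hcard : Nat.card G = p ^ 5)
    (hexp : Monoid.exponent G = p)
    (hextra : commutator G = Subgroup.center G)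
    (hcenter : Nat.card (Subgroup.center G) = p) :
    (Nat.card (MulAut G) : ℤ) = (p ^ 5 - p) * (p ^ 5 - p ^ 4) * (p ^ 3 - p) * p ^ 2 := by
  have h1 := Ess.card_mulAut_eq_hei hcard hexp hextra hcenter
  have h2 := Ess.card_mulAut_hei (p := p) hp
  have h3 := Ess.card_tup (p := p)
  rw [h1, h2, h3]
  have hp1 : 2 ≤ p := (Fact.out : p.Prime).two_le
  have e1 : (1 : ℕ) ≤ p ^ 4 := Nat.one_le_pow _ _ (by omega)
  have e2 : p ^ 3 ≤ p ^ 4 := Nat.pow_le_pow_right (by omega) (by omega)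
  have e3 : (1 : ℕ) ≤ p ^ 2 := Nat.one_le_pow _ _ (by omega)
  push_cast [Nat.cast_sub e1, Nat.cast_sub e2, Nat.cast_sub e3]
  ring
end

section
/- Let p be an odd prime and G a finite group of nilpotency class 2 and exponent p with G/G' elementary abelian of rank k. If α is an automorphism of G and g_1,...,g_k are arbitrary elements of G', then there exists an automorphism β of G with a_iβ = (a_iα)g_i for each i, where a_1,...,a_k are generators of G. Consequently |Aut(G)| = |B|·|G'|^k, where B is the image of Aut(G) in Aut(G/G'). -/
/-- Let G be a finite class-2 exponent-p group generated by a_1,...,a_k whose images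
form a basis of the elementary abelian quotient G/G'.  (1) For any automorphism α and
any g_1,...,g_k ∈ G' there is an automorphism β with β(a_i) = α(a_i)·g_i for all i.
(2) Consequently |Aut G| = |B|·|G'|^k, where B is the image of Aut(G) in Aut(G/G'). -/
theorem stmt_9 (p k : ℕ) [Fact p.Prime] (hp : Odd p)
    (G : Type*) [Group G] [Finite G]
    (hexp : Monoid.exponent G = p)
    (hclass : upperCentralSeries G 2 = ⊤)
    (a : Fin k → G)
    (hgen : Subgroup.closure (Set.range a) = ⊤)
    (hbasis : Nat.card (G ⧸ commutator G) = p ^ k) :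
    (∀ (α : MulAut G) (g : Fin k → G), (∀ i, g i ∈ commutator G) →
        ∃ β : MulAut G, ∀ i, β (a i) = α (a i) * g i) ∧
    (∀ π : MulAut G →* MulAut (G ⧸ commutator G),
        (∀ (α : MulAut G) (x : G),
          π α (QuotientGroup.mk x) = QuotientGroup.mk (α x)) →
        Nat.card (MulAut G) = Nat.card π.range * Nat.card (commutator G) ^ k) := by
  have hp1 : 1 < p := (Fact.out : p.Prime).one_lt
  have hpow : ∀ x : G, x ^ p = 1 := fun x => hexp ▸ Monoid.pow_exponent_eq_one x
  -- commutator is central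
  have hcomm : commutator G ≤ Subgroup.center G := by
    rw [commutator_def, Subgroup.commutator_le]
    intro g _ h _
    have hg2 : g ∈ upperCentralSeries G 2 := hclass ▸ Subgroup.mem_top g
    have := (mem_upperCentralSeries_succ_iff).mp hg2 h
    rw [upperCentralSeries_one] at this
    rwa [commutatorElement_def]
  letI : CommGroup (G ⧸ commutator G) := Abelianization.commGroup G
  letI : CommGroup (commutator G) :=
    { (inferInstance : Group (commutator G)) with
      mul_comm := fun x y =>
        Subtype.ext ((Subgroup.mem_center_iff.mp (hcomm y.2) x.1)) }
  have hQp : ∀ x : Additive (G ⧸ commutator G), p • x = 0 := by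
    intro x
    have h1 : x.toMul ^ p = 1 := by
      obtain ⟨y, hy⟩ := QuotientGroup.mk_surjective x.toMul
      rw [← hy, ← QuotientGroup.mk_pow, hpow y, QuotientGroup.mk_one]
    rw [← ofMul_toMul x, ← ofMul_pow p, h1, ofMul_one]
  letI : Module (ZMod p) (Additive (G ⧸ commutator G)) := AddCommGroup.zmodModule (n := p) hQp
  have hCp : ∀ x : Additive (commutator G), p • x = 0 := by
    intro x
    have h1 : x.toMul ^ p = 1 := by
      apply Subtype.ext
      push_cast
      exact hpow _
    rw [← ofMul_toMul x, ← ofMul_pow p, h1, ofMul_one]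
  letI : Module (ZMod p) (Additive (commutator G)) := AddCommGroup.zmodModule (n := p) hCp
  let b : Fin k → Additive (G ⧸ commutator G) := fun i => Additive.ofMul (QuotientGroup.mk (a i) : G ⧸ commutator G)
  have hspan : ∀ x : Additive (G ⧸ commutator G), x ∈ Submodule.span (ZMod p) (Set.range b) := by
    intro x
    have key : ∀ y : G, Additive.ofMul (QuotientGroup.mk y : G ⧸ commutator G) ∈
        Submodule.span (ZMod p) (Set.range b) := by
      intro y
      have hy : y ∈ Subgroup.closure (Set.range a) := hgen ▸ Subgroup.mem_top y
      induction hy using Subgroup.closure_induction with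
      | mem z hz => obtain ⟨i, rfl⟩ := hz; exact Submodule.subset_span ⟨i, rfl⟩
      | one =>
        have : Additive.ofMul ((1 : G) : G ⧸ commutator G) = (0 : Additive (G ⧸ commutator G)) := by
          rw [QuotientGroup.mk_one, ofMul_one]
        rw [this]; exact Submodule.zero_mem _
      | mul u v hu hv ihu ihv =>
        have : Additive.ofMul ((u * v : G) : G ⧸ commutator G) =
            Additive.ofMul ((u : G) : G ⧸ commutator G) + Additive.ofMul ((v : G) : G ⧸ commutator G) := by
          rw [QuotientGroup.mk_mul, ofMul_mul]
        rw [this]; exact Submodule.add_mem _ ihu ihv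
      | inv u hu ihu =>
        have : Additive.ofMul ((u⁻¹ : G) : G ⧸ commutator G) = -Additive.ofMul ((u : G) : G ⧸ commutator G) := by
          rw [QuotientGroup.mk_inv, ofMul_inv]
        rw [this]; exact Submodule.neg_mem _ ihu
    obtain ⟨y, hy⟩ := QuotientGroup.mk_surjective x.toMul
    have : x = Additive.ofMul (QuotientGroup.mk y : G ⧸ commutator G) := by rw [hy, ofMul_toMul]
    rw [this]; exact key y
  haveI : Fintype (Additive (G ⧸ commutator G)) := Fintype.ofFinite _
  have hfinrank : Module.finrank (ZMod p) (Additive (G ⧸ commutator G)) = k := by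
    have h1 : Fintype.card (Additive (G ⧸ commutator G)) =
        Fintype.card (ZMod p) ^ Module.finrank (ZMod p) (Additive (G ⧸ commutator G)) :=
      Module.card_eq_pow_finrank
    rw [ZMod.card] at h1
    have h2 : Fintype.card (Additive (G ⧸ commutator G)) = p ^ k := by
      rw [← Nat.card_eq_fintype_card]; exact hbasis
    exact Nat.pow_right_injective hp1 (h1.symm.trans h2)
  let bQ : Module.Basis (Fin k) (ZMod p) (Additive (G ⧸ commutator G)) :=
    basisOfTopLeSpanOfCardEqFinrank b (fun x _ => hspan x) (by simp [hfinrank])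
  have hbQ : ∀ i, bQ i = b i := fun i => congrFun (coe_basisOfTopLeSpanOfCardEqFinrank b (fun x _ => hspan x) _) i
  have h1 : ∀ (α : MulAut G) (g : Fin k → G), (∀ i, g i ∈ commutator G) →
      ∃ β : MulAut G, ∀ i, β (a i) = α (a i) * g i := by
    intro α g hg
    let w : Fin k → Additive (commutator G) := fun i => Additive.ofMul (⟨g i, hg i⟩ : commutator G)
    let φ : Additive (G ⧸ commutator G) →ₗ[ZMod p] Additive (commutator G) := bQ.constr ℕ w
    have hφ : ∀ i, φ (b i) = w i := by
      intro i
      rw [← hbQ i]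
      exact Module.Basis.constr_basis bQ ℕ w i
    let f : (G ⧸ commutator G) → commutator G := fun q => (φ (Additive.ofMul q)).toMul
    have hf1 : f 1 = 1 := by
      show (φ (Additive.ofMul 1)).toMul = 1
      rw [ofMul_one, map_zero]
      rfl
    have hfmul : ∀ q r, f (q * r) = f q * f r := by
      intro q r
      show (φ (Additive.ofMul (q * r))).toMul = _
      rw [ofMul_mul, map_add]
      rfl
    have hcen : ∀ q : G ⧸ commutator G, ((f q : G)) ∈ Subgroup.center G :=
      fun q => hcomm (f q).2
    let βh : G →* G :=
      { toFun := fun x => α x * (f (QuotientGroup.mk x) : G)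
        map_one' := by simp [hf1]
        map_mul' := by
          intro x y
          simp only [map_mul, QuotientGroup.mk_mul, hfmul, Subgroup.coe_mul]
          have hc : Commute (α y) ((f (QuotientGroup.mk x) : G)) :=
            Subgroup.mem_center_iff.mp (hcen (QuotientGroup.mk x)) (α y)
          exact hc.mul_mul_mul_comm (α x) _ }
    have hβc : ∀ c : G, c ∈ commutator G → βh c = α c := by
      intro c hc
      have h0 : (QuotientGroup.mk c : G ⧸ commutator G) = 1 :=
        (QuotientGroup.eq_one_iff c).mpr hc
      show α c * (f (QuotientGroup.mk c) : G) = α c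
      rw [h0, hf1]
      simp
    have hsurj : Function.Surjective βh := by
      intro y
      obtain ⟨x₀, hx₀⟩ : ∃ x₀, α x₀ = y := ⟨α.symm y, α.apply_symm_apply y⟩
      have hchar : ∀ c, c ∈ commutator G → ∃ d, d ∈ commutator G ∧ α d = c := by
        intro c hc
        refine ⟨α.symm c, ?_, α.apply_symm_apply c⟩
        have hfix : (commutator G).comap α.toMonoidHom = commutator G :=
          (inferInstance : (commutator G).Characteristic).fixed α
        rw [← hfix, Subgroup.mem_comap]
        show α (α.symm c) ∈ commutator G
        rw [α.apply_symm_apply]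
        exact hc
      obtain ⟨d, hdmem, hdc⟩ :=
        hchar _ ((commutator G).inv_mem (f (QuotientGroup.mk x₀)).2)
      refine ⟨x₀ * d, ?_⟩
      rw [map_mul, hβc d hdmem, hdc]
      show α x₀ * ↑(f (QuotientGroup.mk x₀)) * (↑(f (QuotientGroup.mk x₀)) : G)⁻¹ = y
      rw [mul_assoc, mul_inv_cancel, mul_one, hx₀]
    have hinj : Function.Injective βh := Finite.injective_iff_surjective.mpr hsurj
    refine ⟨MulEquiv.ofBijective βh ⟨hinj, hsurj⟩, ?_⟩
    intro i
    show βh (a i) = α (a i) * g i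
    show α (a i) * (f (QuotientGroup.mk (a i)) : G) = α (a i) * g i
    congr 1
    have : f (QuotientGroup.mk (a i)) = ⟨g i, hg i⟩ := by
      show (φ (Additive.ofMul (QuotientGroup.mk (a i)))).toMul = _
      have hb : Additive.ofMul ((QuotientGroup.mk (a i)) : G ⧸ commutator G) = b i := rfl
      rw [hb, hφ i]
      rfl
    rw [this]
  refine ⟨h1, ?_⟩
  intro π hπ
  have hcard1 : Nat.card (MulAut G) = Nat.card π.range * Nat.card π.ker := by
    rw [Subgroup.card_eq_card_quotient_mul_card_subgroup π.ker,
      Nat.card_congr (QuotientGroup.quotientKerEquivRange π).toEquiv]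
  rw [hcard1]
  congr 1
  -- |ker π| = |G'|^k
  let T : π.ker → (Fin k → commutator G) := fun β i =>
    ⟨(a i)⁻¹ * (β : MulAut G) (a i), by
      have hβ : π (β : MulAut G) = 1 := β.2
      have : (QuotientGroup.mk ((β : MulAut G) (a i)) : G ⧸ commutator G) =
          QuotientGroup.mk (a i) := by
        rw [← hπ (β : MulAut G) (a i), hβ]
        rfl
      exact (QuotientGroup.eq).mp this.symm⟩
  have hTinj : Function.Injective T := by
    intro β₁ β₂ h
    have hpt : ∀ i, (β₁ : MulAut G) (a i) = (β₂ : MulAut G) (a i) := by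
      intro i
      have h2 := congrArg Subtype.val (congrFun h i)
      exact mul_left_cancel h2
    have heq : ((β₁ : MulAut G) : G →* G) = ((β₂ : MulAut G) : G →* G) :=
      MonoidHom.eq_of_eqOn_dense hgen (by rintro x ⟨i, rfl⟩; exact hpt i)
    exact Subtype.ext (MulEquiv.toMonoidHom_injective heq)
  have hTsurj : Function.Surjective T := by
    intro g
    obtain ⟨β, hβ⟩ := h1 1 (fun i => (g i : G)) (fun i => (g i).2)
    have hβ' : ∀ i, β (a i) = a i * g i := by
      intro i
      have := hβ i
      rwa [MulAut.one_apply] at this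
    have hker : β ∈ π.ker := by
      rw [MonoidHom.mem_ker]
      have hmk : ((QuotientGroup.mk' (commutator G)).comp (β : G →* G)) =
          QuotientGroup.mk' (commutator G) := by
        refine MonoidHom.eq_of_eqOn_dense hgen ?_
        rintro x ⟨i, rfl⟩
        show (QuotientGroup.mk (β (a i)) : G ⧸ commutator G) = QuotientGroup.mk (a i)
        rw [hβ' i, QuotientGroup.mk_mul,
          (QuotientGroup.eq_one_iff ((g i : G))).mpr (g i).2, mul_one]
      ext q
      obtain ⟨x, rfl⟩ := QuotientGroup.mk_surjective q
      rw [hπ β x]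
      have := congrArg (fun h => DFunLike.coe h x) hmk
      simpa using this
    refine ⟨⟨β, hker⟩, ?_⟩
    funext i
    apply Subtype.ext
    show (a i)⁻¹ * β (a i) = (g i : G)
    rw [hβ' i, inv_mul_cancel_left]
  rw [Nat.card_congr (Equiv.ofBijective T ⟨hTinj, hTsurj⟩), Nat.card_fun]
  congr 1
  simp
end

section
/- For an odd prime p and ω a nonsquare in GF(p), the set of invertible 4×4 matrices over GF(p) of the two forms [[α,β,γ,δ],[ε,ζ,η,θ],[ωθ,-ωη,-ζ,ε],[-ωδ,ωγ,β,-α]] and [[α,β,γ,δ],[ε,ζ,η,θ],[-ωθ,ωη,ζ,-ε],[ωδ,-ωγ,-β,α]] forms a group of order 2(p^4-1)(p^4-p^2): the first row (α,β,γ,δ) can be any nonzero vector, and (ε,ζ,η,θ) any vector not in the span of (α,β,γ,δ) and (ωδ,-ωγ,-β,α). -/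
set_option maxHeartbeats 1000000
set_option synthInstance.maxHeartbeats 400000

open Matrix Polynomial

namespace Stmt12Aux

variable {p : ℕ} [Fact p.Prime]

def Mmat (ω : ZMod p) : Matrix (Fin 4) (Fin 4) (ZMod p) :=
  !![0,0,0,1; 0,0,-1,0; 0,-ω,0,0; ω,0,0,0]

lemma Mmat_sq (ω : ZMod p) : Mmat ω * Mmat ω = ω • 1 := by
  ext i j
  fin_cases i <;> fin_cases j <;>
    simp [Mmat, Matrix.mul_apply, Fin.sum_univ_four, Matrix.one_apply,
      Matrix.vecHead, Matrix.vecTail]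

section Shapes

lemma shape2_iff (ω : ZMod p) (B : Matrix (Fin 4) (Fin 4) (ZMod p)) :
    B * Mmat ω = Mmat ω * B ↔
      ∃ α β γ δ ε ζ η θ : ZMod p,
        B = !![α, β, γ, δ; ε, ζ, η, θ;
               -(ω * θ), ω * η, ζ, -ε;
               ω * δ, -(ω * γ), -β, α] := by
  constructor
  · intro h
    have q : ∀ i j, (B * Mmat ω) i j = (Mmat ω * B) i j := fun i j => by rw [h]
    have e00 := q 0 0; have e01 := q 0 1; have e02 := q 0 2; have e03 := q 0 3
    have e10 := q 1 0; have e11 := q 1 1; have e12 := q 1 2; have e13 := q 1 3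
    simp [Mmat, Matrix.mul_apply, Fin.sum_univ_four, Matrix.vecHead,
      Matrix.vecTail] at e00 e01 e02 e03 e10 e11 e12 e13
    refine ⟨B 0 0, B 0 1, B 0 2, B 0 3, B 1 0, B 1 1, B 1 2, B 1 3, ?_⟩
    ext i j
    fin_cases i <;> fin_cases j
    all_goals try rfl
    · show B 2 0 = -(ω * B 1 3); first | linear_combination e10 | linear_combination -e10
    · show B 2 1 = ω * B 1 2; first | linear_combination e11 | linear_combination -e11
    · show B 2 2 = B 1 1; first | linear_combination e12 | linear_combination -e12
    · show B 2 3 = -B 1 0; first | linear_combination e13 | linear_combination -e13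
    · show B 3 0 = ω * B 0 3; first | linear_combination e00 | linear_combination -e00
    · show B 3 1 = -(ω * B 0 2); first | linear_combination e01 | linear_combination -e01
    · show B 3 2 = -B 0 1; first | linear_combination e02 | linear_combination -e02
    · show B 3 3 = B 0 0; first | linear_combination e03 | linear_combination -e03
  · rintro ⟨α, β, γ, δ, ε, ζ, η, θ, rfl⟩
    ext i j
    fin_cases i <;> fin_cases j <;>
      simp [Mmat, Matrix.mul_apply, Fin.sum_univ_four, Matrix.vecHead, Matrix.vecTail] <;> ring

lemma shape1_iff (ω : ZMod p) (B : Matrix (Fin 4) (Fin 4) (ZMod p)) :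
    B * Mmat ω = -(Mmat ω * B) ↔
      ∃ α β γ δ ε ζ η θ : ZMod p,
        B = !![α, β, γ, δ; ε, ζ, η, θ;
               ω * θ, -(ω * η), -ζ, ε;
               -(ω * δ), ω * γ, β, -α] := by
  constructor
  · intro h
    have q : ∀ i j, (B * Mmat ω) i j = -((Mmat ω * B) i j) := fun i j => by
      rw [h]; simp
    have e00 := q 0 0; have e01 := q 0 1; have e02 := q 0 2; have e03 := q 0 3
    have e10 := q 1 0; have e11 := q 1 1; have e12 := q 1 2; have e13 := q 1 3
    simp [Mmat, Matrix.mul_apply, Fin.sum_univ_four, Matrix.vecHead,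
      Matrix.vecTail] at e00 e01 e02 e03 e10 e11 e12 e13
    refine ⟨B 0 0, B 0 1, B 0 2, B 0 3, B 1 0, B 1 1, B 1 2, B 1 3, ?_⟩
    ext i j
    fin_cases i <;> fin_cases j
    all_goals try rfl
    · show B 2 0 = ω * B 1 3; first | linear_combination e10 | linear_combination -e10
    · show B 2 1 = -(ω * B 1 2); first | linear_combination e11 | linear_combination -e11
    · show B 2 2 = -B 1 1; first | linear_combination e12 | linear_combination -e12
    · show B 2 3 = B 1 0; first | linear_combination e13 | linear_combination -e13
    · show B 3 0 = -(ω * B 0 3); first | linear_combination e00 | linear_combination -e00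
    · show B 3 1 = ω * B 0 2; first | linear_combination e01 | linear_combination -e01
    · show B 3 2 = B 0 1; first | linear_combination e02 | linear_combination -e02
    · show B 3 3 = -B 0 0; first | linear_combination e03 | linear_combination -e03
  · rintro ⟨α, β, γ, δ, ε, ζ, η, θ, rfl⟩
    ext i j
    fin_cases i <;> fin_cases j <;>
      simp [Mmat, Matrix.mul_apply, Fin.sum_univ_four, Matrix.vecHead, Matrix.vecTail] <;> ring

end Shapes

section MulLemmas

variable {R : Type*} [Ring R] {M X Y : R}

lemma comm_mul_comm (hX : X * M = M * X) (hY : Y * M = M * Y) :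
    (X * Y) * M = M * (X * Y) := by
  rw [mul_assoc, hY, ← mul_assoc, hX, mul_assoc]

lemma comm_mul_anti (hX : X * M = M * X) (hY : Y * M = -(M * Y)) :
    (X * Y) * M = -(M * (X * Y)) := by
  rw [mul_assoc, hY, mul_neg, ← mul_assoc, hX, mul_assoc]

lemma anti_mul_comm (hX : X * M = -(M * X)) (hY : Y * M = M * Y) :
    (X * Y) * M = -(M * (X * Y)) := by
  rw [mul_assoc, hY, ← mul_assoc, hX, neg_mul, mul_assoc]

lemma anti_mul_anti (hX : X * M = -(M * X)) (hY : Y * M = -(M * Y)) :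
    (X * Y) * M = M * (X * Y) := by
  rw [mul_assoc, hY, mul_neg, ← mul_assoc, hX, neg_mul, neg_neg, mul_assoc]

lemma inv_comm (U : Rˣ) (M : R) (h : (U : R) * M = M * (U : R)) :
    U.inv * M = M * U.inv := by
  have h2 : U.inv * U.val * M * U.inv = U.inv * (M * U.val) * U.inv := by
    rw [mul_assoc U.inv U.val M, h]
  rw [U.inv_val, one_mul] at h2
  rw [h2, ← mul_assoc U.inv M U.val, mul_assoc, U.val_inv, mul_one]

lemma inv_anti (U : Rˣ) (M : R) (h : (U : R) * M = -(M * (U : R))) :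
    U.inv * M = -(M * U.inv) := by
  have h2 : U.inv * U.val * M * U.inv = U.inv * -(M * U.val) * U.inv := by
    rw [mul_assoc U.inv U.val M, h]
  rw [U.inv_val, one_mul] at h2
  have h3 : M * U.inv = -(U.inv * M) := by
    rw [h2, mul_neg, neg_mul, ← mul_assoc U.inv M U.val, mul_assoc (U.inv * M),
      U.val_inv, mul_one]
  rw [h3, neg_neg]

end MulLemmas

lemma omega_ne_zero {ω : ZMod p} (hω : ¬ IsSquare ω) : ω ≠ 0 :=
  fun h => hω ⟨0, by simp [h]⟩

lemma irr_quadratic (ω : ZMod p) (hω : ¬ IsSquare ω) :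
    Irreducible (X ^ 2 - C ω : (ZMod p)[X]) := by
  have hm : (X ^ 2 - C ω : (ZMod p)[X]).Monic := monic_X_pow_sub_C ω (by norm_num)
  rw [hm.irreducible_iff_roots_eq_zero_of_degree_le_three (by simp [natDegree_X_pow_sub_C])
    (by simp [natDegree_X_pow_sub_C])]
  by_contra h
  obtain ⟨r, hr⟩ := Multiset.exists_mem_of_ne_zero h
  rw [mem_roots hm.ne_zero] at hr
  apply hω
  have : r ^ 2 - ω = 0 := by simpa [IsRoot, eval_pow] using hr
  exact ⟨r, by linear_combination -this⟩

/-- matrices `X` with `M * X = 0` are zero since `M` is invertible -/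
lemma eq_zero_of_Mmat_mul {ω : ZMod p} (hω : ¬ IsSquare ω)
    (X : Matrix (Fin 4) (Fin 4) (ZMod p)) (h : Mmat ω * X = 0) : X = 0 := by
  have h2 : (ω⁻¹ • Mmat ω) * (Mmat ω * X) = X := by
    rw [← mul_assoc, Matrix.smul_mul, Mmat_sq, smul_smul,
      inv_mul_cancel₀ (omega_ne_zero hω), one_smul, one_mul]
  rw [h, mul_zero] at h2
  exact h2.symm

lemma not_comm_and_anti {ω : ZMod p} (hω : ¬ IsSquare ω) (hp : Odd p)
    (A : GL (Fin 4) (ZMod p))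
    (h1 : (A : Matrix (Fin 4) (Fin 4) (ZMod p)) * Mmat ω
        = Mmat ω * (A : Matrix (Fin 4) (Fin 4) (ZMod p)))
    (h2 : (A : Matrix (Fin 4) (Fin 4) (ZMod p)) * Mmat ω
        = -(Mmat ω * (A : Matrix (Fin 4) (Fin 4) (ZMod p)))) : False := by
  set X : Matrix (Fin 4) (Fin 4) (ZMod p) := (A : Matrix (Fin 4) (Fin 4) (ZMod p)) with hX
  have h3 : Mmat ω * X = -(Mmat ω * X) := h1.symm.trans h2
  have h4 : (2 : ZMod p) • (Mmat ω * X) = 0 := by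
    rw [two_smul]
    nth_rewrite 1 [h3]
    exact neg_add_cancel _
  have h5 : (2 : ZMod p) ≠ 0 := by
    intro hc
    have hdvd : p ∣ 2 := (ZMod.natCast_eq_zero_iff 2 p).mp (by exact_mod_cast hc)
    have hp2 : p = 2 := (Nat.prime_dvd_prime_iff_eq Fact.out Nat.prime_two).mp hdvd
    rw [hp2] at hp
    exact (by norm_num : ¬ Odd 2) hp
  have h6 : Mmat ω * X = 0 := by
    rcases smul_eq_zero.mp h4 with hc | hc
    · exact absurd hc h5
    · exact hc
  have h7 : X = 0 := eq_zero_of_Mmat_mul hω X h6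
  have h8 : X * (A⁻¹ : GL (Fin 4) (ZMod p)).val = 1 := by
    rw [hX]
    exact_mod_cast A.val_inv
  rw [h7, zero_mul] at h8
  have : (0 : Matrix (Fin 4) (Fin 4) (ZMod p)) ≠ 1 := by
    intro hc
    have := congrFun (congrFun hc 0) 0
    simp [Matrix.one_apply] at this
  exact this h8

lemma cardComm (ω : ZMod p) (hω : ¬ IsSquare ω) :
    Nat.card {A : GL (Fin 4) (ZMod p) //
        (A : Matrix (Fin 4) (Fin 4) (ZMod p)) * Mmat ω = Mmat ω * (A : Matrix (Fin 4) (Fin 4) (ZMod p))}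
      = (p ^ 4 - 1) * (p ^ 4 - p ^ 2) := by
  have hirr : Irreducible (X ^ 2 - C ω : (ZMod p)[X]) := irr_quadratic ω hω
  set f : (ZMod p)[X] := X ^ 2 - C ω with hf
  haveI : Fact (Irreducible f) := ⟨hirr⟩
  set K := AdjoinRoot f with hK
  have hfm : f.Monic := monic_X_pow_sub_C ω (by norm_num)
  let pb : PowerBasis (ZMod p) K := AdjoinRoot.powerBasis hfm.ne_zero
  haveI : Module.Finite (ZMod p) K := Module.Finite.of_basis pb.basis
  haveI : Finite K := Module.finite_of_finite (ZMod p)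
  letI : Fintype K := Fintype.ofFinite K
  have hcardK : Fintype.card K = p ^ 2 := by
    rw [Module.card_eq_pow_finrank (K := ZMod p) (V := K), ZMod.card, pb.finrank,
      AdjoinRoot.powerBasis_dim, hf, natDegree_X_pow_sub_C]
  set Mat := Matrix (Fin 4) (Fin 4) (ZMod p) with hMat
  set M : Mat := Mmat ω with hM
  -- commutative subalgebra generated by M
  letI AS : Subalgebra (ZMod p) Mat := Algebra.adjoin (ZMod p) {M}
  letI : CommRing AS := Algebra.adjoinCommRingOfComm (ZMod p)
    (by rintro a rfl b rfl; rfl)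
  let mroot : AS := ⟨M, Algebra.subset_adjoin rfl⟩
  have hroot : (aeval mroot) f = 0 := by
    have h2 : mroot ^ 2 = (algebraMap (ZMod p) AS) ω := by
      apply Subtype.ext
      push_cast [pow_two]
      show M * M = _
      rw [Mmat_sq]
      simp [Algebra.algebraMap_eq_smul_one]
    simp [hf, map_sub, map_pow, h2]
  let ψ : K →ₐ[ZMod p] Mat := AS.val.comp (AdjoinRoot.liftAlgHom f (Algebra.ofId _ _) mroot hroot)
  have hψroot : ψ (AdjoinRoot.root f) = M := by
    show AS.val ((AdjoinRoot.liftAlgHom f (Algebra.ofId _ _) mroot hroot) (AdjoinRoot.root f)) = M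
    exact congrArg AS.val (AdjoinRoot.liftAlgHom_root _ _ _ _)
  -- matrices commuting with M commute with all of ψ(K)
  have hcomm : ∀ A : Mat, M * A = A * M → ∀ k : K, A * ψ k = ψ k * A := by
    intro A hA k
    have htop : Algebra.adjoin (ZMod p) ({AdjoinRoot.root f} : Set K) = ⊤ :=
      AdjoinRoot.adjoinRoot_eq_top
    have hle : Algebra.adjoin (ZMod p) ({AdjoinRoot.root f} : Set K) ≤
        (Subalgebra.centralizer (ZMod p) ({A} : Set Mat)).comap ψ := by
      rw [Algebra.adjoin_le_iff]
      intro x hx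
      rw [Set.mem_singleton_iff] at hx
      subst hx
      rw [SetLike.mem_coe, Subalgebra.mem_comap, Subalgebra.mem_centralizer_iff]
      intro g hg
      rw [Set.mem_singleton_iff] at hg
      subst hg
      rw [hψroot]
      exact hA.symm
    rw [htop] at hle
    have hmem := hle (Algebra.mem_top (A := K) (x := k))
    rw [Subalgebra.mem_comap, Subalgebra.mem_centralizer_iff] at hmem
    exact hmem A rfl
  -- module structure on V
  set V := (Fin 4 → ZMod p) with hV
  letI : SMul K V := ⟨fun k v => ψ k *ᵥ v⟩
  have hsmul : ∀ (k : K) (v : V), k • v = ψ k *ᵥ v := fun _ _ => rfl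
  letI : Module K V :=
    { one_smul := fun v => by
        show ψ 1 *ᵥ v = v
        rw [map_one ψ, Matrix.one_mulVec]
      mul_smul := fun x y v => by
        show ψ (x * y) *ᵥ v = ψ x *ᵥ (ψ y *ᵥ v)
        rw [map_mul ψ, ← Matrix.mulVec_mulVec]
      smul_zero := fun k => by
        show ψ k *ᵥ 0 = 0
        rw [Matrix.mulVec_zero]
      smul_add := fun k u v => by
        show ψ k *ᵥ (u + v) = ψ k *ᵥ u + ψ k *ᵥ v
        rw [Matrix.mulVec_add]
      add_smul := fun x y v => by
        show ψ (x + y) *ᵥ v = ψ x *ᵥ v + ψ y *ᵥ v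
        rw [map_add ψ, Matrix.add_mulVec]
      zero_smul := fun v => by
        show ψ 0 *ᵥ v = 0
        rw [map_zero ψ, Matrix.zero_mulVec] }
  letI : IsScalarTower (ZMod p) K V := ⟨fun r k v => by
    show ψ (r • k) *ᵥ v = r • (ψ k *ᵥ v)
    rw [map_smul ψ, Matrix.smul_mulVec]⟩
  have hrankV : Module.finrank K V = 2 := by
    have hc1 : Fintype.card V = p ^ 4 := by
      show Fintype.card (Fin 4 → ZMod p) = p ^ 4
      simp [ZMod.card]
    have hc2 : Fintype.card V = Fintype.card K ^ Module.finrank K V :=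
      Module.card_eq_pow_finrank (K := K) (V := V)
    rw [hc1, hcardK, ← pow_mul] at hc2
    have h4 : 4 = 2 * Module.finrank K V :=
      Nat.pow_right_injective (Fact.out : p.Prime).two_le hc2
    omega
  let b : Module.Basis (Fin 2) K V := Module.finBasisOfFinrankEq K V hrankV
  -- helper
  have mulVec_ext : ∀ (P Q : Mat), (∀ v : V, P *ᵥ v = Q *ᵥ v) → P = Q := by
    intro P Q h
    ext i j
    have h2 := congrFun (h (Pi.single j 1)) i
    simpa [Matrix.mulVec_single] using h2
  -- the centralizer subring
  set Rc : Subring Mat := Subring.centralizer ({M} : Set Mat) with hRc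
  have hmemRc : ∀ X : Mat, X ∈ Rc ↔ M * X = X * M := by
    intro X
    rw [hRc, Subring.mem_centralizer_iff]
    constructor
    · intro h; exact h M rfl
    · rintro h g hg; rw [Set.mem_singleton_iff] at hg; subst hg; exact h
  have hXv : ∀ g : Module.End K V, ∀ v : V,
      (LinearMap.toMatrix' ((g : V →ₗ[K] V).restrictScalars (ZMod p))) *ᵥ v = g v := by
    intro g v
    rw [← Matrix.toLin'_apply, Matrix.toLin'_toMatrix']
    rfl
  have hMv : ∀ v : V, M *ᵥ v = (AdjoinRoot.root f) • v := by
    intro v; rw [hsmul, hψroot]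
  let RE : Rc ≃+* Module.End K V :=
    { toFun := fun A =>
        { toFun := fun v => (A : Mat) *ᵥ v
          map_add' := fun u v => Matrix.mulVec_add _ u v
          map_smul' := fun k v => by
            simp only [RingHom.id_apply, hsmul, Matrix.mulVec_mulVec]
            rw [hcomm (A : Mat) ((hmemRc _).mp A.2) k] }
      invFun := fun g =>
        ⟨LinearMap.toMatrix' ((g : V →ₗ[K] V).restrictScalars (ZMod p)), by
          rw [hmemRc]
          apply mulVec_ext
          intro v
          rw [← Matrix.mulVec_mulVec, ← Matrix.mulVec_mulVec, hXv, hMv, hMv, hXv]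
          exact ((g : V →ₗ[K] V).map_smul _ _).symm⟩
      left_inv := fun A => by
        apply Subtype.ext
        apply mulVec_ext
        intro v
        rw [hXv]
        rfl
      right_inv := fun g => by
        apply LinearMap.ext
        intro v
        exact hXv g v
      map_mul' := fun A B => by
        apply LinearMap.ext
        intro v
        show ((A : Mat) * (B : Mat)) *ᵥ v = (A : Mat) *ᵥ ((B : Mat) *ᵥ v)
        rw [Matrix.mulVec_mulVec]
      map_add' := fun A B => by
        apply LinearMap.ext
        intro v
        show ((A : Mat) + (B : Mat)) *ᵥ v = (A : Mat) *ᵥ v + (B : Mat) *ᵥ v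
        rw [Matrix.add_mulVec] }
  let E2 : Rcˣ ≃* (Module.End K V)ˣ := Units.mapEquiv RE.toMulEquiv
  let algE : Module.End K V ≃ₐ[K] Matrix (Fin 2) (Fin 2) K := LinearMap.toMatrixAlgEquiv b
  let E3 : (Module.End K V)ˣ ≃* GL (Fin 2) K :=
    Units.mapEquiv algE.toRingEquiv.toMulEquiv
  have inv_comm : ∀ (U : Matˣ), (U : Mat) * M = M * (U : Mat) → U.inv * M = M * U.inv := by
    intro U h
    have h2 : U.inv * U.val * M * U.inv = U.inv * M * U.val * U.inv := by
      rw [mul_assoc U.inv U.val M, h, ← mul_assoc U.inv M U.val]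
    rw [U.inv_val, one_mul] at h2
    rw [h2, mul_assoc, U.val_inv, mul_one]
  let E1 : {A : GL (Fin 4) (ZMod p) // (A : Mat) * M = M * (A : Mat)} ≃ Rcˣ :=
    { toFun := fun A =>
        { val := ⟨A.1.val, (hmemRc _).mpr A.2.symm⟩
          inv := ⟨A.1.inv, (hmemRc _).mpr (inv_comm A.1 A.2).symm⟩
          val_inv := Subtype.ext A.1.val_inv
          inv_val := Subtype.ext A.1.inv_val }
      invFun := fun u =>
        ⟨{ val := u.val.1, inv := u.inv.1,
           val_inv := congrArg Subtype.val u.val_inv,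
           inv_val := congrArg Subtype.val u.inv_val },
         ((hmemRc _).mp u.val.2).symm⟩
      left_inv := fun A => Subtype.ext (Units.ext rfl)
      right_inv := fun u => Units.ext (Subtype.ext rfl) }
  rw [Nat.card_congr (E1.trans (E2.toEquiv.trans E3.toEquiv))]
  rw [Matrix.card_GL_field]
  rw [Fin.prod_univ_two, hcardK]
  norm_num
  have h44 : (p ^ 2) ^ 2 = p ^ 4 := by ring
  rw [h44]

def A0mat : Matrix (Fin 4) (Fin 4) (ZMod p) := !![1,0,0,0; 0,1,0,0; 0,0,-1,0; 0,0,0,-1]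

lemma A0mat_sq : (A0mat (p := p)) * A0mat = 1 := by
  ext i j
  fin_cases i <;> fin_cases j <;>
    simp [A0mat, Matrix.mul_apply, Fin.sum_univ_four, Matrix.one_apply,
      Matrix.vecHead, Matrix.vecTail]

def A0gl : GL (Fin 4) (ZMod p) := ⟨A0mat, A0mat, A0mat_sq, A0mat_sq⟩

lemma A0_anti (ω : ZMod p) : (A0mat (p := p)) * Mmat ω = -(Mmat ω * A0mat) := by
  ext i j
  fin_cases i <;> fin_cases j <;>
    simp [A0mat, Mmat, Matrix.mul_apply, Fin.sum_univ_four,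
      Matrix.vecHead, Matrix.vecTail]

end Stmt12Aux

open Stmt12Aux in
/-- For ω a nonsquare mod p, the invertible 4×4 matrices of the two displayed shapes
form a subgroup of GL(4,p) of order 2(p^4-1)(p^4-p^2). -/
theorem stmt_12 (p : ℕ) [Fact p.Prime] (hp : Odd p)
    (ω : ZMod p) (hω : ¬ IsSquare ω) :
    ∃ H : Subgroup (GL (Fin 4) (ZMod p)),
      (∀ A : GL (Fin 4) (ZMod p), A ∈ H ↔
        ∃ α β γ δ ε ζ η θ : ZMod p,
          (A : Matrix (Fin 4) (Fin 4) (ZMod p)) =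
              !![α, β, γ, δ; ε, ζ, η, θ;
                 ω * θ, -(ω * η), -ζ, ε;
                 -(ω * δ), ω * γ, β, -α] ∨
          (A : Matrix (Fin 4) (Fin 4) (ZMod p)) =
              !![α, β, γ, δ; ε, ζ, η, θ;
                 -(ω * θ), ω * η, ζ, -ε;
                 ω * δ, -(ω * γ), -β, α]) ∧
      (Nat.card H : ℤ) = 2 * (p ^ 4 - 1) * (p ^ 4 - p ^ 2) := by
  classical
  let Mat := Matrix (Fin 4) (Fin 4) (ZMod p)
  let M : Mat := Mmat ω
  let Hgrp : Subgroup (GL (Fin 4) (ZMod p)) :=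
    { carrier := {A : GL (Fin 4) (ZMod p) |
        (A : Mat) * M = M * (A : Mat) ∨ (A : Mat) * M = -(M * (A : Mat))}
      one_mem' := Or.inl (by rw [Units.val_one, one_mul, mul_one])
      mul_mem' := by
        rintro a b (ha | ha) (hb | hb)
        · exact Or.inl (by rw [Units.val_mul]; exact comm_mul_comm ha hb)
        · exact Or.inr (by rw [Units.val_mul]; exact comm_mul_anti ha hb)
        · exact Or.inr (by rw [Units.val_mul]; exact anti_mul_comm ha hb)
        · exact Or.inl (by rw [Units.val_mul]; exact anti_mul_anti ha hb)
      inv_mem' := by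
        rintro a (ha | ha)
        · exact Or.inl (inv_comm a M ha)
        · exact Or.inr (inv_anti a M ha) }
  let Cgrp : Subgroup (GL (Fin 4) (ZMod p)) :=
    { carrier := {A : GL (Fin 4) (ZMod p) | (A : Mat) * M = M * (A : Mat)}
      one_mem' := by rw [Set.mem_setOf_eq, Units.val_one, one_mul, mul_one]
      mul_mem' := by
        intro a b ha hb
        rw [Set.mem_setOf_eq, Units.val_mul]
        exact comm_mul_comm ha hb
      inv_mem' := fun {a} ha => inv_comm a M ha }
  refine ⟨Hgrp, ?_, ?_⟩
  · intro A
    constructor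
    · rintro (h | h)
      · obtain ⟨α, β, γ, δ, ε, ζ, η, θ, h2⟩ := (shape2_iff ω _).mp h
        exact ⟨α, β, γ, δ, ε, ζ, η, θ, Or.inr h2⟩
      · obtain ⟨α, β, γ, δ, ε, ζ, η, θ, h2⟩ := (shape1_iff ω _).mp h
        exact ⟨α, β, γ, δ, ε, ζ, η, θ, Or.inl h2⟩
    · rintro ⟨α, β, γ, δ, ε, ζ, η, θ, h2 | h2⟩
      · exact Or.inr ((shape1_iff ω _).mpr ⟨α, β, γ, δ, ε, ζ, η, θ, h2⟩)
      · exact Or.inl ((shape2_iff ω _).mpr ⟨α, β, γ, δ, ε, ζ, η, θ, h2⟩)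
  · have hle : Cgrp ≤ Hgrp := fun A hA => Or.inl hA
    have ha0mem : A0gl ∈ Hgrp := Or.inr (A0_anti ω)
    have hidx : (Cgrp.subgroupOf Hgrp).index = 2 := by
      rw [Subgroup.index_eq_two_iff]
      refine ⟨⟨A0gl, ha0mem⟩, fun b => ?_⟩
      rcases b.2 with hb | hb
      · refine Or.inr ⟨Subgroup.mem_subgroupOf.mpr hb, fun hc => ?_⟩
        rw [Subgroup.mem_subgroupOf] at hc
        have hanti : ((b * ⟨A0gl, ha0mem⟩ : Hgrp) : GL (Fin 4) (ZMod p)).val * M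
            = -(M * ((b * ⟨A0gl, ha0mem⟩ : Hgrp) : GL (Fin 4) (ZMod p)).val) := by
          rw [Subgroup.coe_mul, Units.val_mul]
          exact comm_mul_anti hb (A0_anti ω)
        exact not_comm_and_anti hω hp _ hc hanti
      · refine Or.inl ⟨?_, fun hc => ?_⟩
        · rw [Subgroup.mem_subgroupOf]
          show ((b * ⟨A0gl, ha0mem⟩ : Hgrp) : GL (Fin 4) (ZMod p)).val * M
            = M * ((b * ⟨A0gl, ha0mem⟩ : Hgrp) : GL (Fin 4) (ZMod p)).val
          rw [Subgroup.coe_mul, Units.val_mul]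
          exact anti_mul_anti hb (A0_anti ω)
        · rw [Subgroup.mem_subgroupOf] at hc
          exact not_comm_and_anti hω hp _ hc hb
    have h1 := Subgroup.index_mul_card (Cgrp.subgroupOf Hgrp)
    have h2 : Nat.card (Cgrp.subgroupOf Hgrp) = Nat.card Cgrp :=
      Nat.card_congr (Subgroup.subgroupOfEquivOfLe hle).toEquiv
    have h3 : Nat.card Cgrp = (p ^ 4 - 1) * (p ^ 4 - p ^ 2) := by
      rw [← cardComm ω hω]
      exact Nat.card_congr (Equiv.subtypeEquivRight fun x => Iff.rfl)
    have hcard : Nat.card Hgrp = 2 * ((p ^ 4 - 1) * (p ^ 4 - p ^ 2)) := by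
      rw [← h1, hidx, h2, h3]
    rw [hcard]
    have e1 : 1 ≤ p ^ 4 := Nat.one_le_pow _ _ (Fact.out : p.Prime).pos
    have e2 : p ^ 2 ≤ p ^ 4 := Nat.pow_le_pow_right (Fact.out : p.Prime).pos (by norm_num)
    push_cast [Nat.cast_sub e1, Nat.cast_sub e2]
    ring
end

section
/- For an odd prime p, the group G = ⟨a,b,c,d | [c,b]=[d,a]=[d,c]=1, class 2, exponent p⟩ of order p^6 (with G' generated by [b,a],[c,a],[d,b]) has exactly p^4 + 2p^3 - p^2 - 2p + 1 conjugacy classes. -/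
open scoped commutatorElement

namespace Stmt14

variable {G : Type*} [Group G] {p : ℕ}

def pw (g : G) (x : ZMod p) : G := g ^ x.val

section PowCalc

variable (hE : ∀ g : G, g ^ p = 1)
include hE

lemma pow_mod (g : G) (m : ℕ) : g ^ (m % p) = g ^ m := by
  conv_rhs => rw [← Nat.div_add_mod m p, pow_add, pow_mul, hE, one_pow, one_mul]

variable [NeZero p]

lemma pw_add (g : G) (x y : ZMod p) : pw g (x + y) = pw g x * pw g y := by
  rw [pw, pw, pw, ZMod.val_add, pow_mod hE, pow_add]

omit hE in
lemma pw_zero (g : G) : pw g (0 : ZMod p) = 1 := by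
  rw [pw, ZMod.val_zero, pow_zero]

lemma mul_pw_self [Fact (1 < p)] (g : G) (x : ZMod p) : g * pw g x = pw g (1 + x) := by
  rw [pw, pw, ZMod.val_add, ZMod.val_one, pow_mod hE, pow_add, pow_one]

end PowCalc

section Comm

variable (hZ : ∀ g h k : G, Commute ⁅g, h⁆ k)
include hZ

lemma mul_eq_comm (g h : G) : g * h = ⁅g, h⁆ * (h * g) := by
  rw [commutatorElement_def]; group

lemma key_pow (g h : G) (m n : ℕ) :
    g ^ m * h ^ n = ⁅g, h⁆ ^ (m * n) * (h ^ n * g ^ m) := by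
  induction m with
  | zero => simp
  | succ m ih =>
    have base : ∀ k : ℕ, g * h ^ k = ⁅g, h⁆ ^ k * (h ^ k * g) := by
      intro k
      induction k with
      | zero => simp
      | succ k ihk =>
        calc g * h ^ (k+1) = (g * h ^ k) * h := by rw [pow_succ, mul_assoc]
          _ = ⁅g, h⁆ ^ k * (h ^ k * (g * h)) := by rw [ihk]; group
          _ = ⁅g, h⁆ ^ k * (h ^ k * (⁅g, h⁆ * (h * g))) := by rw [← mul_eq_comm hZ]
          _ = ⁅g, h⁆ ^ k * (⁅g, h⁆ * (h ^ k * (h * g))) := by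
              congr 1; rw [← mul_assoc, ← mul_assoc, ← (hZ g h (h ^ k)).eq]; group
          _ = ⁅g, h⁆ ^ (k+1) * (h ^ (k+1) * g) := by rw [pow_succ, pow_succ']; group
    calc g ^ (m+1) * h ^ n = g * (g ^ m * h ^ n) := by rw [pow_succ']; group
      _ = g * (⁅g, h⁆ ^ (m*n) * (h ^ n * g ^ m)) := by rw [ih]
      _ = ⁅g, h⁆ ^ (m*n) * ((g * h ^ n) * g ^ m) := by
          rw [← mul_assoc, ← ((hZ g h g).pow_left (m*n)).eq]; group
      _ = ⁅g, h⁆ ^ (m*n) * ((⁅g, h⁆ ^ n * (h ^ n * g)) * g ^ m) := by rw [base]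
      _ = ⁅g, h⁆ ^ ((m+1)*n) * (h ^ n * g ^ (m+1)) := by
          rw [Nat.succ_mul, pow_add, pow_succ]
          have hgg : g ^ m * g = g * g ^ m := ((Commute.refl g).pow_left m).eq
          calc ⁅g, h⁆ ^ (m*n) * (⁅g, h⁆ ^ n * (h ^ n * g) * g ^ m)
              = ⁅g, h⁆ ^ (m*n) * ⁅g, h⁆ ^ n * (h ^ n * (g * g ^ m)) := by group
            _ = ⁅g, h⁆ ^ (m*n) * ⁅g, h⁆ ^ n * (h ^ n * (g ^ m * g)) := by rw [hgg]

lemma mul_pw_swap (g h : G) (y : ZMod p) :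
    g * pw h y = pw ⁅g, h⁆ y * (pw h y * g) := by
  simp only [pw]
  simpa using key_pow hZ g h 1 y.val

end Comm

lemma mul_pw_comm {g h : G} (hgh : Commute g h) (y : ZMod p) :
    g * pw h y = pw h y * g := (hgh.pow_right y.val).eq

lemma shuttle {z A B : G} (h : Commute z A) : z * (A * B) = A * (z * B) := by
  rw [← mul_assoc, h.eq, mul_assoc]

lemma shuttleP {z A : G} (B : G) (h : ∀ k : G, Commute z k) (x : ZMod p) :
    pw z x * (A * B) = A * (pw z x * B) := shuttle ((h A).pow_left x.val)

/-- coordinate type -/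
abbrev Co (p : ℕ) := (ZMod p × ZMod p × ZMod p × ZMod p) × (ZMod p × ZMod p)

def Phi (a b c d : G) (w : Co p) : G :=
  pw a w.1.1 * (pw b w.1.2.1 * (pw c w.1.2.2.1 * (pw d w.1.2.2.2 *
    (pw ⁅b, a⁆ w.2.1 * pw ⁅c, a⁆ w.2.2))))

section Main

variable [Fact p.Prime]
variable {a b c d : G}
variable (hE : ∀ g : G, g ^ p = 1) (hZ : ∀ g h k : G, Commute ⁅g, h⁆ k)
include hE hZ

lemma step_a (α β γ δ u v : ZMod p) :
    a * Phi a b c d ((α, β, γ, δ), (u, v)) = Phi a b c d ((1 + α, β, γ, δ), (u, v)) := by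
  simp only [Phi]
  rw [← mul_assoc, mul_pw_self hE]

lemma step_b (α β γ δ u v : ZMod p) :
    b * Phi a b c d ((α, β, γ, δ), (u, v)) =
      Phi a b c d ((α, 1 + β, γ, δ), (α + u, v)) := by
  simp only [Phi]
  rw [← mul_assoc, mul_pw_swap hZ b a α]
  simp only [mul_assoc]
  rw [← mul_assoc b (pw b β), mul_pw_self hE]
  rw [shuttleP _ (hZ b a) α, shuttleP _ (hZ b a) α, shuttleP _ (hZ b a) α,
    shuttleP _ (hZ b a) α]
  rw [← mul_assoc (pw ⁅b,a⁆ α), ← pw_add hE]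

lemma step_c (h1 : ⁅c, b⁆ = 1) (α β γ δ u v : ZMod p) :
    c * Phi a b c d ((α, β, γ, δ), (u, v)) =
      Phi a b c d ((α, β, 1 + γ, δ), (u, α + v)) := by
  have hcb : Commute c b := commutatorElement_eq_one_iff_commute.mp h1
  simp only [Phi]
  rw [← mul_assoc, mul_pw_swap hZ c a α]
  simp only [mul_assoc]
  rw [← mul_assoc c (pw b β), mul_pw_comm hcb, mul_assoc]
  rw [← mul_assoc c (pw c γ), mul_pw_self hE]
  rw [shuttleP _ (hZ c a) α, shuttleP _ (hZ c a) α, shuttleP _ (hZ c a) α,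
    shuttleP _ (hZ c a) α, shuttleP _ (hZ c a) α]
  rw [← pw_add hE]

lemma step_d (h2 : ⁅d, a⁆ = 1) (h3 : ⁅d, b⁆ = ⁅b, a⁆) (h4 : ⁅d, c⁆ = 1)
    (α β γ δ u v : ZMod p) :
    d * Phi a b c d ((α, β, γ, δ), (u, v)) =
      Phi a b c d ((α, β, γ, 1 + δ), (β + u, v)) := by
  have hda : Commute d a := commutatorElement_eq_one_iff_commute.mp h2
  have hdc : Commute d c := commutatorElement_eq_one_iff_commute.mp h4
  simp only [Phi]
  rw [← mul_assoc, mul_pw_comm hda, mul_assoc]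
  rw [← mul_assoc d (pw b β), mul_pw_swap hZ d b β, h3]
  simp only [mul_assoc]
  rw [← mul_assoc d (pw c γ), mul_pw_comm hdc, mul_assoc]
  rw [← mul_assoc d (pw d δ), mul_pw_self hE]
  rw [shuttleP _ (hZ b a) β, shuttleP _ (hZ b a) β, shuttleP _ (hZ b a) β]
  rw [← mul_assoc (pw ⁅b,a⁆ β), ← pw_add hE]

lemma step_z1 (α β γ δ u v : ZMod p) :
    ⁅b, a⁆ * Phi a b c d ((α, β, γ, δ), (u, v)) =
      Phi a b c d ((α, β, γ, δ), (1 + u, v)) := by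
  simp only [Phi]
  rw [shuttle (hZ b a (pw a α))]
  rw [shuttle (hZ b a (pw b β))]
  rw [shuttle (hZ b a (pw c γ))]
  rw [shuttle (hZ b a (pw d δ))]
  rw [← mul_assoc ⁅b,a⁆, mul_pw_self hE]

lemma step_z2 (α β γ δ u v : ZMod p) :
    ⁅c, a⁆ * Phi a b c d ((α, β, γ, δ), (u, v)) =
      Phi a b c d ((α, β, γ, δ), (u, 1 + v)) := by
  simp only [Phi]
  rw [shuttle (hZ c a (pw a α))]
  rw [shuttle (hZ c a (pw b β))]
  rw [shuttle (hZ c a (pw c γ))]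
  rw [shuttle (hZ c a (pw d δ))]
  rw [shuttle (hZ c a (pw ⁅b,a⁆ u))]
  rw [mul_pw_self hE]


lemma La_nat (n : ℕ) (α β γ δ u v : ZMod p) :
    a ^ n * Phi a b c d ((α, β, γ, δ), (u, v)) =
      Phi a b c d (((n : ZMod p) + α, β, γ, δ), (u, v)) := by
  induction n with
  | zero => simp
  | succ n ih =>
    rw [pow_succ', mul_assoc, ih, step_a hE hZ]
    have e1 : (1 : ZMod p) + ((n : ZMod p) + α) = ((n+1 : ℕ) : ZMod p) + α := by
      push_cast; ring
    rw [e1]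

lemma Lb_nat (n : ℕ) (α β γ δ u v : ZMod p) :
    b ^ n * Phi a b c d ((α, β, γ, δ), (u, v)) =
      Phi a b c d ((α, (n : ZMod p) + β, γ, δ), ((n : ZMod p) * α + u, v)) := by
  induction n with
  | zero => simp
  | succ n ih =>
    rw [pow_succ', mul_assoc, ih, step_b hE hZ]
    have e1 : (1 : ZMod p) + ((n : ZMod p) + β) = ((n+1 : ℕ) : ZMod p) + β := by
      push_cast; ring
    have e2 : α + ((n : ZMod p) * α + u) = ((n+1 : ℕ) : ZMod p) * α + u := by
      push_cast; ring
    rw [e1, e2]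

lemma Lc_nat (h1 : ⁅c, b⁆ = 1) (n : ℕ) (α β γ δ u v : ZMod p) :
    c ^ n * Phi a b c d ((α, β, γ, δ), (u, v)) =
      Phi a b c d ((α, β, (n : ZMod p) + γ, δ), (u, (n : ZMod p) * α + v)) := by
  induction n with
  | zero => simp
  | succ n ih =>
    rw [pow_succ', mul_assoc, ih, step_c hE hZ h1]
    have e1 : (1 : ZMod p) + ((n : ZMod p) + γ) = ((n+1 : ℕ) : ZMod p) + γ := by
      push_cast; ring
    have e2 : α + ((n : ZMod p) * α + v) = ((n+1 : ℕ) : ZMod p) * α + v := by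
      push_cast; ring
    rw [e1, e2]

lemma Ld_nat (h2 : ⁅d, a⁆ = 1) (h3 : ⁅d, b⁆ = ⁅b, a⁆) (h4 : ⁅d, c⁆ = 1)
    (n : ℕ) (α β γ δ u v : ZMod p) :
    d ^ n * Phi a b c d ((α, β, γ, δ), (u, v)) =
      Phi a b c d ((α, β, γ, (n : ZMod p) + δ), ((n : ZMod p) * β + u, v)) := by
  induction n with
  | zero => simp
  | succ n ih =>
    rw [pow_succ', mul_assoc, ih, step_d hE hZ h2 h3 h4]
    have e1 : (1 : ZMod p) + ((n : ZMod p) + δ) = ((n+1 : ℕ) : ZMod p) + δ := by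
      push_cast; ring
    have e2 : β + ((n : ZMod p) * β + u) = ((n+1 : ℕ) : ZMod p) * β + u := by
      push_cast; ring
    rw [e1, e2]

lemma Lz1_nat (n : ℕ) (α β γ δ u v : ZMod p) :
    ⁅b, a⁆ ^ n * Phi a b c d ((α, β, γ, δ), (u, v)) =
      Phi a b c d ((α, β, γ, δ), ((n : ZMod p) + u, v)) := by
  induction n with
  | zero => simp
  | succ n ih =>
    rw [pow_succ', mul_assoc, ih, step_z1 hE hZ]
    have e1 : (1 : ZMod p) + ((n : ZMod p) + u) = ((n+1 : ℕ) : ZMod p) + u := by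
      push_cast; ring
    rw [e1]

lemma Lz2_nat (n : ℕ) (α β γ δ u v : ZMod p) :
    ⁅c, a⁆ ^ n * Phi a b c d ((α, β, γ, δ), (u, v)) =
      Phi a b c d ((α, β, γ, δ), (u, (n : ZMod p) + v)) := by
  induction n with
  | zero => simp
  | succ n ih =>
    rw [pow_succ', mul_assoc, ih, step_z2 hE hZ]
    have e1 : (1 : ZMod p) + ((n : ZMod p) + v) = ((n+1 : ℕ) : ZMod p) + v := by
      push_cast; ring
    rw [e1]

lemma Phi_mul (h1 : ⁅c, b⁆ = 1) (h2 : ⁅d, a⁆ = 1) (h3 : ⁅d, b⁆ = ⁅b, a⁆)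
    (h4 : ⁅d, c⁆ = 1) (A B C D s t α β γ δ u v : ZMod p) :
    Phi a b c d ((A, B, C, D), (s, t)) * Phi a b c d ((α, β, γ, δ), (u, v)) =
      Phi a b c d ((A + α, B + β, C + γ, D + δ),
        (B * α + (D * β + (s + u)), C * α + (t + v))) := by
  have hval : ∀ y : ZMod p, ((y.val : ℕ) : ZMod p) = y := fun y => by
    rw [ZMod.natCast_val, ZMod.cast_id]
  conv_lhs => rw [show Phi a b c d ((A, B, C, D), (s, t)) =
    pw a A * (pw b B * (pw c C * (pw d D * (pw ⁅b, a⁆ s * pw ⁅c, a⁆ t)))) from rfl]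
  simp only [mul_assoc, pw]
  rw [Lz2_nat hE hZ t.val, hval]
  rw [Lz1_nat hE hZ s.val, hval]
  rw [Ld_nat hE hZ h2 h3 h4 D.val, hval]
  rw [Lc_nat hE hZ h1 C.val, hval]
  rw [Lb_nat hE hZ B.val, hval]
  rw [La_nat hE hZ A.val, hval]


omit hE hZ in
lemma Phi_one : Phi a b c d (((0,0,0,0),(0,0)) : Co p) = 1 := by
  simp [Phi, pw_zero]

omit hE hZ in
lemma Phi_surj (hgen : Subgroup.closure ({a, b, c, d} : Set G) = ⊤)
    (h1 : ⁅c, b⁆ = 1) (h2 : ⁅d, a⁆ = 1) (h3 : ⁅d, b⁆ = ⁅b, a⁆) (h4 : ⁅d, c⁆ = 1)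
    (hE : ∀ g : G, g ^ p = 1) (hZ : ∀ g h k : G, Commute ⁅g, h⁆ k) :
    Function.Surjective (Phi a b c d : Co p → G) := by
  set S := Set.range (Phi a b c d : Co p → G) with hS
  have hpow : ∀ g : G, (∀ x : Co p, g * Phi a b c d x ∈ S) →
      ∀ n : ℕ, ∀ x : Co p, g ^ n * Phi a b c d x ∈ S := by
    intro g hg n
    induction n with
    | zero => intro x; rw [pow_zero, one_mul]; exact ⟨x, rfl⟩
    | succ n ih =>
      intro x
      rw [pow_succ', mul_assoc]
      obtain ⟨y, hy⟩ := ih x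
      rw [← hy]
      exact hg y
  let M : Subgroup G :=
  { carrier := {g | ∀ x : Co p, g * Phi a b c d x ∈ S}
    one_mem' := fun x => by rw [one_mul]; exact ⟨x, rfl⟩
    mul_mem' := by
      intro g h hg hh x
      rw [mul_assoc]
      obtain ⟨y, hy⟩ := hh x
      rw [← hy]
      exact hg y
    inv_mem' := by
      intro g hg
      have h9 : g⁻¹ = g ^ (p - 1) := by
        have hp1 : p - 1 + 1 = p := Nat.succ_pred_eq_of_pos (Fact.out : p.Prime).pos
        have : g ^ (p - 1) * g = 1 := by rw [← pow_succ, hp1, hE]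
        exact inv_eq_of_mul_eq_one_left this
      intro x
      rw [h9]
      exact hpow g hg (p - 1) x }
  have hM : ∀ g : G, g ∈ M := by
    have hle : Subgroup.closure ({a, b, c, d} : Set G) ≤ M := by
      rw [Subgroup.closure_le]
      rintro g hgmem
      simp only [Set.mem_insert_iff, Set.mem_singleton_iff] at hgmem
      rcases hgmem with rfl | rfl | rfl | rfl
      · rintro ⟨⟨α, β, γ, δ⟩, u, v⟩
        rw [step_a hE hZ]; exact ⟨_, rfl⟩
      · rintro ⟨⟨α, β, γ, δ⟩, u, v⟩
        rw [step_b hE hZ]; exact ⟨_, rfl⟩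
      · rintro ⟨⟨α, β, γ, δ⟩, u, v⟩
        rw [step_c hE hZ h1]; exact ⟨_, rfl⟩
      · rintro ⟨⟨α, β, γ, δ⟩, u, v⟩
        rw [step_d hE hZ h2 h3 h4]; exact ⟨_, rfl⟩
    intro g
    rw [hgen] at hle
    exact hle (Subgroup.mem_top g)
  intro g
  have := hM g (((0,0,0,0),(0,0)) : Co p)
  rw [Phi_one, mul_one] at this
  exact this

omit hE hZ in
lemma card_Co : Nat.card (Co p) = p ^ 6 := by
  simp only [Co, Nat.card_prod, Nat.card_zmod]
  ring

omit hE hZ in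
lemma Phi_bij (hgen : Subgroup.closure ({a, b, c, d} : Set G) = ⊤)
    (h1 : ⁅c, b⁆ = 1) (h2 : ⁅d, a⁆ = 1) (h3 : ⁅d, b⁆ = ⁅b, a⁆) (h4 : ⁅d, c⁆ = 1)
    (hE : ∀ g : G, g ^ p = 1) (hZ : ∀ g h k : G, Commute ⁅g, h⁆ k)
    (hcard : Nat.card G = p ^ 6) :
    Function.Bijective (Phi a b c d : Co p → G) := by
  have hfin : Finite G := by
    have : 0 < Nat.card G := by
      rw [hcard]
      exact pow_pos (Fact.out : p.Prime).pos 6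
    exact (Nat.card_pos_iff.mp this).2
  refine (Nat.bijective_iff_surjective_and_card _).mpr
    ⟨Phi_surj hgen h1 h2 h3 h4 hE hZ, ?_⟩
  rw [card_Co, hcard]

lemma commute_iff (h1 : ⁅c, b⁆ = 1) (h2 : ⁅d, a⁆ = 1) (h3 : ⁅d, b⁆ = ⁅b, a⁆)
    (h4 : ⁅d, c⁆ = 1) (hbij : Function.Bijective (Phi a b c d : Co p → G))
    (A B C D s t α β γ δ u v : ZMod p) :
    Commute (Phi a b c d ((A, B, C, D), (s, t))) (Phi a b c d ((α, β, γ, δ), (u, v))) ↔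
      (B * α + D * β = A * β + B * δ ∧ C * α = A * γ) := by
  unfold Commute SemiconjBy
  rw [Phi_mul hE hZ h1 h2 h3 h4, Phi_mul hE hZ h1 h2 h3 h4, hbij.injective.eq_iff]
  simp only [Prod.mk.injEq]
  constructor
  · rintro ⟨-, hz1, hz2⟩
    exact ⟨by linear_combination hz1, by linear_combination hz2⟩
  · rintro ⟨e1, e2⟩
    exact ⟨⟨add_comm _ _, add_comm _ _, add_comm _ _, add_comm _ _⟩,
      by linear_combination e1, by linear_combination e2⟩

end Main

end Stmt14


namespace Stmt14C

open Finset

lemma nat_card_sigma {ι : Type*} [Fintype ι] (f : ι → Type*) [∀ i, Finite (f i)] :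
    Nat.card (Sigma f) = ∑ i, Nat.card (f i) := by
  classical
  letI : ∀ i, Fintype (f i) := fun i => Fintype.ofFinite _
  simp [Nat.card_eq_fintype_card, Fintype.card_sigma]

lemma sum_ite_eq_elem {α : Type*} [Fintype α] [DecidableEq α] (a0 : α) (f0 c : ℕ) :
    (∑ z : α, if z = a0 then f0 else c) = f0 + (Fintype.card α - 1) * c := by
  classical
  rw [← Finset.add_sum_erase Finset.univ _ (Finset.mem_univ a0), if_pos rfl]
  congr 1
  rw [Finset.sum_congr rfl (fun x hx => if_neg (Finset.ne_of_mem_erase hx)),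
    Finset.sum_const, smul_eq_mul, Finset.card_erase_of_mem (Finset.mem_univ _),
    Finset.card_univ]

variable (p : ℕ) [Fact p.Prime]

local notation "F" => ZMod p

lemma fiber1 (z : F) : Nat.card {w : F // z * w = 0} = if z = 0 then p else 1 := by
  rcases eq_or_ne z 0 with rfl | hz
  · rw [if_pos rfl, Nat.card_congr (Equiv.subtypeUnivEquiv (by simp)), Nat.card_zmod]
  · rw [if_neg hz,
      Nat.card_congr (Equiv.subtypeEquivRight (q := fun w : F => w = 0)
        (fun w => by simp [hz, mul_eq_zero]))]
    simp [Nat.card_eq_fintype_card, Fintype.card_subtype_eq]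

lemma cardA : Nat.card {w : F × F // w.1 * w.2 = 0} = p + (p - 1) := by
  rw [Nat.card_congr (Equiv.subtypeProdEquivSigmaSubtype (fun z w : F => z * w = 0)),
    nat_card_sigma]
  calc (∑ z : F, Nat.card {w : F // z * w = 0})
      = ∑ z : F, if z = 0 then p else 1 := by
        exact Finset.sum_congr rfl fun z _ => fiber1 p z
    _ = p + (Fintype.card F - 1) * 1 := sum_ite_eq_elem 0 p 1
    _ = p + (p - 1) := by rw [ZMod.card, mul_one]

lemma fiber3 (x : F) : Nat.card {v : F × F × F // x * v.1 = v.2.1 * v.2.2} =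
    if x = 0 then p * (p + (p - 1)) else p ^ 2 := by
  rcases eq_or_ne x 0 with rfl | hx
  · rw [if_pos rfl]
    have e : {v : F × F × F // (0:F) * v.1 = v.2.1 * v.2.2} ≃
        F × {w : F × F // w.1 * w.2 = 0} :=
      { toFun := fun v => (v.1.1, ⟨v.1.2, by
          have h := v.2; rw [zero_mul] at h; exact h.symm⟩)
        invFun := fun w => ⟨(w.1, w.2.1), by rw [zero_mul]; exact w.2.2.symm⟩
        left_inv := fun ⟨⟨y, z, w⟩, h⟩ => rfl
        right_inv := fun ⟨y, ⟨⟨z, w⟩, h⟩⟩ => rfl }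
    rw [Nat.card_congr e, Nat.card_prod, Nat.card_zmod, cardA]
  · rw [if_neg hx]
    have e : {v : F × F × F // x * v.1 = v.2.1 * v.2.2} ≃ F × F :=
      { toFun := fun v => v.1.2
        invFun := fun zw => ⟨(x⁻¹ * (zw.1 * zw.2), zw.1, zw.2), by field_simp⟩
        left_inv := fun ⟨⟨y, z, w⟩, h⟩ => Subtype.ext (by
          simp only []
          have : y = x⁻¹ * (z * w) := by field_simp; linear_combination h
          rw [this])
        right_inv := fun zw => rfl }
    rw [Nat.card_congr e, Nat.card_prod, Nat.card_zmod]
    ring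

lemma cardB : Nat.card {v : F × F × F × F // v.1 * v.2.1 = v.2.2.1 * v.2.2.2} =
    p * (p + (p - 1)) + (p - 1) * p ^ 2 := by
  rw [Nat.card_congr (Equiv.subtypeProdEquivSigmaSubtype
    (fun x (v : F × F × F) => x * v.1 = v.2.1 * v.2.2)), nat_card_sigma]
  calc (∑ x : F, Nat.card {v : F × F × F // x * v.1 = v.2.1 * v.2.2})
      = ∑ x : F, if x = 0 then p * (p + (p - 1)) else p ^ 2 :=
        Finset.sum_congr rfl fun x _ => fiber3 p x
    _ = p * (p + (p - 1)) + (Fintype.card F - 1) * p ^ 2 :=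
        sum_ite_eq_elem 0 _ _
    _ = _ := by rw [ZMod.card]

def chvar (A α : F) : (F × F × F × F) ≃ (F × F × F × F) :=
  { toFun := fun q => (q.1, α - q.2.2.2, A - q.2.1, q.2.2.1)
    invFun := fun q => (q.1, A - q.2.2.1, q.2.2.2, α - q.2.1)
    left_inv := fun ⟨B, D, β, δ⟩ => by simp
    right_inv := fun ⟨x, y, z, w⟩ => by simp }

lemma cardQ1 (A α : F) :
    Nat.card {q : F × F × F × F //
      q.1 * α + q.2.1 * q.2.2.1 = A * q.2.2.1 + q.1 * q.2.2.2} =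
    p * (p + (p - 1)) + (p - 1) * p ^ 2 := by
  set e := chvar p A α with he
  have hiff : ∀ q : F × F × F × F,
      (q.1 * α + q.2.1 * q.2.2.1 = A * q.2.2.1 + q.1 * q.2.2.2) ↔
      ((e q).1 * (e q).2.1 = (e q).2.2.1 * (e q).2.2.2) := by
    rintro ⟨B, D, β, δ⟩
    simp only [he, chvar, Equiv.coe_fn_mk]
    constructor <;> intro h <;> linear_combination h
  rw [Nat.card_congr (Equiv.subtypeEquiv
    (q := fun v : F × F × F × F => v.1 * v.2.1 = v.2.2.1 * v.2.2.2) e hiff), cardB]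

lemma cardQ2 (A α : F) :
    Nat.card {r : F × F // r.1 * α = A * r.2} =
      if (A, α) = ((0 : F), (0 : F)) then p ^ 2 else p := by
  rcases eq_or_ne (A, α) ((0:F), (0:F)) with h | h
  · obtain ⟨hA, hα⟩ := Prod.ext_iff.mp h
    subst hA; subst hα
    rw [if_pos rfl, Nat.card_congr (Equiv.subtypeUnivEquiv (by simp)),
      Nat.card_prod, Nat.card_zmod]
    ring
  · rw [if_neg h]
    rcases eq_or_ne α 0 with rfl | hα
    · have hA : A ≠ 0 := fun hA => h (by rw [hA])
      have e : {r : F × F // r.1 * (0:F) = A * r.2} ≃ F :=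
        { toFun := fun r => r.1.1
          invFun := fun C => ⟨(C, 0), by simp⟩
          left_inv := fun ⟨⟨C, γ⟩, hr⟩ => Subtype.ext (by
            have : γ = 0 := by
              have := hr
              simp only [mul_zero] at this
              rcases mul_eq_zero.mp this.symm with h' | h'
              · exact absurd h' hA
              · exact h'
            simp [this])
          right_inv := fun C => rfl }
      rw [Nat.card_congr e, Nat.card_zmod]
    · have e : {r : F × F // r.1 * α = A * r.2} ≃ F :=
        { toFun := fun r => r.1.2
          invFun := fun γ => ⟨(A * γ * α⁻¹, γ), by field_simp⟩
          left_inv := fun ⟨⟨C, γ⟩, hr⟩ => Subtype.ext (by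
            simp only []
            have : A * γ * α⁻¹ = C := by field_simp; linear_combination -hr
            rw [this])
          right_inv := fun γ => rfl }
      rw [Nat.card_congr e, Nat.card_zmod]


def reorder : (((F × F × F × F) × (F × F)) × ((F × F × F × F) × (F × F))) ≃
    (((F × F) × ((F × F × F × F) × (F × F))) × ((F × F) × (F × F))) :=
  { toFun := fun cc =>
      (((cc.1.1.1, cc.2.1.1), ((cc.1.1.2.1, cc.1.1.2.2.2, cc.2.1.2.1, cc.2.1.2.2.2),
        (cc.1.1.2.2.1, cc.2.1.2.2.1))), (cc.1.2, cc.2.2))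
    invFun := fun y =>
      (((y.1.1.1, y.1.2.1.1, y.1.2.2.1, y.1.2.1.2.1), y.2.1),
       ((y.1.1.2, y.1.2.1.2.2.1, y.1.2.2.2, y.1.2.1.2.2.2), y.2.2))
    left_inv := fun ⟨⟨⟨A, B, C, D⟩, st⟩, ⟨⟨α, β, γ, δ⟩, uv⟩⟩ => rfl
    right_inv := fun ⟨⟨⟨A, α⟩, ⟨⟨B, D, β, δ⟩, ⟨C, γ⟩⟩⟩, ⟨st, uv⟩⟩ => rfl }

lemma card_PP :
    Nat.card {cc : ((F × F × F × F) × (F × F)) × ((F × F × F × F) × (F × F)) //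
      cc.1.1.2.1 * cc.2.1.1 + cc.1.1.2.2.2 * cc.2.1.2.1 =
        cc.1.1.1 * cc.2.1.2.1 + cc.1.1.2.1 * cc.2.1.2.2.2 ∧
      cc.1.1.2.2.1 * cc.2.1.1 = cc.1.1.1 * cc.2.1.2.2.1} =
    ((p * (p + (p - 1)) + (p - 1) * p ^ 2) * p ^ 2 +
      (p ^ 2 - 1) * ((p * (p + (p - 1)) + (p - 1) * p ^ 2) * p)) * p ^ 4 := by
  have e1 := Equiv.subtypeEquiv (p := fun cc :
      ((F × F × F × F) × (F × F)) × ((F × F × F × F) × (F × F)) =>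
      cc.1.1.2.1 * cc.2.1.1 + cc.1.1.2.2.2 * cc.2.1.2.1 =
        cc.1.1.1 * cc.2.1.2.1 + cc.1.1.2.1 * cc.2.1.2.2.2 ∧
      cc.1.1.2.2.1 * cc.2.1.1 = cc.1.1.1 * cc.2.1.2.2.1)
    (q := fun y : ((F × F) × ((F × F × F × F) × (F × F))) × ((F × F) × (F × F)) =>
      y.1.2.1.1 * y.1.1.2 + y.1.2.1.2.1 * y.1.2.1.2.2.1 =
        y.1.1.1 * y.1.2.1.2.2.1 + y.1.2.1.1 * y.1.2.1.2.2.2 ∧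
      y.1.2.2.1 * y.1.1.2 = y.1.1.1 * y.1.2.2.2)
    (reorder p) (fun cc => by
      obtain ⟨⟨⟨A, B, C, D⟩, st⟩, ⟨⟨α, β, γ, δ⟩, uv⟩⟩ := cc
      exact Iff.rfl)
  rw [Nat.card_congr e1]
  rw [Nat.card_congr (Equiv.prodSubtypeFstEquivSubtypeProd
    (p := fun w : (F × F) × ((F × F × F × F) × (F × F)) =>
      w.2.1.1 * w.1.2 + w.2.1.2.1 * w.2.1.2.2.1 =
        w.1.1 * w.2.1.2.2.1 + w.2.1.1 * w.2.1.2.2.2 ∧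
      w.2.2.1 * w.1.2 = w.1.1 * w.2.2.2))]
  rw [Nat.card_prod]
  congr 1
  · rw [Nat.card_congr (Equiv.subtypeProdEquivSigmaSubtype
      (fun (Aα : F × F) (y : (F × F × F × F) × (F × F)) =>
        y.1.1 * Aα.2 + y.1.2.1 * y.1.2.2.1 = Aα.1 * y.1.2.2.1 + y.1.1 * y.1.2.2.2 ∧
        y.2.1 * Aα.2 = Aα.1 * y.2.2)), nat_card_sigma]
    have hfib : ∀ Aα : F × F,
        Nat.card {y : (F × F × F × F) × (F × F) //
          y.1.1 * Aα.2 + y.1.2.1 * y.1.2.2.1 = Aα.1 * y.1.2.2.1 + y.1.1 * y.1.2.2.2 ∧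
          y.2.1 * Aα.2 = Aα.1 * y.2.2} =
        if Aα = ((0 : F), (0 : F)) then
          (p * (p + (p - 1)) + (p - 1) * p ^ 2) * p ^ 2
        else (p * (p + (p - 1)) + (p - 1) * p ^ 2) * p := by
      intro Aα
      rw [Nat.card_congr (Equiv.subtypeProdEquivProd
        (p := fun q : F × F × F × F =>
          q.1 * Aα.2 + q.2.1 * q.2.2.1 = Aα.1 * q.2.2.1 + q.1 * q.2.2.2)
        (q := fun r : F × F => r.1 * Aα.2 = Aα.1 * r.2)), Nat.card_prod,
        cardQ1 p Aα.1 Aα.2, cardQ2 p Aα.1 Aα.2]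
      simp only [Prod.mk.eta]
      split <;> ring
    calc (∑ Aα : F × F, Nat.card {y : (F × F × F × F) × (F × F) //
          y.1.1 * Aα.2 + y.1.2.1 * y.1.2.2.1 = Aα.1 * y.1.2.2.1 + y.1.1 * y.1.2.2.2 ∧
          y.2.1 * Aα.2 = Aα.1 * y.2.2})
        = ∑ Aα : F × F, if Aα = ((0 : F), (0 : F)) then
            (p * (p + (p - 1)) + (p - 1) * p ^ 2) * p ^ 2
          else (p * (p + (p - 1)) + (p - 1) * p ^ 2) * p :=
          Finset.sum_congr rfl fun Aα _ => hfib Aα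
      _ = _ := by
          rw [sum_ite_eq_elem ((0 : F), (0 : F)) _ _, Fintype.card_prod, ZMod.card]
          ring_nf
  · simp only [Nat.card_prod, Nat.card_zmod]
    ring

end Stmt14C


/-- Group 6.4.2: the class-2 exponent-p group of order p^6 on generators a,b,c,d
with relations [c,b]=1, [d,a]=1, [d,b]=[b,a], [d,c]=1 has exactly
p^4 + 2p^3 - p^2 - 2p + 1 conjugacy classes. -/
theorem stmt_14 (p : ℕ) [Fact p.Prime] (hp : Odd p)
    (G : Type*) [Group G]
    (a b c d : G)
    (hgen : Subgroup.closure {a, b, c, d} = ⊤)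
    (h1 : ⁅c, b⁆ = 1) (h2 : ⁅d, a⁆ = 1) (h3 : ⁅d, b⁆ = ⁅b, a⁆) (h4 : ⁅d, c⁆ = 1)
    (hcard : Nat.card G = p ^ 6)
    (hexp : Monoid.exponent G = p)
    (hclass : Subgroup.upperCentralSeries G 2 = ⊤) :
    (Nat.card (ConjClasses G) : ℤ) = p ^ 4 + 2 * p ^ 3 - p ^ 2 - 2 * p + 1 := by
  have hE : ∀ g : G, g ^ p = 1 := fun g => by
    rw [← hexp]; exact Monoid.pow_exponent_eq_one g
  have hcent : ∀ g h : G, ⁅g, h⁆ ∈ Subgroup.center G := by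
    intro g h
    have hg : g ∈ Subgroup.upperCentralSeries G 2 := by rw [hclass]; exact Subgroup.mem_top g
    have := (Subgroup.mem_upperCentralSeries_succ_iff (n := 1)).mp hg h
    rwa [Subgroup.upperCentralSeries_one] at this
  have hZ : ∀ g h k : G, Commute ⁅g, h⁆ k := fun g h k =>
    ((Subgroup.mem_center_iff.mp (hcent g h)) k).symm
  have hbij : Function.Bijective (Stmt14.Phi a b c d : Stmt14.Co p → G) :=
    Stmt14.Phi_bij hgen h1 h2 h3 h4 hE hZ hcard
  set E := Equiv.ofBijective _ hbij with hE2
  have hpairs : Nat.card {gg : G × G // Commute gg.1 gg.2} =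
      ((p * (p + (p - 1)) + (p - 1) * p ^ 2) * p ^ 2 +
        (p ^ 2 - 1) * ((p * (p + (p - 1)) + (p - 1) * p ^ 2) * p)) * p ^ 4 := by
    have e := Equiv.subtypeEquiv
      (p := fun cc : Stmt14.Co p × Stmt14.Co p =>
        cc.1.1.2.1 * cc.2.1.1 + cc.1.1.2.2.2 * cc.2.1.2.1 =
          cc.1.1.1 * cc.2.1.2.1 + cc.1.1.2.1 * cc.2.1.2.2.2 ∧
        cc.1.1.2.2.1 * cc.2.1.1 = cc.1.1.1 * cc.2.1.2.2.1)
      (q := fun gg : G × G => Commute gg.1 gg.2)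
      (E.prodCongr E) (fun cc => by
        obtain ⟨⟨⟨A, B, C, D⟩, s, t⟩, ⟨⟨α, β, γ, δ⟩, u, v⟩⟩ := cc
        exact (Stmt14.commute_iff hE hZ h1 h2 h3 h4 hbij A B C D s t α β γ δ u v).symm)
    rw [← Nat.card_congr e]
    exact Stmt14C.card_PP p
  have hburn := card_comm_eq_card_conjClasses_mul_card G
  have hk : Nat.card (ConjClasses G) * p ^ 6 =
      ((p * (p + (p - 1)) + (p - 1) * p ^ 2) * p ^ 2 +
        (p ^ 2 - 1) * ((p * (p + (p - 1)) + (p - 1) * p ^ 2) * p)) * p ^ 4 := by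
    rw [← hcard, ← hburn, hpairs]
  have hp1 : 1 ≤ p := (Fact.out : p.Prime).one_lt.le
  have hp2 : 1 ≤ p ^ 2 := Nat.one_le_pow _ _ (Fact.out : p.Prime).pos
  have hZeq : (Nat.card (ConjClasses G) : ℤ) * (p : ℤ) ^ 6 =
      ((p : ℤ) ^ 4 + 2 * (p : ℤ) ^ 3 - (p : ℤ) ^ 2 - 2 * (p : ℤ) + 1) * (p : ℤ) ^ 6 := by
    have hcast := congrArg (Nat.cast : ℕ → ℤ) hk
    push_cast [Nat.cast_sub hp1, Nat.cast_sub hp2] at hcast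
    linear_combination hcast
  have hpne : ((p : ℤ) ^ 6) ≠ 0 := by
    have : (p : ℤ) ≠ 0 := by
      exact_mod_cast (Fact.out : p.Prime).pos.ne'
    positivity
  exact mul_right_cancel₀ hpne hZeq
end

section
/- For an odd prime p, the central product of two extraspecial groups of order p^3 and exponent p, times a cyclic group of order p (group of order p^6), has exactly p^5 + p^2 - p conjugacy classes. -/
section Aux

variable {G K : Type*} [Group G] [Group K]

lemma isConj_prod_iff {a b : G × K} :
    IsConj a b ↔ IsConj a.1 b.1 ∧ IsConj a.2 b.2 := by
  constructor
  · intro h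
    obtain ⟨c, hc⟩ := isConj_iff.1 h
    exact ⟨isConj_iff.2 ⟨c.1, by rw [← hc]; rfl⟩, isConj_iff.2 ⟨c.2, by rw [← hc]; rfl⟩⟩
  · rintro ⟨h1, h2⟩
    obtain ⟨c, hc⟩ := isConj_iff.1 h1
    obtain ⟨d, hd⟩ := isConj_iff.1 h2
    exact isConj_iff.2 ⟨(c, d), Prod.ext hc hd⟩

/-- Conjugacy classes of a product are the product of conjugacy classes. -/
noncomputable def conjClassesProdEquiv :
    ConjClasses (G × K) ≃ ConjClasses G × ConjClasses K := by
  refine Equiv.ofBijective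
    (Quotient.lift (fun x : G × K => (ConjClasses.mk x.1, ConjClasses.mk x.2))
      (fun a b h => by
        obtain ⟨h1, h2⟩ := isConj_prod_iff.mp h
        exact Prod.ext (ConjClasses.mk_eq_mk_iff_isConj.mpr h1)
          (ConjClasses.mk_eq_mk_iff_isConj.mpr h2))) ⟨?_, ?_⟩
  · intro x y
    induction x using Quotient.inductionOn with
    | h a =>
      induction y using Quotient.inductionOn with
      | h b =>
        intro h
        simp only [Quotient.lift_mk, Prod.mk.injEq] at h
        exact Quotient.sound (isConj_prod_iff.mpr
          ⟨ConjClasses.mk_eq_mk_iff_isConj.mp h.1, ConjClasses.mk_eq_mk_iff_isConj.mp h.2⟩)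
  · rintro ⟨x, y⟩
    obtain ⟨g, rfl⟩ := ConjClasses.mk_surjective x
    obtain ⟨k, rfl⟩ := ConjClasses.mk_surjective y
    exact ⟨ConjClasses.mk (g, k), rfl⟩

lemma card_conjClasses_prod :
    Nat.card (ConjClasses (G × K)) = Nat.card (ConjClasses G) * Nat.card (ConjClasses K) := by
  rw [Nat.card_congr (conjClassesProdEquiv (G := G) (K := K)), Nat.card_prod]

lemma finsum_mem_nat_const {α : Type*} (s : Set α) (hs : s.Finite) (c : ℕ) :
    ∑ᶠ i ∈ s, c = s.ncard * c := by
  rw [← hs.coe_toFinset, finsum_mem_coe_finset, Finset.sum_const, smul_eq_mul,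
    Set.ncard_coe_finset]

end Aux

section Count

open scoped commutatorElement

variable {p : ℕ} [Fact p.Prime] {H : Type*} [Group H]

/-- In a group whose commutator subgroup is its center of prime order `p`, each
noncentral conjugacy class has exactly `p` elements. -/
lemma card_carrier_of_noncenter
    (hcard : Nat.card H = p ^ 5)
    (hextra : commutator H = Subgroup.center H)
    (hcenter : Nat.card (Subgroup.center H) = p)
    {x : ConjClasses H} (hx : x ∈ ConjClasses.noncenter H) :
    Nat.card x.carrier = p := by
  have hp : p.Prime := Fact.out
  have hfin : Finite H := Nat.finite_of_card_ne_zero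
    (by rw [hcard]; exact (pow_pos hp.pos 5).ne')
  obtain ⟨g, rfl⟩ := ConjClasses.mk_surjective x
  -- the carrier is contained in the coset `center * g`
  have hsub : (ConjClasses.mk g).carrier ⊆ (· * g) '' (Subgroup.center H : Set H) := by
    intro h hh
    rw [ConjClasses.mem_carrier_iff_mk_eq, ConjClasses.mk_eq_mk_iff_isConj] at hh
    obtain ⟨c, hc⟩ := isConj_iff.1 hh
    have hh' : h = c⁻¹ * g * c := by rw [← hc]; group
    refine ⟨⁅c⁻¹, g⁆, ?_, by rw [hh']; group⟩
    rw [← hextra]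
    exact Subgroup.commutator_mem_commutator (Subgroup.mem_top c⁻¹) (Subgroup.mem_top g)
  -- hence its cardinality is at most p
  have hle : Nat.card (ConjClasses.mk g).carrier ≤ p := by
    rw [Nat.card_coe_set_eq]
    calc (ConjClasses.mk g).carrier.ncard
        ≤ ((· * g) '' (Subgroup.center H : Set H)).ncard :=
          Set.ncard_le_ncard hsub (Set.toFinite _)
      _ ≤ (Subgroup.center H : Set H).ncard := Set.ncard_image_le (Set.toFinite _)
      _ = p := by rw [← Nat.card_coe_set_eq, SetLike.coe_sort_coe, hcenter]
  -- cardinality is more than 1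
  have hgt : 1 < Nat.card (ConjClasses.mk g).carrier := by
    rw [ConjClasses.mem_noncenter] at hx
    rw [Nat.card_coe_set_eq]
    exact (Set.one_lt_ncard (Set.toFinite _)).mpr
      (by obtain ⟨a, ha, b, hb, hab⟩ := hx; exact ⟨a, ha, b, hb, hab⟩)
  -- cardinality divides p ^ 5
  have hdvd : Nat.card (ConjClasses.mk g).carrier ∣ p ^ 5 := by
    rw [← hcard]
    calc Nat.card (ConjClasses.mk g).carrier
        = Nat.card (MulAction.orbit (ConjAct H) g) := by
          rw [ConjAct.orbit_eq_carrier_conjClasses]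
      _ = Nat.card (ConjAct H ⧸ MulAction.stabilizer (ConjAct H) g) :=
          Nat.card_congr (MulAction.orbitEquivQuotientStabilizer _ g)
      _ ∣ Nat.card (ConjAct H) := Subgroup.card_quotient_dvd_card _
      _ = Nat.card H := Nat.card_congr (ConjAct.toConjAct (G := H)).toEquiv.symm
  obtain ⟨i, hi, he⟩ := (Nat.dvd_prime_pow hp).mp hdvd
  rw [he] at hle hgt ⊢
  have hi1 : i = 1 := by
    have h1 : 1 ≤ i := by
      by_contra hcon
      interval_cases i
      simp at hgt
    have h2 : i ≤ 1 := by
      rw [← pow_le_pow_iff_right₀ hp.one_lt]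
      simpa using hle
    omega
  rw [hi1, pow_one]

lemma card_conjClasses_eq
    (hcard : Nat.card H = p ^ 5)
    (hextra : commutator H = Subgroup.center H)
    (hcenter : Nat.card (Subgroup.center H) = p) :
    Nat.card (ConjClasses H) = p ^ 4 + p - 1 := by
  have hp : p.Prime := Fact.out
  have hfin : Finite H := Nat.finite_of_card_ne_zero
    (by rw [hcard]; exact (pow_pos hp.pos 5).ne')
  -- class equation
  have hclass := Group.nat_card_center_add_sum_card_noncenter_eq_card H
  rw [hcenter, hcard] at hclass
  have hconst : ∑ᶠ x ∈ ConjClasses.noncenter H, Nat.card x.carrier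
      = (ConjClasses.noncenter H).ncard * p := by
    rw [finsum_mem_congr rfl (fun x hx => card_carrier_of_noncenter hcard hextra hcenter hx),
      finsum_mem_nat_const _ (Set.toFinite _)]
  rw [hconst] at hclass
  -- number of central classes is p
  have hcc : (ConjClasses.noncenter H)ᶜ.ncard = p := by
    rw [← Nat.card_coe_set_eq, ← Nat.card_congr ((ConjClasses.mk_bijOn H).equiv _), ]
    rw [Nat.card_congr (Equiv.setCongr rfl), SetLike.coe_sort_coe, hcenter]
  -- total
  have htot : (ConjClasses.noncenter H).ncard + (ConjClasses.noncenter H)ᶜ.ncard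
      = Nat.card (ConjClasses H) := Set.ncard_add_ncard_compl _
  rw [hcc] at htot
  have hn : (ConjClasses.noncenter H).ncard = p ^ 4 - 1 := by
    have hp1 : 1 ≤ p := hp.one_lt.le
    have h5 : p + (ConjClasses.noncenter H).ncard * p = p ^ 5 := hclass
    have : (ConjClasses.noncenter H).ncard * p = p ^ 5 - p := by omega
    have hpow : p ^ 5 - p = (p ^ 4 - 1) * p := by
      have : p ^ 5 = p ^ 4 * p := by ring
      rw [this, Nat.sub_mul, one_mul]
    rw [hpow] at this
    exact Nat.eq_of_mul_eq_mul_right hp.pos this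
  rw [hn] at htot
  have hp4 : 1 ≤ p ^ 4 := Nat.one_le_pow _ _ hp.pos
  omega

end Count

/-- The direct product of the extraspecial group of order p^5 and exponent p with a
cyclic group of order p has exactly p^5 + p^2 - p conjugacy classes. -/
theorem stmt_17 (p : ℕ) [Fact p.Prime] (hp : Odd p)
    (H : Type*) [Group H]
    (hcard : Nat.card H = p ^ 5)
    (hexp : Monoid.exponent H = p)
    (hextra : commutator H = Subgroup.center H)
    (hcenter : Nat.card (Subgroup.center H) = p) :
    (Nat.card (ConjClasses (H × Multiplicative (ZMod p))) : ℤ) = p ^ 5 + p ^ 2 - p := by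
  have hprime : p.Prime := Fact.out
  rw [card_conjClasses_prod, card_conjClasses_eq hcard hextra hcenter]
  have hK : Nat.card (ConjClasses (Multiplicative (ZMod p))) = p := by
    rw [← Nat.card_congr (ConjClasses.mkEquiv (α := Multiplicative (ZMod p))),
      Nat.card_congr Multiplicative.toAdd]
    exact Nat.card_zmod p
  rw [hK]
  have h1 : 1 ≤ p ^ 4 := Nat.one_le_pow _ _ hprime.pos
  have h2 : 1 ≤ p ^ 4 + p := by omega
  push_cast [Nat.cast_sub h2]
  ring
end

section
/- For an odd prime p, the number of pairs of vectors (v,w) in GF(p)^4 × GF(p)^4 such that v ≠ 0 and w is not in the 2-dimensional span of v and σ(v), where σ(α,β,γ,δ) = (ωδ, -ωγ, -β, α) for a fixed nonsquare ω, equals (p^4-1)(p^4-p^2); in particular v and σ(v) are always linearly independent for v ≠ 0. -/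
/-- For σ(α,β,γ,δ) = (ωδ,-ωγ,-β,α) with ω a nonsquare mod p: for every v ≠ 0 the
vectors v and σ(v) are linearly independent, and the number of pairs (v,w) with
v ≠ 0 and w outside the span of v and σ(v) is (p^4-1)(p^4-p^2). -/
theorem stmt_19 (p : ℕ) [Fact p.Prime] (hp : Odd p)
    (ω : ZMod p) (hω : ¬ IsSquare ω)
    (σ : (Fin 4 → ZMod p) → (Fin 4 → ZMod p))
    (hσ : ∀ v, σ v = ![ω * v 3, -(ω * v 2), -(v 1), v 0]) :
    (∀ v : Fin 4 → ZMod p, v ≠ 0 → LinearIndependent (ZMod p) ![v, σ v]) ∧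
    (Nat.card {vw : (Fin 4 → ZMod p) × (Fin 4 → ZMod p) //
        vw.1 ≠ 0 ∧ vw.2 ∉ Submodule.span (ZMod p) {vw.1, σ vw.1}} : ℤ) =
      (p ^ 4 - 1) * (p ^ 4 - p ^ 2) := by
  classical
  have key : ∀ v : Fin 4 → ZMod p, v ≠ 0 → LinearIndependent (ZMod p) ![v, σ v] := by
    intro v hv
    rw [LinearIndependent.pair_iff]
    intro s t hst
    rw [hσ] at hst
    have h0 := congrFun hst 0
    have h1 := congrFun hst 1
    have h2 := congrFun hst 2
    have h3 := congrFun hst 3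
    simp only [Pi.add_apply, Pi.smul_apply, Matrix.cons_val_zero, Matrix.cons_val_one,
      Matrix.head_cons, Matrix.cons_val_two, Matrix.tail_cons, Matrix.cons_val_three,
      smul_eq_mul, Pi.zero_apply] at h0 h1 h2 h3
    have k0 : (s ^ 2 - ω * t ^ 2) * v 0 = 0 := by
      linear_combination s * h0 - (t * ω) * h3
    have k1 : (s ^ 2 - ω * t ^ 2) * v 1 = 0 := by
      linear_combination s * h1 + (t * ω) * h2
    have k2 : (s ^ 2 - ω * t ^ 2) * v 2 = 0 := by
      linear_combination s * h2 + t * h1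
    have k3 : (s ^ 2 - ω * t ^ 2) * v 3 = 0 := by
      linear_combination s * h3 - t * h0
    have hk : ∀ i, (s ^ 2 - ω * t ^ 2) * v i = 0 := by
      intro i
      fin_cases i
      · exact k0
      · exact k1
      · exact k2
      · exact k3
    obtain ⟨i, hi⟩ := Function.ne_iff.mp hv
    have hk0 : s ^ 2 - ω * t ^ 2 = 0 := by
      rcases mul_eq_zero.mp (hk i) with h | h
      · exact h
      · exact absurd h hi
    have ht : t = 0 := by
      by_contra ht
      apply hω
      refine ⟨s / t, ?_⟩
      field_simp
      linear_combination -hk0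
    have hs : s = 0 := by
      have : s ^ 2 = 0 := by rw [ht] at hk0; linear_combination hk0
      exact pow_eq_zero_iff (two_ne_zero) |>.mp this
    exact ⟨hs, ht⟩
  refine ⟨key, ?_⟩
  have hcardZ : Fintype.card (ZMod p) = p := ZMod.card p
  have hcardA : Fintype.card (Fin 4 → ZMod p) = p ^ 4 := by
    rw [Fintype.card_fun, hcardZ, Fintype.card_fin]
  -- card of the span for v ≠ 0
  have hspan : ∀ v : Fin 4 → ZMod p, v ≠ 0 →
      Nat.card (Submodule.span (ZMod p) {v, σ v}) = p ^ 2 := by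
    intro v hv
    have hrange : Set.range ![v, σ v] = {v, σ v} := Matrix.range_cons_cons_empty v (σ v) _
    have b : Module.Basis (Fin 2) (ZMod p) (Submodule.span (ZMod p) (Set.range ![v, σ v])) :=
      Module.Basis.span (key v hv)
    rw [hrange] at b
    have : Fintype.card (Submodule.span (ZMod p) {v, σ v}) = p ^ 2 := by
      rw [Module.card_fintype b, hcardZ, Fintype.card_fin]
    rw [Nat.card_eq_fintype_card, this]
  -- card of the complement of the span
  have hfiber : ∀ v : Fin 4 → ZMod p, v ≠ 0 →
      Nat.card {w : Fin 4 → ZMod p // w ∉ Submodule.span (ZMod p) {v, σ v}} =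
        p ^ 4 - p ^ 2 := by
    intro v hv
    have := Fintype.card_subtype_compl (fun w : Fin 4 → ZMod p =>
      w ∈ Submodule.span (ZMod p) {v, σ v})
    rw [Nat.card_eq_fintype_card, this, hcardA]
    congr 1
    rw [← hspan v hv, Nat.card_eq_fintype_card]
  -- the equivalence with a sigma type
  have e : {vw : (Fin 4 → ZMod p) × (Fin 4 → ZMod p) //
        vw.1 ≠ 0 ∧ vw.2 ∉ Submodule.span (ZMod p) {vw.1, σ vw.1}} ≃
      Σ v : {v : Fin 4 → ZMod p // v ≠ 0},
        {w : Fin 4 → ZMod p // w ∉ Submodule.span (ZMod p) {v.1, σ v.1}} :=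
    { toFun := fun x => ⟨⟨x.1.1, x.2.1⟩, ⟨x.1.2, x.2.2⟩⟩
      invFun := fun x => ⟨(x.1.1, x.2.1), x.1.2, x.2.2⟩
      left_inv := fun x => rfl
      right_inv := fun x => rfl }
  have hnonzero : Nat.card {v : Fin 4 → ZMod p // v ≠ 0} = p ^ 4 - 1 := by
    have := Fintype.card_subtype_compl (fun v : Fin 4 → ZMod p => v = 0)
    rw [Nat.card_eq_fintype_card]
    have h1 : Fintype.card {v : Fin 4 → ZMod p // v = 0} = 1 := Fintype.card_subtype_eq 0
    rw [this, hcardA, h1]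
  have hcount : Nat.card {vw : (Fin 4 → ZMod p) × (Fin 4 → ZMod p) //
        vw.1 ≠ 0 ∧ vw.2 ∉ Submodule.span (ZMod p) {vw.1, σ vw.1}} =
      (p ^ 4 - 1) * (p ^ 4 - p ^ 2) := by
    rw [Nat.card_congr e]
    rw [Nat.card_eq_fintype_card, Fintype.card_sigma]
    have : ∀ v : {v : Fin 4 → ZMod p // v ≠ 0},
        Fintype.card {w : Fin 4 → ZMod p // w ∉ Submodule.span (ZMod p) {v.1, σ v.1}} =
          p ^ 4 - p ^ 2 := by
      intro v
      rw [← Nat.card_eq_fintype_card, hfiber v.1 v.2]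
    rw [Finset.sum_congr rfl (fun v _ => this v), Finset.sum_const, smul_eq_mul,
      Finset.card_univ, ← Nat.card_eq_fintype_card, hnonzero]
  rw [hcount]
  have hp2 : 2 ≤ p := (Fact.out : p.Prime).two_le
  have h1 : 1 ≤ p ^ 4 := Nat.one_le_pow _ _ (by omega)
  have h2 : p ^ 2 ≤ p ^ 4 := Nat.pow_le_pow_right (by omega) (by omega)
  push_cast [Nat.cast_sub h1, Nat.cast_sub h2]
  ring
end
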